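/- arXiv:2212.12167 — 9 statements merged into one kernel-verified Lean document; each statement's English description precedes it below -/
import Mathlib

section
/- Residual-regression identity: for every bounded measurable g : 𝒱 → ℝ, under the treatment model and IV independence, E[(A − E[A|B])·g(V) | B] = Cov(α_z(V), g(V))·B + Cov(α_u(V), g(V)) almost surely. -/
open MeasureTheory ProbabilityTheory

/-- Covariance of two real random variables: `Cov(X,Z) = E[XZ] - E[X]·E[Z]`. -/
noncomputable def covE {Ω : Type*} [MeasurableSpace Ω] (μ : Measure Ω) (X Z : Ω → ℝ) : ℝ :=
  (∫ ω, X ω * Z ω ∂μ) - (∫ ω, X ω ∂μ) * (∫ ω, Z ω ∂μ)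

/-- Bounded measurable functions are integrable on a probability space. -/
lemma integrable_of_bdd {Ω : Type*} {mΩ : MeasurableSpace Ω} {μ : Measure Ω} [IsProbabilityMeasure μ]
    {f : Ω → ℝ} (hf : Measurable f) {C : ℝ} (h : ∀ ω, |f ω| ≤ C) : Integrable f μ :=
  (integrable_const C).mono' hf.aestronglyMeasurable
    (Filter.Eventually.of_forall fun ω => by simpa [Real.norm_eq_abs] using h ω)

/-- Residual-regression identity:
`E[(A − E[A|B])·g(V) | B] = Cov(α_z(V), g(V))·B + Cov(α_u(V), g(V))` almost surely. -/
theorem residual_regression_identity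
    {Ω 𝒱 : Type*} [MeasurableSpace Ω] [MeasurableSpace 𝒱]
    (μ : Measure Ω) [IsProbabilityMeasure μ]
    (V : Ω → 𝒱) (A B : Ω → ℝ)
    (hV : Measurable V) (hA : Measurable A) (hB : Measurable B)
    (hA01 : ∀ ω, A ω = 0 ∨ A ω = 1) (hB01 : ∀ ω, B ω = 0 ∨ B ω = 1)
    (αz αu : 𝒱 → ℝ) (hαzm : Measurable αz) (hαum : Measurable αu)
    (hαzb : ∃ C, ∀ x, |αz x| ≤ C) (hαub : ∃ C, ∀ x, |αu x| ≤ C)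
    (htreat : μ[A | MeasurableSpace.comap (fun ω => (B ω, V ω)) inferInstance]
        =ᵐ[μ] fun ω => αz (V ω) * B ω + αu (V ω))
    (hindep : IndepFun B V μ)
    (g : 𝒱 → ℝ) (hgm : Measurable g) (hgb : ∃ C, ∀ x, |g x| ≤ C) :
    μ[(fun ω => (A ω - (μ[A | MeasurableSpace.comap B inferInstance]) ω) * g (V ω))
        | MeasurableSpace.comap B inferInstance]
      =ᵐ[μ] fun ω =>
        covE μ (fun x => αz (V x)) (fun x => g (V x)) * B ω
          + covE μ (fun x => αu (V x)) (fun x => g (V x)) := by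
  obtain ⟨Cz, hCz⟩ := hαzb
  obtain ⟨Cu, hCu⟩ := hαub
  obtain ⟨Cg, hCg⟩ := hgb
  have hmB : MeasurableSpace.comap B inferInstance ≤ ‹MeasurableSpace Ω› := hB.comap_le
  have hmV : MeasurableSpace.comap V inferInstance ≤ ‹MeasurableSpace Ω› := hV.comap_le
  have hmBV : MeasurableSpace.comap (fun ω => (B ω, V ω)) inferInstance
      ≤ ‹MeasurableSpace Ω› := (hB.prodMk hV).comap_le
  set mB : MeasurableSpace Ω := MeasurableSpace.comap B inferInstance with hmB_def
  set mBV : MeasurableSpace Ω :=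
    MeasurableSpace.comap (fun ω => (B ω, V ω)) inferInstance with hmBV_def
  set mV : MeasurableSpace Ω := MeasurableSpace.comap V inferInstance with hmV_def
  have hBV_meas : Measurable[mBV] fun ω => (B ω, V ω) := Measurable.of_comap_le le_rfl
  have hmB_le_BV : mB ≤ mBV := by
    rintro s ⟨t, ht, rfl⟩
    refine ⟨t ×ˢ Set.univ, ht.prod MeasurableSet.univ, ?_⟩
    ext ω; simp
  -- measurability of pieces
  have hB_mB : Measurable[mB] B := Measurable.of_comap_le le_rfl
  have hV_mV : Measurable[mV] V := Measurable.of_comap_le le_rfl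
  have hV_mBV : Measurable[mBV] V := measurable_snd.comp hBV_meas
  have hgV_mBV : StronglyMeasurable[mBV] fun ω => g (V ω) :=
    (hgm.comp hV_mBV).stronglyMeasurable
  -- independence
  have hIndepVB : ProbabilityTheory.Indep mV mB μ :=
    (ProbabilityTheory.IndepFun_iff_Indep _ _ _).1 hindep.symm
  -- bounds
  have hAb : ∀ ω, |A ω| ≤ 1 := fun ω => by rcases hA01 ω with h | h <;> simp [h]
  have hBb : ∀ ω, |B ω| ≤ 1 := fun ω => by rcases hB01 ω with h | h <;> simp [h]
  have hmulbound : ∀ (f : Ω → ℝ) (C : ℝ), (∀ ω, |f ω| ≤ C) →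
      ∀ ω, |B ω * f ω| ≤ C := by
    intro f C hC ω
    rw [abs_mul]
    calc |B ω| * |f ω| ≤ 1 * C :=
          mul_le_mul (hBb ω) (hC ω) (abs_nonneg _) zero_le_one
      _ = C := one_mul C
  -- integrability
  have hA_int : Integrable A μ := integrable_of_bdd hA hAb
  have hgV_int : Integrable (fun ω => g (V ω)) μ :=
    integrable_of_bdd (hgm.comp hV) fun ω => hCg (V ω)
  have hαzV_int : Integrable (fun ω => αz (V ω)) μ :=
    integrable_of_bdd (hαzm.comp hV) fun ω => hCz (V ω)
  have hαuV_int : Integrable (fun ω => αu (V ω)) μ :=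
    integrable_of_bdd (hαum.comp hV) fun ω => hCu (V ω)
  have hBz_int : Integrable (fun ω => B ω * αz (V ω)) μ :=
    integrable_of_bdd (hB.mul (hαzm.comp hV))
      (hmulbound _ _ fun ω => hCz (V ω))
  have hzg_bound : ∀ ω, |αz (V ω) * g (V ω)| ≤ |Cz| * |Cg| := by
    intro ω; rw [abs_mul]
    exact mul_le_mul ((hCz _).trans (le_abs_self _)) ((hCg _).trans (le_abs_self _))
      (abs_nonneg _) (abs_nonneg _)
  have hug_bound : ∀ ω, |αu (V ω) * g (V ω)| ≤ |Cu| * |Cg| := by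
    intro ω; rw [abs_mul]
    exact mul_le_mul ((hCu _).trans (le_abs_self _)) ((hCg _).trans (le_abs_self _))
      (abs_nonneg _) (abs_nonneg _)
  have hzgV_int : Integrable (fun ω => αz (V ω) * g (V ω)) μ :=
    integrable_of_bdd ((hαzm.comp hV).mul (hgm.comp hV)) hzg_bound
  have hugV_int : Integrable (fun ω => αu (V ω) * g (V ω)) μ :=
    integrable_of_bdd ((hαum.comp hV).mul (hgm.comp hV)) hug_bound
  have hBzg_int : Integrable (fun ω => B ω * (αz (V ω) * g (V ω))) μ :=
    integrable_of_bdd (hB.mul ((hαzm.comp hV).mul (hgm.comp hV)))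
      (hmulbound _ _ hzg_bound)
  have hgA_int : Integrable (fun ω => g (V ω) * A ω) μ :=
    integrable_of_bdd ((hgm.comp hV).mul hA)
      (fun ω => by
        rw [abs_mul]
        exact mul_le_mul ((hCg _).trans (le_abs_self _)) (hAb ω) (abs_nonneg _) (abs_nonneg _))
  have hcond_int : Integrable (fun ω => (μ[A|mB]) ω * g (V ω)) μ := by
    have h1 : Integrable (fun ω => g (V ω) * (μ[A|mB]) ω) μ :=
      Integrable.bdd_mul integrable_condExp (hgm.comp hV).aestronglyMeasurable
        (Filter.Eventually.of_forall fun x => by simpa [Real.norm_eq_abs] using hCg (V x))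
    exact h1.congr (Filter.Eventually.of_forall fun ω => mul_comm _ _)
  -- constants
  set Ez : ℝ := ∫ ω, αz (V ω) ∂μ with hEz
  set Eu : ℝ := ∫ ω, αu (V ω) ∂μ with hEu
  set Eg : ℝ := ∫ ω, g (V ω) ∂μ with hEg
  set Ezg : ℝ := ∫ ω, αz (V ω) * g (V ω) ∂μ with hEzg
  set Eug : ℝ := ∫ ω, αu (V ω) * g (V ω) ∂μ with hEug
  -- conditional expectation of σ(V)-measurable functions given σ(B) is constant
  have key : ∀ (h : 𝒱 → ℝ), Measurable h →
      μ[(fun ω => h (V ω))|mB] =ᵐ[μ] fun _ => ∫ ω, h (V ω) ∂μ := fun h hm =>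
    condExp_indep_eq hmV hmB ((hm.comp hV_mV).stronglyMeasurable) hIndepVB
  -- pull-out of B
  have pull : ∀ (f : Ω → ℝ), Integrable f μ → Integrable (fun ω => B ω * f ω) μ →
      μ[(fun ω => B ω * f ω)|mB] =ᵐ[μ] fun ω => B ω * (μ[f|mB]) ω := fun f hf hBf =>
    condExp_mul_of_stronglyMeasurable_left hB_mB.stronglyMeasurable hBf hf
  -- Step C : E[A | B]
  have hEAB : μ[A|mB] =ᵐ[μ] fun ω => B ω * Ez + Eu := by
    have h1 : μ[A|mB] =ᵐ[μ] μ[μ[A|mBV]|mB] := (condExp_condExp_of_le hmB_le_BV hmBV).symm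
    have h2 : μ[μ[A|mBV]|mB] =ᵐ[μ] μ[(fun ω => αz (V ω) * B ω + αu (V ω))|mB] :=
      condExp_congr_ae htreat
    have hrw : (fun ω => αz (V ω) * B ω + αu (V ω))
        = (fun ω => B ω * αz (V ω)) + fun ω => αu (V ω) := by
      funext ω; simp [mul_comm]
    have h3 : μ[(fun ω => αz (V ω) * B ω + αu (V ω))|mB]
        =ᵐ[μ] μ[(fun ω => B ω * αz (V ω))|mB] + μ[(fun ω => αu (V ω))|mB] := by
      rw [hrw]; exact condExp_add hBz_int hαuV_int _
    have h4 : μ[(fun ω => B ω * αz (V ω))|mB] =ᵐ[μ] fun ω => B ω * Ez := by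
      filter_upwards [pull _ hαzV_int hBz_int, key αz hαzm] with ω hp hk
      rw [hp, hk]
    filter_upwards [h1, h2, h3, h4, key αu hαum] with ω e1 e2 e3 e4 e5
    rw [e1, e2, e3, Pi.add_apply, e4, e5]
  -- Step D : E[A·g(V) | B]
  have hAg : μ[(fun ω => A ω * g (V ω))|mB] =ᵐ[μ] fun ω => B ω * Ezg + Eug := by
    have hinner : μ[(fun ω => g (V ω) * A ω)|mBV]
        =ᵐ[μ] fun ω => g (V ω) * (μ[A|mBV]) ω :=
      condExp_mul_of_stronglyMeasurable_left hgV_mBV hgA_int hA_int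
    have hinner2 : μ[(fun ω => g (V ω) * A ω)|mBV]
        =ᵐ[μ] fun ω => B ω * (αz (V ω) * g (V ω)) + αu (V ω) * g (V ω) := by
      filter_upwards [hinner, htreat] with ω e1 e2
      rw [e1, e2]; ring
    have h1 : μ[(fun ω => A ω * g (V ω))|mB]
        =ᵐ[μ] μ[μ[(fun ω => g (V ω) * A ω)|mBV]|mB] := by
      have : (fun ω => A ω * g (V ω)) = fun ω => g (V ω) * A ω := by
        funext ω; ring
      rw [this]
      exact (condExp_condExp_of_le hmB_le_BV hmBV).symm
    have h2 : μ[μ[(fun ω => g (V ω) * A ω)|mBV]|mB]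
        =ᵐ[μ] μ[(fun ω => B ω * (αz (V ω) * g (V ω)) + αu (V ω) * g (V ω))|mB] :=
      condExp_congr_ae hinner2
    have hrw : (fun ω => B ω * (αz (V ω) * g (V ω)) + αu (V ω) * g (V ω))
        = (fun ω => B ω * (αz (V ω) * g (V ω))) + fun ω => αu (V ω) * g (V ω) := rfl
    have h3 : μ[(fun ω => B ω * (αz (V ω) * g (V ω)) + αu (V ω) * g (V ω))|mB]
        =ᵐ[μ] μ[(fun ω => B ω * (αz (V ω) * g (V ω)))|mB]
          + μ[(fun ω => αu (V ω) * g (V ω))|mB] := by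
      rw [hrw]; exact condExp_add hBzg_int hugV_int _
    have h4 : μ[(fun ω => B ω * (αz (V ω) * g (V ω)))|mB] =ᵐ[μ] fun ω => B ω * Ezg := by
      filter_upwards [pull _ hzgV_int hBzg_int,
        key (fun x => αz x * g x) (hαzm.mul hgm)] with ω hp hk
      rw [hp, hk]
    filter_upwards [h1, h2, h3, h4, key (fun x => αu x * g x) (hαum.mul hgm)]
      with ω e1 e2 e3 e4 e5
    rw [e1, e2, e3, Pi.add_apply, e4, e5]
  -- Step E : E[E[A|B]·g(V) | B]
  have hpull2 : μ[(fun ω => (μ[A|mB]) ω * g (V ω))|mB]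
      =ᵐ[μ] fun ω => (μ[A|mB]) ω * Eg := by
    have h1 : μ[(fun ω => (μ[A|mB]) ω * g (V ω))|mB]
        =ᵐ[μ] fun ω => (μ[A|mB]) ω * (μ[(fun ω => g (V ω))|mB]) ω :=
      condExp_mul_of_stronglyMeasurable_left stronglyMeasurable_condExp hcond_int hgV_int
    filter_upwards [h1, key g hgm] with ω e1 e2
    rw [e1, e2]
  -- final assembly
  have hsplit : (fun ω => (A ω - (μ[A|mB]) ω) * g (V ω))
      = (fun ω => A ω * g (V ω)) - fun ω => (μ[A|mB]) ω * g (V ω) := by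
    funext ω; simp [sub_mul]
  have hAgV_int : Integrable (fun ω => A ω * g (V ω)) μ :=
    hgA_int.congr (Filter.Eventually.of_forall fun ω => mul_comm _ _)
  have hmain : μ[(fun ω => (A ω - (μ[A|mB]) ω) * g (V ω))|mB]
      =ᵐ[μ] μ[(fun ω => A ω * g (V ω))|mB] - μ[(fun ω => (μ[A|mB]) ω * g (V ω))|mB] := by
    rw [hsplit]; exact condExp_sub hAgV_int hcond_int _
  filter_upwards [hmain, hAg, hpull2, hEAB] with ω e1 e2 e3 e4
  rw [e1, Pi.sub_apply, e2, e3, e4]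
  simp only [covE, ← hEz, ← hEu, ← hEg, ← hEzg, ← hEug]
  ring
end

section
/- Unmeasured-effect residual identity: under the treatment model and IV independence, E[(B − E[B])·(A − E[A|B])·ϑ_u(V)] = Var(B)·Cov(α_z(V), ϑ_u(V)). In particular this expectation vanishes when Cov(α_z(V), ϑ_u(V)) = 0. -/
open MeasureTheory ProbabilityTheory

lemma aux_int {Ω : Type*} [MeasurableSpace Ω] {μ : Measure Ω} [IsProbabilityMeasure μ]
    {f : Ω → ℝ} (hf : Measurable f) {C : ℝ} (h : ∀ ω, |f ω| ≤ C) :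
    Integrable f μ :=
  ⟨hf.aestronglyMeasurable, HasFiniteIntegral.of_bounded (C := C)
    (Filter.Eventually.of_forall fun ω => by simpa [Real.norm_eq_abs] using h ω)⟩

lemma aux_absmul {a b c d : ℝ} (h1 : |a| ≤ c) (h2 : |b| ≤ d) : |a * b| ≤ c * d := by
  rw [abs_mul]
  exact mul_le_mul h1 h2 (abs_nonneg _) ((abs_nonneg a).trans h1)

lemma aux_pullout {Ω : Type*} {m0 : MeasurableSpace Ω} (μ : Measure Ω) [IsProbabilityMeasure μ]
    {m : MeasurableSpace Ω} (hm : m ≤ m0)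
    {g X : Ω → ℝ} (hg : StronglyMeasurable[m] g)
    (hgX : Integrable (fun ω => g ω * X ω) μ) (hX : Integrable X μ) :
    ∫ ω, g ω * X ω ∂μ = ∫ ω, g ω * (μ[X|m]) ω ∂μ := by
  have h1 : μ[g * X|m] =ᵐ[μ] g * μ[X|m] :=
    condExp_mul_of_stronglyMeasurable_left hg hgX hX
  calc ∫ ω, g ω * X ω ∂μ = ∫ ω, (μ[g * X|m]) ω ∂μ :=
        (integral_condExp hm (f := g * X)).symm
    _ = ∫ ω, g ω * (μ[X|m]) ω ∂μ := integral_congr_ae h1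

/-- Unmeasured-effect residual identity:
`E[(B − E[B])·(A − E[A|B])·ϑ_u(V)] = Var(B)·Cov(α_z(V), ϑ_u(V))`; in particular the
expectation vanishes when `Cov(α_z(V), ϑ_u(V)) = 0`. -/
theorem unmeasured_effect_residual_identity
    {Ω 𝒱 : Type*} [MeasurableSpace Ω] [MeasurableSpace 𝒱]
    (μ : Measure Ω) [IsProbabilityMeasure μ]
    (V : Ω → 𝒱) (A B : Ω → ℝ)
    (hV : Measurable V) (hA : Measurable A) (hB : Measurable B)
    (hA01 : ∀ ω, A ω = 0 ∨ A ω = 1) (hB01 : ∀ ω, B ω = 0 ∨ B ω = 1)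
    (αz αu : 𝒱 → ℝ) (hαzm : Measurable αz) (hαum : Measurable αu)
    (hαzb : ∃ C, ∀ x, |αz x| ≤ C) (hαub : ∃ C, ∀ x, |αu x| ≤ C)
    (htreat : μ[A | MeasurableSpace.comap (fun ω => (B ω, V ω)) inferInstance]
        =ᵐ[μ] fun ω => αz (V ω) * B ω + αu (V ω))
    (hindep : IndepFun B V μ)
    (ϑu : 𝒱 → ℝ) (hϑum : Measurable ϑu) (hϑub : ∃ C, ∀ x, |ϑu x| ≤ C) :
    (∫ ω, (B ω - ∫ x, B x ∂μ)
        * (A ω - (μ[A | MeasurableSpace.comap B inferInstance]) ω) * ϑu (V ω) ∂μ)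
      = covE μ B B * covE μ (fun x => αz (V x)) (fun x => ϑu (V x))
    ∧ (covE μ (fun x => αz (V x)) (fun x => ϑu (V x)) = 0 →
        (∫ ω, (B ω - ∫ x, B x ∂μ)
          * (A ω - (μ[A | MeasurableSpace.comap B inferInstance]) ω) * ϑu (V ω) ∂μ) = 0) := by
  obtain ⟨Cz, hCz⟩ := hαzb
  obtain ⟨Cu, hCu⟩ := hαub
  obtain ⟨Cθ, hCθ⟩ := hϑub
  set mB := ∫ x, B x ∂μ with hmBdef
  have hmb := hB.comap_le
  have hmbv := (hB.prodMk hV).comap_le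
  -- basic bounds
  have hBb : ∀ ω, |B ω| ≤ 1 := fun ω => by rcases hB01 ω with h | h <;> simp [h]
  have hAb : ∀ ω, |A ω| ≤ 1 := fun ω => by rcases hA01 ω with h | h <;> simp [h]
  have hBmb : ∀ ω, |B ω - mB| ≤ 1 + |mB| := fun ω =>
    (abs_sub (B ω) mB).trans (by have := hBb ω; linarith)
  -- basic measurability
  have hpair : Measurable (fun ω => (B ω, V ω)) := hB.prodMk hV
  have hBmbv : Measurable[(MeasurableSpace.comap (fun ω => (B ω, V ω)) inferInstance)] B :=
    measurable_fst.comp (comap_measurable _)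
  have hVmbv : Measurable[(MeasurableSpace.comap (fun ω => (B ω, V ω)) inferInstance)] V :=
    measurable_snd.comp (comap_measurable _)
  have hθV : Measurable (fun ω => ϑu (V ω)) := hϑum.comp hV
  -- integrable basics
  have intA : Integrable A μ := aux_int hA hAb
  have intB : Integrable B μ := aux_int hB hBb
  have intθ : Integrable (fun ω => ϑu (V ω)) μ := aux_int hθV fun ω => hCθ (V ω)
  -- step A : conditioning on σ(B,V)
  have stepA : ∀ g : Ω → ℝ, StronglyMeasurable[(MeasurableSpace.comap (fun ω => (B ω, V ω)) inferInstance)] g → (∃ C, ∀ ω, |g ω| ≤ C) →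
      ∫ ω, g ω * A ω ∂μ = ∫ ω, g ω * (αz (V ω) * B ω + αu (V ω)) ∂μ := by
    rintro g hgm ⟨C, hC⟩
    have hgmeas : Measurable g := (hgm.measurable).mono hmbv le_rfl
    have hInt : Integrable (fun ω => g ω * A ω) μ :=
      aux_int (hgmeas.mul hA) (C := C * 1) fun ω => aux_absmul (hC ω) (hAb ω)
    rw [aux_pullout μ hmbv hgm hInt intA]
    refine integral_congr_ae ?_
    filter_upwards [htreat] with ω hω
    rw [hω]
  -- independence product rule
  have hprod : ∀ (f : ℝ → ℝ) (g : 𝒱 → ℝ), Measurable f → Measurable g →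
      Integrable (fun ω => f (B ω)) μ → Integrable (fun ω => g (V ω)) μ →
      ∫ ω, f (B ω) * g (V ω) ∂μ = (∫ ω, f (B ω) ∂μ) * (∫ ω, g (V ω) ∂μ) := by
    intro f g hf hg hif hig
    exact (hindep.comp hf hg).integral_fun_mul_eq_mul_integral hif.aestronglyMeasurable hig.aestronglyMeasurable
  have hzero : ∫ ω, (B ω - mB) ∂μ = 0 := by
    rw [integral_sub intB (integrable_const _), integral_const, probReal_univ]
    simp [hmBdef]
  set cθ := ∫ ω, ϑu (V ω) ∂μ with hcθdef
  set cz := ∫ ω, αz (V ω) ∂μ with hczdef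
  set czθ := ∫ ω, αz (V ω) * ϑu (V ω) ∂μ with hczθdef
  set Vb := ∫ ω, (B ω - mB) * B ω ∂μ with hVbdef
  -- independence computations
  have intBB : Integrable (fun ω => (B ω - mB) * B ω) μ :=
    aux_int ((hB.sub measurable_const).mul hB) (C := (1 + |mB|) * 1)
      fun ω => aux_absmul (hBmb ω) (hBb ω)
  have intzθ : Integrable (fun ω => αz (V ω) * ϑu (V ω)) μ :=
    aux_int ((hαzm.comp hV).mul hθV) (C := Cz * Cθ)
      fun ω => aux_absmul (hCz (V ω)) (hCθ (V ω))
  have intuθ : Integrable (fun ω => αu (V ω) * ϑu (V ω)) μ :=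
    aux_int ((hαum.comp hV).mul hθV) (C := Cu * Cθ)
      fun ω => aux_absmul (hCu (V ω)) (hCθ (V ω))
  have intzV : Integrable (fun ω => αz (V ω)) μ := aux_int (hαzm.comp hV) fun ω => hCz (V ω)
  have intuV : Integrable (fun ω => αu (V ω)) μ := aux_int (hαum.comp hV) fun ω => hCu (V ω)
  have intBmB : Integrable (fun ω => B ω - mB) μ :=
    aux_int (hB.sub measurable_const) hBmb
  have h1 : ∫ ω, ((B ω - mB) * B ω) * (αz (V ω) * ϑu (V ω)) ∂μ = Vb * czθ :=
    hprod (fun x => (x - mB) * x) (fun v => αz v * ϑu v)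
      ((measurable_id.sub measurable_const).mul measurable_id) (hαzm.mul hϑum) intBB intzθ
  have h2 : ∫ ω, (B ω - mB) * (αu (V ω) * ϑu (V ω)) ∂μ = 0 := by
    rw [hprod (fun x => x - mB) (fun v => αu v * ϑu v)
      (measurable_id.sub measurable_const) (hαum.mul hϑum) intBmB intuθ, hzero, zero_mul]
  have h3 : ∫ ω, ((B ω - mB) * B ω) * αz (V ω) ∂μ = Vb * cz :=
    hprod (fun x => (x - mB) * x) αz
      ((measurable_id.sub measurable_const).mul measurable_id) hαzm intBB intzV
  have h4 : ∫ ω, (B ω - mB) * αu (V ω) ∂μ = 0 := by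
    rw [hprod (fun x => x - mB) αu
      (measurable_id.sub measurable_const) hαum intBmB intuV, hzero, zero_mul]
  -- Term 1
  have hg1m : StronglyMeasurable[(MeasurableSpace.comap (fun ω => (B ω, V ω)) inferInstance)] (fun ω => (B ω - mB) * ϑu (V ω)) :=
    ((hBmbv.sub measurable_const).mul (hϑum.comp hVmbv)).stronglyMeasurable
  have intf1 : Integrable (fun ω => ((B ω - mB) * B ω) * (αz (V ω) * ϑu (V ω))) μ :=
    aux_int (((hB.sub measurable_const).mul hB).mul ((hαzm.comp hV).mul hθV))
      (C := ((1 + |mB|) * 1) * (Cz * Cθ))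
      fun ω => aux_absmul (aux_absmul (hBmb ω) (hBb ω))
        (aux_absmul (hCz (V ω)) (hCθ (V ω)))
  have intf2 : Integrable (fun ω => (B ω - mB) * (αu (V ω) * ϑu (V ω))) μ :=
    aux_int ((hB.sub measurable_const).mul ((hαum.comp hV).mul hθV))
      (C := (1 + |mB|) * (Cu * Cθ))
      fun ω => aux_absmul (hBmb ω) (aux_absmul (hCu (V ω)) (hCθ (V ω)))
  have T1 : ∫ ω, ((B ω - mB) * ϑu (V ω)) * A ω ∂μ = Vb * czθ := by
    rw [stepA _ hg1m ⟨(1 + |mB|) * Cθ, fun ω => aux_absmul (hBmb ω) (hCθ (V ω))⟩]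
    calc ∫ ω, ((B ω - mB) * ϑu (V ω)) * (αz (V ω) * B ω + αu (V ω)) ∂μ
        = ∫ ω, (((B ω - mB) * B ω) * (αz (V ω) * ϑu (V ω))
            + (B ω - mB) * (αu (V ω) * ϑu (V ω))) ∂μ :=
          integral_congr_ae (Filter.Eventually.of_forall fun ω => by ring)
      _ = Vb * czθ + 0 := by rw [integral_add intf1 intf2, h1, h2]
      _ = Vb * czθ := by ring
  -- ∫ (B - mB) * A
  have hg2m : StronglyMeasurable[(MeasurableSpace.comap (fun ω => (B ω, V ω)) inferInstance)] (fun ω => B ω - mB) :=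
    (hBmbv.sub measurable_const).stronglyMeasurable
  have intf3 : Integrable (fun ω => ((B ω - mB) * B ω) * αz (V ω)) μ :=
    aux_int (((hB.sub measurable_const).mul hB).mul (hαzm.comp hV))
      (C := ((1 + |mB|) * 1) * Cz)
      fun ω => aux_absmul (aux_absmul (hBmb ω) (hBb ω)) (hCz (V ω))
  have intf4 : Integrable (fun ω => (B ω - mB) * αu (V ω)) μ :=
    aux_int ((hB.sub measurable_const).mul (hαum.comp hV))
      (C := (1 + |mB|) * Cu)
      fun ω => aux_absmul (hBmb ω) (hCu (V ω))
  have T2 : ∫ ω, (B ω - mB) * A ω ∂μ = Vb * cz := by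
    rw [stepA _ hg2m ⟨1 + |mB|, hBmb⟩]
    calc ∫ ω, (B ω - mB) * (αz (V ω) * B ω + αu (V ω)) ∂μ
        = ∫ ω, (((B ω - mB) * B ω) * αz (V ω) + (B ω - mB) * αu (V ω)) ∂μ :=
          integral_congr_ae (Filter.Eventually.of_forall fun ω => by ring)
      _ = Vb * cz + 0 := by rw [integral_add intf3 intf4, h3, h4]
      _ = Vb * cz := by ring
  -- conditional expectation of ϑu(V) given σ(B) is constant
  have hIndepVB : Indep (MeasurableSpace.comap V inferInstance) (MeasurableSpace.comap B inferInstance) μ :=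
    (IndepFun_iff_Indep V B μ).mp hindep.symm
  have hcondθ : μ[(fun ω => ϑu (V ω))|(MeasurableSpace.comap B inferInstance)] =ᵐ[μ] fun _ => cθ :=
    condExp_indep_eq hV.comap_le hmb
      ((hϑum.comp (comap_measurable V)).stronglyMeasurable) hIndepVB
  -- Term 2 : ∫ (B - mB) * E[A|B] * ϑu(V)
  set cB := μ[A|(MeasurableSpace.comap B inferInstance)] with hcBdef
  have hWm : StronglyMeasurable[(MeasurableSpace.comap B inferInstance)] (fun ω => (B ω - mB) * cB ω) :=
    (((comap_measurable B).sub measurable_const).stronglyMeasurable).mul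
      stronglyMeasurable_condExp
  have intWθ : Integrable (fun ω => ((B ω - mB) * cB ω) * ϑu (V ω)) μ := by
    have h : Integrable (fun ω => ((B ω - mB) * ϑu (V ω)) * cB ω) μ :=
      integrable_condExp.bdd_mul (c := (1 + |mB|) * Cθ)
        ((hB.sub measurable_const).mul hθV).aestronglyMeasurable
        (Filter.Eventually.of_forall fun ω => by
          rw [Real.norm_eq_abs]; exact aux_absmul (hBmb ω) (hCθ (V ω)))
    exact h.congr (Filter.Eventually.of_forall fun ω => by ring)
  have intgA : Integrable (fun ω => (B ω - mB) * A ω) μ :=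
    aux_int ((hB.sub measurable_const).mul hA) (C := (1 + |mB|) * 1)
      fun ω => aux_absmul (hBmb ω) (hAb ω)
  have hW : ∫ ω, (B ω - mB) * cB ω ∂μ = Vb * cz := by
    rw [← T2]
    exact (aux_pullout μ hmb ((comap_measurable B).sub
      measurable_const).stronglyMeasurable intgA intA).symm
  have T3 : ∫ ω, ((B ω - mB) * cB ω) * ϑu (V ω) ∂μ = (Vb * cz) * cθ := by
    rw [aux_pullout μ hmb hWm intWθ intθ]
    calc ∫ ω, ((B ω - mB) * cB ω) * (μ[(fun ω => ϑu (V ω))|(MeasurableSpace.comap B inferInstance)]) ω ∂μ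
        = ∫ ω, ((B ω - mB) * cB ω) * cθ ∂μ := by
          refine integral_congr_ae ?_
          filter_upwards [hcondθ] with ω hω
          rw [hω]
      _ = (∫ ω, (B ω - mB) * cB ω ∂μ) * cθ := integral_mul_const _ _
      _ = (Vb * cz) * cθ := by rw [hW]
  -- integrability of the pieces of the main integrand
  have intg1A : Integrable (fun ω => ((B ω - mB) * ϑu (V ω)) * A ω) μ :=
    aux_int (((hB.sub measurable_const).mul hθV).mul hA)
      (C := ((1 + |mB|) * Cθ) * 1)
      fun ω => aux_absmul (aux_absmul (hBmb ω) (hCθ (V ω))) (hAb ω)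
  -- main identity
  have main : (∫ ω, (B ω - mB) * (A ω - cB ω) * ϑu (V ω) ∂μ)
      = covE μ B B * covE μ (fun x => αz (V x)) (fun x => ϑu (V x)) := by
    have hsplit : (∫ ω, (B ω - mB) * (A ω - cB ω) * ϑu (V ω) ∂μ)
        = (∫ ω, ((B ω - mB) * ϑu (V ω)) * A ω ∂μ)
          - ∫ ω, ((B ω - mB) * cB ω) * ϑu (V ω) ∂μ := by
      rw [← integral_sub intg1A intWθ]
      exact integral_congr_ae (Filter.Eventually.of_forall fun ω => by ring)
    have hVb : Vb = covE μ B B := by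
      rw [hVbdef, covE]
      calc ∫ ω, (B ω - mB) * B ω ∂μ
          = ∫ ω, (B ω * B ω - mB * B ω) ∂μ :=
            integral_congr_ae (Filter.Eventually.of_forall fun ω => by ring)
        _ = (∫ ω, B ω * B ω ∂μ) - ∫ ω, mB * B ω ∂μ :=
            integral_sub (aux_int (hB.mul hB) (C := 1 * 1)
              fun ω => aux_absmul (hBb ω) (hBb ω)) (intB.const_mul mB)
        _ = (∫ ω, B ω * B ω ∂μ) - mB * ∫ ω, B ω ∂μ := by rw [integral_const_mul]
    have hcov2 : covE μ (fun x => αz (V x)) (fun x => ϑu (V x)) = czθ - cz * cθ := rfl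
    rw [hsplit, T1, T3, hcov2, ← hVb]
    ring
  exact ⟨main, fun h => by rw [main, h, mul_zero]⟩
end

section
/- Instrument-effect residual identity: under the treatment model and IV independence, E[(B − E[B])·(A − E[A|B])·B·ϑ_z(V)] = Var(B)·(Cov(α_z(V), ϑ_z(V)) + Cov(α_u(V), ϑ_z(V))). In particular this expectation vanishes when Cov(ϑ_z(V), α_z(V)) = 0 and Cov(ϑ_z(V), α_u(V)) = 0. -/
open MeasureTheory ProbabilityTheory

private lemma abs_mul_le' {x y cx cy : ℝ} (hx : |x| ≤ cx) (hy : |y| ≤ cy) : |x * y| ≤ cx * cy := by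
  rw [abs_mul]; exact mul_le_mul hx hy (abs_nonneg y) ((abs_nonneg x).trans hx)

private lemma intg_of_bdd {Ω : Type*} [MeasurableSpace Ω] {μ : Measure Ω} [IsProbabilityMeasure μ]
    {f : Ω → ℝ} (hf : Measurable f) {C : ℝ} (hC : ∀ ω, |f ω| ≤ C) : Integrable f μ :=
  (integrable_const C).mono' hf.aestronglyMeasurable
    (Filter.Eventually.of_forall fun ω => by simpa using hC ω)

/-- Instrument-effect residual identity:
`E[(B − E[B])·(A − E[A|B])·B·ϑ_z(V)] = Var(B)·(Cov(α_z(V),ϑ_z(V)) + Cov(α_u(V),ϑ_z(V)))`;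
in particular the expectation vanishes when both covariances vanish. -/
theorem instrument_effect_residual_identity
    {Ω 𝒱 : Type*} [MeasurableSpace Ω] [MeasurableSpace 𝒱]
    (μ : Measure Ω) [IsProbabilityMeasure μ]
    (V : Ω → 𝒱) (A B : Ω → ℝ)
    (hV : Measurable V) (hA : Measurable A) (hB : Measurable B)
    (hA01 : ∀ ω, A ω = 0 ∨ A ω = 1) (hB01 : ∀ ω, B ω = 0 ∨ B ω = 1)
    (αz αu : 𝒱 → ℝ) (hαzm : Measurable αz) (hαum : Measurable αu)
    (hαzb : ∃ C, ∀ x, |αz x| ≤ C) (hαub : ∃ C, ∀ x, |αu x| ≤ C)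
    (htreat : μ[A | MeasurableSpace.comap (fun ω => (B ω, V ω)) inferInstance]
        =ᵐ[μ] fun ω => αz (V ω) * B ω + αu (V ω))
    (hindep : IndepFun B V μ)
    (ϑz : 𝒱 → ℝ) (hϑzm : Measurable ϑz) (hϑzb : ∃ C, ∀ x, |ϑz x| ≤ C) :
    (∫ ω, (B ω - ∫ x, B x ∂μ)
        * (A ω - (μ[A | MeasurableSpace.comap B inferInstance]) ω) * B ω * ϑz (V ω) ∂μ)
      = covE μ B B * (covE μ (fun x => αz (V x)) (fun x => ϑz (V x))
          + covE μ (fun x => αu (V x)) (fun x => ϑz (V x)))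
    ∧ (covE μ (fun x => ϑz (V x)) (fun x => αz (V x)) = 0 →
        covE μ (fun x => ϑz (V x)) (fun x => αu (V x)) = 0 →
        (∫ ω, (B ω - ∫ x, B x ∂μ)
          * (A ω - (μ[A | MeasurableSpace.comap B inferInstance]) ω) * B ω * ϑz (V ω) ∂μ) = 0) := by
  obtain ⟨Cz, hCz⟩ := hαzb
  obtain ⟨Cu, hCu⟩ := hαub
  obtain ⟨Ct, hCt⟩ := hϑzb
  have hB1 : ∀ ω, |B ω| ≤ 1 := fun ω => by rcases hB01 ω with h | h <;> simp [h]
  have hA1 : ∀ ω, |A ω| ≤ 1 := fun ω => by rcases hA01 ω with h | h <;> simp [h]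
  have hBVmeas : Measurable fun ω => (B ω, V ω) := hB.prodMk hV
  have hle2 : (MeasurableSpace.comap (fun ω => (B ω, V ω)) inferInstance) ≤ ‹MeasurableSpace Ω› := hBVmeas.comap_le
  have hleB : (MeasurableSpace.comap B inferInstance) ≤ ‹MeasurableSpace Ω› := hB.comap_le
  have hle1 : (MeasurableSpace.comap B inferInstance) ≤ (MeasurableSpace.comap (fun ω => (B ω, V ω)) inferInstance) := by
    have hcomp : B = (fun p : ℝ × 𝒱 => p.1) ∘ fun ω => (B ω, V ω) := rfl
    rw [hcomp, ← MeasurableSpace.comap_comp]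
    exact MeasurableSpace.comap_mono measurable_fst.comap_le
  -- atoms
  set b := ∫ x, B x ∂μ with hbdef
  set az := ∫ ω, αz (V ω) ∂μ with hazdef
  set au := ∫ ω, αu (V ω) ∂μ with haudef
  set th := ∫ ω, ϑz (V ω) ∂μ with hthdef
  -- integrability facts
  have hαzV : Measurable fun ω => αz (V ω) := hαzm.comp hV
  have hαuV : Measurable fun ω => αu (V ω) := hαum.comp hV
  have hϑV : Measurable fun ω => ϑz (V ω) := hϑzm.comp hV
  have intB : Integrable B μ := intg_of_bdd hB hB1
  have intA : Integrable A μ := intg_of_bdd hA hA1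
  have intαzV : Integrable (fun ω => αz (V ω)) μ := intg_of_bdd hαzV (fun ω => hCz _)
  have intαuV : Integrable (fun ω => αu (V ω)) μ := intg_of_bdd hαuV (fun ω => hCu _)
  have intϑV : Integrable (fun ω => ϑz (V ω)) μ := intg_of_bdd hϑV (fun ω => hCt _)
  -- the function W
  set W : Ω → ℝ := fun ω => (B ω - b) * B ω * ϑz (V ω) with hWdef
  have hWm : Measurable W := ((hB.sub measurable_const).mul hB).mul hϑV
  have hWbd : ∀ ω, |W ω| ≤ (1 + |b|) * 1 * Ct := fun ω =>
    abs_mul_le' (abs_mul_le' ((abs_sub _ _).trans (by simp [hB1 ω])) (hB1 ω)) (hCt _)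
  have intW : Integrable W μ := intg_of_bdd hWm hWbd
  -- measurability of B, V w.r.t. the comap σ-algebras
  have hBmBV : Measurable[(MeasurableSpace.comap (fun ω => (B ω, V ω)) inferInstance)] B :=
    measurable_fst.comp (measurable_iff_comap_le.mpr le_rfl)
  have hVmBV : Measurable[(MeasurableSpace.comap (fun ω => (B ω, V ω)) inferInstance)] V :=
    measurable_snd.comp (measurable_iff_comap_le.mpr le_rfl)
  have hWsm : StronglyMeasurable[(MeasurableSpace.comap (fun ω => (B ω, V ω)) inferInstance)] W :=
    (((hBmBV.sub measurable_const).mul hBmBV).mul (hϑzm.comp hVmBV)).stronglyMeasurable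
  have hBsmB : StronglyMeasurable[(MeasurableSpace.comap B inferInstance)] B :=
    (measurable_iff_comap_le.mpr le_rfl).stronglyMeasurable
  -- Step 1 : E[A|B] = az • B + au
  have hVcomap : Measurable[MeasurableSpace.comap V inferInstance] V :=
    measurable_iff_comap_le.mpr le_rfl
  have hindBV : Indep (MeasurableSpace.comap V inferInstance) (MeasurableSpace.comap B inferInstance) μ :=
    (IndepFun_iff_Indep V B μ).mp hindep.symm
  have hcondαz : μ[(fun ω => αz (V ω))|(MeasurableSpace.comap B inferInstance)] =ᵐ[μ] fun _ => az :=
    condExp_indep_eq hV.comap_le hleB (hαzm.comp hVcomap).stronglyMeasurable hindBV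
  have hcondαu : μ[(fun ω => αu (V ω))|(MeasurableSpace.comap B inferInstance)] =ᵐ[μ] fun _ => au :=
    condExp_indep_eq hV.comap_le hleB (hαum.comp hVcomap).stronglyMeasurable hindBV
  have intBαz : Integrable (B * fun ω => αz (V ω)) μ :=
    intg_of_bdd (hB.mul hαzV) (fun ω => abs_mul_le' (hB1 ω) (hCz _))
  have hpull : μ[(B * fun ω => αz (V ω))|(MeasurableSpace.comap B inferInstance)] =ᵐ[μ] B * μ[(fun ω => αz (V ω))|(MeasurableSpace.comap B inferInstance)] :=
    condExp_mul_of_stronglyMeasurable_left hBsmB intBαz intαzV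
  have hEAB : μ[A|(MeasurableSpace.comap B inferInstance)] =ᵐ[μ] fun ω => az * B ω + au := by
    have h1 : μ[A|(MeasurableSpace.comap B inferInstance)] =ᵐ[μ] μ[μ[A|(MeasurableSpace.comap (fun ω => (B ω, V ω)) inferInstance)]|(MeasurableSpace.comap B inferInstance)] := (condExp_condExp_of_le hle1 hle2).symm
    have h2 : μ[μ[A|(MeasurableSpace.comap (fun ω => (B ω, V ω)) inferInstance)]|(MeasurableSpace.comap B inferInstance)] =ᵐ[μ] μ[(fun ω => αz (V ω) * B ω + αu (V ω))|(MeasurableSpace.comap B inferInstance)] :=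
      condExp_congr_ae htreat
    have heq : (fun ω => αz (V ω) * B ω + αu (V ω))
        = (B * fun ω => αz (V ω)) + fun ω => αu (V ω) := by
      funext ω; simp [mul_comm]
    have h3 : μ[(fun ω => αz (V ω) * B ω + αu (V ω))|(MeasurableSpace.comap B inferInstance)]
        =ᵐ[μ] μ[(B * fun ω => αz (V ω))|(MeasurableSpace.comap B inferInstance)] + μ[(fun ω => αu (V ω))|(MeasurableSpace.comap B inferInstance)] := by
      rw [heq]; exact condExp_add intBαz intαuV _
    refine h1.trans (h2.trans (h3.trans ?_))
    filter_upwards [hpull, hcondαz, hcondαu] with ω h1' h2' h3'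
    simp only [Pi.add_apply, h1', Pi.mul_apply, h2', h3']
    ring
  -- Step 2 : compute ∫ W·A via conditioning on (B,V)
  have intWA : Integrable (W * A) μ :=
    intg_of_bdd (hWm.mul hA) (fun ω => abs_mul_le' (hWbd ω) (hA1 ω))
  have hWA : ∫ ω, W ω * A ω ∂μ = ∫ ω, W ω * (αz (V ω) * B ω + αu (V ω)) ∂μ := by
    have hc : μ[(W * A)|(MeasurableSpace.comap (fun ω => (B ω, V ω)) inferInstance)] =ᵐ[μ] W * μ[A|(MeasurableSpace.comap (fun ω => (B ω, V ω)) inferInstance)] :=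
      condExp_mul_of_stronglyMeasurable_left hWsm intWA intA
    calc ∫ ω, W ω * A ω ∂μ = ∫ ω, (W * A) ω ∂μ := rfl
      _ = ∫ ω, (μ[(W * A)|(MeasurableSpace.comap (fun ω => (B ω, V ω)) inferInstance)]) ω ∂μ := (integral_condExp hle2).symm
      _ = ∫ ω, W ω * (αz (V ω) * B ω + αu (V ω)) ∂μ := by
          refine integral_congr_ae ?_
          filter_upwards [hc, htreat] with ω h1' h2'
          simp only [h1', Pi.mul_apply, h2']
  -- Step 3 : split the main integral
  have intEAB : Integrable (μ[A|(MeasurableSpace.comap B inferInstance)]) μ := integrable_condExp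
  have intWEAB : Integrable (fun ω => W ω * (μ[A|(MeasurableSpace.comap B inferInstance)]) ω) μ :=
    intEAB.bdd_mul (c := (1 + |b|) * 1 * Ct) hWm.aestronglyMeasurable (Filter.Eventually.of_forall fun ω => by simpa using hWbd ω)
  have intWA' : Integrable (fun ω => W ω * A ω) μ := intWA
  have hsplit : (∫ ω, (B ω - b) * (A ω - (μ[A|(MeasurableSpace.comap B inferInstance)]) ω) * B ω * ϑz (V ω) ∂μ)
      = (∫ ω, W ω * A ω ∂μ) - ∫ ω, W ω * (μ[A|(MeasurableSpace.comap B inferInstance)]) ω ∂μ := by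
    rw [← integral_sub intWA' intWEAB]
    refine integral_congr_ae (Filter.Eventually.of_forall fun ω => ?_)
    simp only [hWdef, Pi.mul_apply]; ring
  have hWEAB : ∫ ω, W ω * (μ[A|(MeasurableSpace.comap B inferInstance)]) ω ∂μ = ∫ ω, W ω * (az * B ω + au) ∂μ := by
    refine integral_congr_ae ?_
    filter_upwards [hEAB] with ω h
    rw [h]
  -- Step 4 : combine and simplify pointwise using B ∈ {0,1}
  set h : 𝒱 → ℝ := fun v => ϑz v * (αz v + αu v - az - au) with hhdef
  have hhm : Measurable h := hϑzm.mul (((hαzm.add hαum).sub measurable_const).sub measurable_const)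
  have inthV : Integrable (fun ω => h (V ω)) μ :=
    intg_of_bdd (hhm.comp hV)
      (fun ω => abs_mul_le' (hCt _) (le_trans (by
        have := hCz (V ω); have := hCu (V ω)
        calc |αz (V ω) + αu (V ω) - az - au| ≤ |αz (V ω)| + |αu (V ω)| + |az| + |au| := by
              calc |αz (V ω) + αu (V ω) - az - au|
                  ≤ |αz (V ω) + αu (V ω) - az| + |au| := abs_sub _ _
                _ ≤ (|αz (V ω) + αu (V ω)| + |az|) + |au| := by
                    exact add_le_add (abs_sub _ _) le_rfl
                _ ≤ (|αz (V ω)| + |αu (V ω)| + |az|) + |au| := by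
                    exact add_le_add (add_le_add (abs_add_le _ _) le_rfl) le_rfl
          _ ≤ Cz + Cu + |az| + |au| := by linarith) (le_refl (Cz + Cu + |az| + |au|))))
  have intBh : Integrable (fun ω => B ω * h (V ω)) μ :=
    inthV.bdd_mul (c := 1) hB.aestronglyMeasurable (Filter.Eventually.of_forall fun ω => by simpa using hB1 ω)
  have hmain : (∫ ω, W ω * (αz (V ω) * B ω + αu (V ω)) ∂μ) - (∫ ω, W ω * (az * B ω + au) ∂μ)
      = (1 - b) * ∫ ω, B ω * h (V ω) ∂μ := by
    rw [← integral_sub (intg_of_bdd (f := fun ω => W ω * (αz (V ω) * B ω + αu (V ω))) (hWm.mul ((hαzV.mul hB).add hαuV))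
          (fun ω => abs_mul_le' (hWbd ω) (by
            calc |αz (V ω) * B ω + αu (V ω)| ≤ |αz (V ω) * B ω| + |αu (V ω)| := abs_add_le _ _
              _ ≤ Cz * 1 + Cu := add_le_add (abs_mul_le' (hCz _) (hB1 ω)) (hCu _))))
        (intg_of_bdd (f := fun ω => W ω * (az * B ω + au)) (hWm.mul ((measurable_const.mul hB).add measurable_const))
          (fun ω => abs_mul_le' (hWbd ω) (by
            calc |az * B ω + au| ≤ |az * B ω| + |au| := abs_add_le _ _
              _ ≤ |az| * 1 + |au| := add_le_add (abs_mul_le' (le_refl _) (hB1 ω)) (le_refl _)))),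
      ← integral_const_mul]
    refine integral_congr_ae (Filter.Eventually.of_forall fun ω => ?_)
    simp only [hWdef, hhdef]
    rcases hB01 ω with hb0 | hb0 <;> rw [hb0] <;> ring
  have hIndBh : IndepFun B (fun ω => h (V ω)) μ := hindep.comp measurable_id hhm
  have hBh : ∫ ω, B ω * h (V ω) ∂μ = b * ∫ ω, h (V ω) ∂μ :=
    hIndBh.integral_fun_mul_eq_mul_integral intB.aestronglyMeasurable inthV.aestronglyMeasurable
  have hhint : ∫ ω, h (V ω) ∂μ
      = ((∫ ω, αz (V ω) * ϑz (V ω) ∂μ) + ∫ ω, αu (V ω) * ϑz (V ω) ∂μ) - (az + au) * th := by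
    have heq : (fun ω => h (V ω))
        = fun ω => (αz (V ω) * ϑz (V ω) + αu (V ω) * ϑz (V ω)) - (az + au) * ϑz (V ω) := by
      funext ω; simp only [hhdef]; ring
    rw [heq, integral_sub, integral_add, integral_const_mul]
    · exact intg_of_bdd (hαzV.mul hϑV) (fun ω => abs_mul_le' (hCz _) (hCt _))
    · exact intg_of_bdd (hαuV.mul hϑV) (fun ω => abs_mul_le' (hCu _) (hCt _))
    · exact ((intg_of_bdd (hαzV.mul hϑV) (fun ω => abs_mul_le' (hCz _) (hCt _))).add
        (intg_of_bdd (hαuV.mul hϑV) (fun ω => abs_mul_le' (hCu _) (hCt _))))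
    · exact intϑV.const_mul _
  have hBB : ∫ ω, B ω * B ω ∂μ = b := by
    rw [hbdef]
    refine integral_congr_ae (Filter.Eventually.of_forall fun ω => ?_)
    show B ω * B ω = B ω
    rcases hB01 ω with hb0 | hb0 <;> rw [hb0] <;> ring
  -- put everything together
  have hfinal : (∫ ω, (B ω - b) * (A ω - (μ[A|(MeasurableSpace.comap B inferInstance)]) ω) * B ω * ϑz (V ω) ∂μ)
      = covE μ B B * (covE μ (fun x => αz (V x)) (fun x => ϑz (V x))
          + covE μ (fun x => αu (V x)) (fun x => ϑz (V x))) := by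
    rw [hsplit, hWA, hWEAB, hmain, hBh, hhint]
    simp only [covE, hBB]
    ring
  refine ⟨hfinal, fun hz hu => ?_⟩
  rw [hfinal]
  have hz' : covE μ (fun x => αz (V x)) (fun x => ϑz (V x)) = 0 := by
    rw [covE] at hz ⊢
    have : (∫ ω, αz (V ω) * ϑz (V ω) ∂μ) = ∫ ω, ϑz (V ω) * αz (V ω) ∂μ :=
      integral_congr_ae (Filter.Eventually.of_forall fun ω => mul_comm _ _)
    rw [this]; linarith [hz]
  have hu' : covE μ (fun x => αu (V x)) (fun x => ϑz (V x)) = 0 := by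
    rw [covE] at hu ⊢
    have : (∫ ω, αu (V ω) * ϑz (V ω) ∂μ) = ∫ ω, ϑz (V ω) * αu (V ω) ∂μ :=
      integral_congr_ae (Filter.Eventually.of_forall fun ω => mul_comm _ _)
    rw [this]; linarith [hu]
  rw [hz', hu']; ring
end

section
/- Main-effect unconfounding identity: under the treatment model, IV independence, and the orthogonality conditions Cov(ϑ_a(V), α_z(V)) = 0 and Cov(ϑ_a(V), α_u(V)) = 0, it holds that E[(B − E[B])·(A − E[A|B])·A·ϑ_a(V)] = E[(B − E[B])·(A − E[A|B])·A]·E[ϑ_a(V)]. -/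
open MeasureTheory ProbabilityTheory

namespace MEUaux

lemma integrable_of_bdd {Ω : Type*} {mΩ : MeasurableSpace Ω} {μ : Measure Ω} [IsFiniteMeasure μ]
    {f : Ω → ℝ} (hf : AEStronglyMeasurable f μ)
    {C : ℝ} (h : ∀ ω, |f ω| ≤ C) : Integrable f μ :=
  ⟨hf, HasFiniteIntegral.of_bounded (C := C)
    (Filter.Eventually.of_forall fun ω => by simpa [Real.norm_eq_abs] using h ω)⟩

lemma abs_mul_le {a b c d : ℝ} (ha : |a| ≤ c) (hb : |b| ≤ d) : |a * b| ≤ c * d := by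
  rw [abs_mul]
  exact mul_le_mul ha hb (abs_nonneg _) ((abs_nonneg a).trans ha)

/-- `∫ g·f = ∫ g·E[f|m]` for `m`-strongly-measurable `g`. -/
lemma integral_mul_condexp {Ω : Type*} {mΩ : MeasurableSpace Ω} {μ : Measure Ω}
    [IsFiniteMeasure μ] {m : MeasurableSpace Ω} (hm : m ≤ mΩ)
    {g f : Ω → ℝ} (hg : StronglyMeasurable[m] g)
    (hgf : Integrable (fun ω => g ω * f ω) μ) (hf : Integrable f μ) :
    ∫ ω, g ω * f ω ∂μ = ∫ ω, g ω * (μ[f|m]) ω ∂μ := by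
  haveI : SigmaFinite (μ.trim hm) := (isFiniteMeasure_trim hm).toSigmaFinite
  have h := condExp_mul_of_stronglyMeasurable_left (μ := μ) hg hgf hf
  calc ∫ ω, g ω * f ω ∂μ = ∫ ω, (μ[fun ω => g ω * f ω|m]) ω ∂μ := (integral_condExp hm (f := fun ω => g ω * f ω)).symm
    _ = ∫ ω, g ω * (μ[f|m]) ω ∂μ := integral_congr_ae h

/-- Auxiliary computation: for bounded measurable `k`,
`∫ (B−p)(1−(qB+r)) k(V) A = I₁·∫ k αz(V) + I₀·∫ k αu(V)`. -/
lemma aux_integral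
    {Ω 𝒱 : Type*} [mΩ : MeasurableSpace Ω] [m𝒱 : MeasurableSpace 𝒱]
    (μ : Measure Ω) [IsProbabilityMeasure μ]
    (V : Ω → 𝒱) (A B : Ω → ℝ)
    (hV : Measurable V) (hA : Measurable A) (hB : Measurable B)
    (hA01 : ∀ ω, A ω = 0 ∨ A ω = 1) (hB01 : ∀ ω, B ω = 0 ∨ B ω = 1)
    (αz αu : 𝒱 → ℝ) (hαzm : Measurable αz) (hαum : Measurable αu)
    (hαzb : ∃ C, ∀ x, |αz x| ≤ C) (hαub : ∃ C, ∀ x, |αu x| ≤ C)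
    (htreat : μ[A | MeasurableSpace.comap (fun ω => (B ω, V ω)) inferInstance]
        =ᵐ[μ] fun ω => αz (V ω) * B ω + αu (V ω))
    (hindep : IndepFun B V μ)
    (p q r : ℝ) (k : 𝒱 → ℝ) (hk : Measurable k) (hkb : ∃ C, ∀ x, |k x| ≤ C) :
    ∫ ω, (B ω - p) * (1 - (q * B ω + r)) * k (V ω) * A ω ∂μ
      = (∫ ω, (B ω - p) * (1 - (q * B ω + r)) * B ω ∂μ) * (∫ ω, k (V ω) * αz (V ω) ∂μ)
        + (∫ ω, (B ω - p) * (1 - (q * B ω + r)) ∂μ) * (∫ ω, k (V ω) * αu (V ω) ∂μ) := by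
  obtain ⟨Cz, hCz⟩ := hαzb
  obtain ⟨Cu, hCu⟩ := hαub
  obtain ⟨Ck, hCk⟩ := hkb
  have hm2 : MeasurableSpace.comap (fun ω => (B ω, V ω)) inferInstance ≤ mΩ :=
    (hB.prodMk hV).comap_le
  have hpair : Measurable[MeasurableSpace.comap (fun ω => (B ω, V ω)) inferInstance]
      (fun ω => (B ω, V ω)) := Measurable.of_comap_le le_rfl
  have hBm2 : Measurable[MeasurableSpace.comap (fun ω => (B ω, V ω)) inferInstance] B :=
    (measurable_fst.comp hpair : _)
  have hVm2 : Measurable[MeasurableSpace.comap (fun ω => (B ω, V ω)) inferInstance] V :=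
    (measurable_snd.comp hpair : _)
  -- bounds for the `B`-part
  set φ : ℝ → ℝ := fun t => (t - p) * (1 - (q * t + r)) with hφdef
  have hφm : Measurable φ := by fun_prop
  set CP : ℝ := |φ 0| + |φ 1| with hCPdef
  have hPbd : ∀ ω, |φ (B ω)| ≤ CP := by
    intro ω
    rcases hB01 ω with h | h <;> rw [h]
    · exact le_add_of_nonneg_right (abs_nonneg _)
    · exact le_add_of_nonneg_left (abs_nonneg _)
  have hAbd : ∀ ω, |A ω| ≤ 1 := fun ω => by rcases hA01 ω with h | h <;> simp [h]
  have hBbd : ∀ ω, |B ω| ≤ 1 := fun ω => by rcases hB01 ω with h | h <;> simp [h]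
  -- integrands
  have hGm : Measurable fun ω => φ (B ω) * k (V ω) := ((hφm.comp hB).mul (hk.comp hV))
  have hGm2 : StronglyMeasurable[MeasurableSpace.comap (fun ω => (B ω, V ω)) inferInstance]
      fun ω => φ (B ω) * k (V ω) :=
    (Measurable.mul (hφm.comp hBm2) (hk.comp hVm2)).stronglyMeasurable
  have hGA : Integrable (fun ω => φ (B ω) * k (V ω) * A ω) μ :=
    integrable_of_bdd ((hGm.mul hA).aestronglyMeasurable)
      (C := CP * Ck * 1) fun ω => abs_mul_le (abs_mul_le (hPbd ω) (hCk _)) (hAbd ω)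
  have hAint : Integrable A μ := integrable_of_bdd hA.aestronglyMeasurable hAbd
  -- step 1: replace A by its conditional expectation given (B,V)
  have step1 : ∫ ω, φ (B ω) * k (V ω) * A ω ∂μ
      = ∫ ω, φ (B ω) * k (V ω) * (αz (V ω) * B ω + αu (V ω)) ∂μ := by
    rw [integral_mul_condexp hm2 hGm2 hGA hAint]
    refine integral_congr_ae (htreat.mono fun ω hω => ?_)
    dsimp only
    rw [hω]
  -- step 2: split and use independence
  have hf1m : Measurable fun t : ℝ => φ t * t := hφm.mul measurable_id
  have hg1m : Measurable fun v => k v * αz v := hk.mul hαzm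
  have hg0m : Measurable fun v => k v * αu v := hk.mul hαum
  have hf1int : Integrable (fun ω => φ (B ω) * B ω) μ :=
    integrable_of_bdd ((hf1m.comp hB)).aestronglyMeasurable
      (C := CP * 1) fun ω => abs_mul_le (hPbd ω) (hBbd ω)
  have hf0int : Integrable (fun ω => φ (B ω)) μ :=
    integrable_of_bdd ((hφm.comp hB)).aestronglyMeasurable hPbd
  have hg1int : Integrable (fun ω => k (V ω) * αz (V ω)) μ :=
    integrable_of_bdd ((hg1m.comp hV)).aestronglyMeasurable
      (C := Ck * Cz) fun ω => abs_mul_le (hCk _) (hCz _)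
  have hg0int : Integrable (fun ω => k (V ω) * αu (V ω)) μ :=
    integrable_of_bdd ((hg0m.comp hV)).aestronglyMeasurable
      (C := Ck * Cu) fun ω => abs_mul_le (hCk _) (hCu _)
  have hprod1int : Integrable (fun ω => (φ (B ω) * B ω) * (k (V ω) * αz (V ω))) μ :=
    integrable_of_bdd (((hf1m.comp hB).mul (hg1m.comp hV)).aestronglyMeasurable)
      (C := CP * 1 * (Ck * Cz)) fun ω =>
        abs_mul_le (abs_mul_le (hPbd ω) (hBbd ω)) (abs_mul_le (hCk _) (hCz _))
  have hprod0int : Integrable (fun ω => (φ (B ω)) * (k (V ω) * αu (V ω))) μ :=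
    integrable_of_bdd (((hφm.comp hB).mul (hg0m.comp hV)).aestronglyMeasurable)
      (C := CP * (Ck * Cu)) fun ω => abs_mul_le (hPbd ω) (abs_mul_le (hCk _) (hCu _))
  have hindep1 : IndepFun (fun ω => φ (B ω) * B ω) (fun ω => k (V ω) * αz (V ω)) μ :=
    hindep.comp hf1m hg1m
  have hindep0 : IndepFun (fun ω => φ (B ω)) (fun ω => k (V ω) * αu (V ω)) μ :=
    hindep.comp hφm hg0m
  have step2 : ∫ ω, φ (B ω) * k (V ω) * (αz (V ω) * B ω + αu (V ω)) ∂μ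
      = ∫ ω, (φ (B ω) * B ω) * (k (V ω) * αz (V ω))
          + (φ (B ω)) * (k (V ω) * αu (V ω)) ∂μ := by
    refine integral_congr_ae (Filter.Eventually.of_forall fun ω => ?_)
    ring
  have hmul1 : ∫ ω, (φ (B ω) * B ω) * (k (V ω) * αz (V ω)) ∂μ
      = (∫ ω, φ (B ω) * B ω ∂μ) * (∫ ω, k (V ω) * αz (V ω) ∂μ) := by
    have := hindep1.integral_fun_mul_eq_mul_integral hf1int.1 hg1int.1
    simpa [Pi.mul_apply] using this
  have hmul0 : ∫ ω, (φ (B ω)) * (k (V ω) * αu (V ω)) ∂μ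
      = (∫ ω, φ (B ω) ∂μ) * (∫ ω, k (V ω) * αu (V ω) ∂μ) := by
    have := hindep0.integral_fun_mul_eq_mul_integral hf0int.1 hg0int.1
    simpa [Pi.mul_apply] using this
  calc ∫ ω, (B ω - p) * (1 - (q * B ω + r)) * k (V ω) * A ω ∂μ
      = ∫ ω, φ (B ω) * k (V ω) * A ω ∂μ := rfl
    _ = ∫ ω, φ (B ω) * k (V ω) * (αz (V ω) * B ω + αu (V ω)) ∂μ := step1
    _ = ∫ ω, (φ (B ω) * B ω) * (k (V ω) * αz (V ω))
          + (φ (B ω)) * (k (V ω) * αu (V ω)) ∂μ := step2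
    _ = (∫ ω, (φ (B ω) * B ω) * (k (V ω) * αz (V ω)) ∂μ)
          + ∫ ω, (φ (B ω)) * (k (V ω) * αu (V ω)) ∂μ := integral_add hprod1int hprod0int
    _ = (∫ ω, (B ω - p) * (1 - (q * B ω + r)) * B ω ∂μ) * (∫ ω, k (V ω) * αz (V ω) ∂μ)
          + (∫ ω, (B ω - p) * (1 - (q * B ω + r)) ∂μ) * (∫ ω, k (V ω) * αu (V ω) ∂μ) := by
        rw [hmul1, hmul0]

/-- The conditional expectation of `A` given `B` is `cz·B + cu`. -/
lemma condexp_given_B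
    {Ω 𝒱 : Type*} [mΩ : MeasurableSpace Ω] [m𝒱 : MeasurableSpace 𝒱]
    (μ : Measure Ω) [IsProbabilityMeasure μ]
    (V : Ω → 𝒱) (A B : Ω → ℝ)
    (hV : Measurable V) (hA : Measurable A) (hB : Measurable B)
    (hB01 : ∀ ω, B ω = 0 ∨ B ω = 1)
    (αz αu : 𝒱 → ℝ) (hαzm : Measurable αz) (hαum : Measurable αu)
    (hαzb : ∃ C, ∀ x, |αz x| ≤ C) (hαub : ∃ C, ∀ x, |αu x| ≤ C)
    (htreat : μ[A | MeasurableSpace.comap (fun ω => (B ω, V ω)) inferInstance]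
        =ᵐ[μ] fun ω => αz (V ω) * B ω + αu (V ω))
    (hindep : IndepFun B V μ) :
    μ[A | MeasurableSpace.comap B inferInstance]
      =ᵐ[μ] fun ω => (∫ x, αz (V x) ∂μ) * B ω + (∫ x, αu (V x) ∂μ) := by
  obtain ⟨Cz, hCz⟩ := hαzb
  obtain ⟨Cu, hCu⟩ := hαub
  have hm2 : MeasurableSpace.comap (fun ω => (B ω, V ω)) inferInstance ≤ mΩ :=
    (hB.prodMk hV).comap_le
  have hmB : MeasurableSpace.comap B inferInstance ≤ mΩ := hB.comap_le
  have hpair : Measurable[MeasurableSpace.comap (fun ω => (B ω, V ω)) inferInstance]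
      (fun ω => (B ω, V ω)) := Measurable.of_comap_le le_rfl
  have hBm2 : Measurable[MeasurableSpace.comap (fun ω => (B ω, V ω)) inferInstance] B :=
    (measurable_fst.comp hpair : _)
  have hsub : MeasurableSpace.comap B inferInstance
      ≤ MeasurableSpace.comap (fun ω => (B ω, V ω)) inferInstance := Measurable.comap_le hBm2
  haveI : SigmaFinite (μ.trim hmB) := (isFiniteMeasure_trim hmB).toSigmaFinite
  haveI : SigmaFinite (μ.trim hm2) := (isFiniteMeasure_trim hm2).toSigmaFinite
  have hBbd : ∀ ω, |B ω| ≤ 1 := fun ω => by rcases hB01 ω with h | h <;> simp [h]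
  have hBmB : Measurable[MeasurableSpace.comap B inferInstance] B := Measurable.of_comap_le le_rfl
  have hVmV : Measurable[MeasurableSpace.comap V inferInstance] V := Measurable.of_comap_le le_rfl
  have hazVint : Integrable (fun ω => αz (V ω)) μ :=
    integrable_of_bdd (hαzm.comp hV).aestronglyMeasurable fun ω => hCz _
  have hauVint : Integrable (fun ω => αu (V ω)) μ :=
    integrable_of_bdd (hαum.comp hV).aestronglyMeasurable fun ω => hCu _
  have hazBint : Integrable (fun ω => B ω * αz (V ω)) μ :=
    integrable_of_bdd ((hB.mul (hαzm.comp hV)).aestronglyMeasurable)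
      (C := 1 * Cz) fun ω => abs_mul_le (hBbd ω) (hCz _)
  have hIndepVB : ProbabilityTheory.Indep (MeasurableSpace.comap V inferInstance)
      (MeasurableSpace.comap B inferInstance) μ := (IndepFun_iff_Indep V B μ).mp hindep.symm
  have hcondz : μ[(fun ω => αz (V ω))|MeasurableSpace.comap B inferInstance]
      =ᵐ[μ] fun _ => ∫ x, αz (V x) ∂μ :=
    condExp_indep_eq (μ := μ) hV.comap_le hmB
      ((hαzm.comp hVmV).stronglyMeasurable) hIndepVB
  have hcondu : μ[(fun ω => αu (V ω))|MeasurableSpace.comap B inferInstance]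
      =ᵐ[μ] fun _ => ∫ x, αu (V x) ∂μ :=
    condExp_indep_eq (μ := μ) hV.comap_le hmB
      ((hαum.comp hVmV).stronglyMeasurable) hIndepVB
  have h0 : μ[A|MeasurableSpace.comap B inferInstance]
      =ᵐ[μ] condExp (MeasurableSpace.comap B inferInstance) μ
          (μ[A|MeasurableSpace.comap (fun ω => (B ω, V ω)) inferInstance]) := (condExp_condExp_of_le hsub hm2).symm
  have h1 : condExp (MeasurableSpace.comap B inferInstance) μ
        (μ[A|MeasurableSpace.comap (fun ω => (B ω, V ω)) inferInstance])
      =ᵐ[μ] μ[(fun ω => αz (V ω) * B ω + αu (V ω))|MeasurableSpace.comap B inferInstance] :=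
    condExp_congr_ae htreat
  have hrw : (fun ω => αz (V ω) * B ω + αu (V ω))
      = (fun ω => B ω * αz (V ω)) + (fun ω => αu (V ω)) := by
    funext ω; simp [mul_comm]
  have h2 : μ[(fun ω => αz (V ω) * B ω + αu (V ω))|MeasurableSpace.comap B inferInstance]
      =ᵐ[μ] μ[(fun ω => B ω * αz (V ω))|MeasurableSpace.comap B inferInstance]
        + μ[(fun ω => αu (V ω))|MeasurableSpace.comap B inferInstance] := by
    rw [hrw]; exact condExp_add hazBint hauVint _
  have h3 : μ[(fun ω => B ω * αz (V ω))|MeasurableSpace.comap B inferInstance]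
      =ᵐ[μ] B * μ[(fun ω => αz (V ω))|MeasurableSpace.comap B inferInstance] :=
    condExp_mul_of_stronglyMeasurable_left (μ := μ) hBmB.stronglyMeasurable hazBint hazVint
  refine (((h0.trans h1).trans h2).trans ?_)
  filter_upwards [h3, hcondz, hcondu] with ω h3ω hzω huω
  simp only [Pi.add_apply, Pi.mul_apply] at *
  rw [h3ω, hzω, huω]
  ring

end MEUaux

open MEUaux

/-- Main-effect unconfounding identity:
`E[(B − E[B])·(A − E[A|B])·A·ϑ_a(V)] = E[(B − E[B])·(A − E[A|B])·A]·E[ϑ_a(V)]`. -/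
theorem main_effect_unconfounding_identity
    {Ω 𝒱 : Type*} [MeasurableSpace Ω] [MeasurableSpace 𝒱]
    (μ : Measure Ω) [IsProbabilityMeasure μ]
    (V : Ω → 𝒱) (A B : Ω → ℝ)
    (hV : Measurable V) (hA : Measurable A) (hB : Measurable B)
    (hA01 : ∀ ω, A ω = 0 ∨ A ω = 1) (hB01 : ∀ ω, B ω = 0 ∨ B ω = 1)
    (αz αu : 𝒱 → ℝ) (hαzm : Measurable αz) (hαum : Measurable αu)
    (hαzb : ∃ C, ∀ x, |αz x| ≤ C) (hαub : ∃ C, ∀ x, |αu x| ≤ C)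
    (htreat : μ[A | MeasurableSpace.comap (fun ω => (B ω, V ω)) inferInstance]
        =ᵐ[μ] fun ω => αz (V ω) * B ω + αu (V ω))
    (hindep : IndepFun B V μ)
    (ϑa : 𝒱 → ℝ) (hϑam : Measurable ϑa) (hϑab : ∃ C, ∀ x, |ϑa x| ≤ C)
    (horth1 : covE μ (fun x => ϑa (V x)) (fun x => αz (V x)) = 0)
    (horth2 : covE μ (fun x => ϑa (V x)) (fun x => αu (V x)) = 0) :
    (∫ ω, (B ω - ∫ x, B x ∂μ)
        * (A ω - (μ[A | MeasurableSpace.comap B inferInstance]) ω) * A ω * ϑa (V ω) ∂μ)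
      = (∫ ω, (B ω - ∫ x, B x ∂μ)
          * (A ω - (μ[A | MeasurableSpace.comap B inferInstance]) ω) * A ω ∂μ)
        * (∫ ω, ϑa (V ω) ∂μ) := by
  obtain ⟨Ct, hCt⟩ := hϑab
  have hEA := condexp_given_B μ V A B hV hA hB hB01 αz αu hαzm hαum hαzb hαub htreat hindep
  set b : ℝ := ∫ x, B x ∂μ with hbdef
  set cz : ℝ := ∫ x, αz (V x) ∂μ with hczdef
  set cu : ℝ := ∫ x, αu (V x) ∂μ with hcudef
  set ct : ℝ := ∫ ω, ϑa (V ω) ∂μ with hctdef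
  have hLHS : ∫ ω, (B ω - b) * (A ω - (μ[A|MeasurableSpace.comap B inferInstance]) ω)
        * A ω * ϑa (V ω) ∂μ
      = ∫ ω, (B ω - b) * (1 - (cz * B ω + cu)) * ϑa (V ω) * A ω ∂μ := by
    refine integral_congr_ae ?_
    filter_upwards [hEA] with ω hω
    rw [hω]
    rcases hA01 ω with h | h <;> rw [h] <;> ring
  have hRHS : ∫ ω, (B ω - b) * (A ω - (μ[A|MeasurableSpace.comap B inferInstance]) ω) * A ω ∂μ
      = ∫ ω, (B ω - b) * (1 - (cz * B ω + cu)) * (1 : ℝ) * A ω ∂μ := by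
    refine integral_congr_ae ?_
    filter_upwards [hEA] with ω hω
    rw [hω]
    rcases hA01 ω with h | h <;> rw [h] <;> ring
  have haux1 := aux_integral μ V A B hV hA hB hA01 hB01 αz αu hαzm hαum hαzb hαub
    htreat hindep b cz cu ϑa hϑam ⟨Ct, hCt⟩
  have haux0 := aux_integral μ V A B hV hA hB hA01 hB01 αz αu hαzm hαum hαzb hαub
    htreat hindep b cz cu (fun _ => (1 : ℝ)) measurable_const ⟨1, fun x => by simp⟩
  have horthz : ∫ ω, ϑa (V ω) * αz (V ω) ∂μ = ct * cz := by
    have h := horth1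
    simp only [covE] at h
    rw [hctdef, hczdef]
    linarith
  have horthu : ∫ ω, ϑa (V ω) * αu (V ω) ∂μ = ct * cu := by
    have h := horth2
    simp only [covE] at h
    rw [hctdef, hcudef]
    linarith
  rw [hLHS, hRHS, haux1, haux0, horthz, horthu]
  simp only [one_mul]
  ring
end

section
/- Interaction-effect unconfounding identity: under the treatment model, IV independence, and the orthogonality conditions Cov(ϑ_az(V), α_z(V)) = 0 and Cov(ϑ_az(V), α_u(V)) = 0, it holds that E[(B − E[B])·(A − E[A|B])·A·B·ϑ_az(V)] = E[(B − E[B])·(A − E[A|B])·A·B]·E[ϑ_az(V)]. -/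
open MeasureTheory ProbabilityTheory

/-- Interaction-effect unconfounding identity:
`E[(B − E[B])·(A − E[A|B])·A·B·ϑ_az(V)] = E[(B − E[B])·(A − E[A|B])·A·B]·E[ϑ_az(V)]`. -/
theorem interaction_effect_unconfounding_identity
    {Ω 𝒱 : Type*} [MeasurableSpace Ω] [MeasurableSpace 𝒱]
    (μ : Measure Ω) [IsProbabilityMeasure μ]
    (V : Ω → 𝒱) (A B : Ω → ℝ)
    (hV : Measurable V) (hA : Measurable A) (hB : Measurable B)
    (hA01 : ∀ ω, A ω = 0 ∨ A ω = 1) (hB01 : ∀ ω, B ω = 0 ∨ B ω = 1)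
    (αz αu : 𝒱 → ℝ) (hαzm : Measurable αz) (hαum : Measurable αu)
    (hαzb : ∃ C, ∀ x, |αz x| ≤ C) (hαub : ∃ C, ∀ x, |αu x| ≤ C)
    (htreat : μ[A | MeasurableSpace.comap (fun ω => (B ω, V ω)) inferInstance]
        =ᵐ[μ] fun ω => αz (V ω) * B ω + αu (V ω))
    (hindep : IndepFun B V μ)
    (ϑaz : 𝒱 → ℝ) (hϑazm : Measurable ϑaz) (hϑazb : ∃ C, ∀ x, |ϑaz x| ≤ C)
    (horth1 : covE μ (fun x => ϑaz (V x)) (fun x => αz (V x)) = 0)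
    (horth2 : covE μ (fun x => ϑaz (V x)) (fun x => αu (V x)) = 0) :
    (∫ ω, (B ω - ∫ x, B x ∂μ)
        * (A ω - (μ[A | MeasurableSpace.comap B inferInstance]) ω) * A ω * B ω * ϑaz (V ω) ∂μ)
      = (∫ ω, (B ω - ∫ x, B x ∂μ)
          * (A ω - (μ[A | MeasurableSpace.comap B inferInstance]) ω) * A ω * B ω ∂μ)
        * (∫ ω, ϑaz (V ω) ∂μ) := by
  classical
  rename_i mΩ m𝒱 hprob
  set m2 := MeasurableSpace.comap (fun ω => (B ω, V ω)) inferInstance with hm2def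
  set m1 := MeasurableSpace.comap B inferInstance with hm1def
  have hm2 : m2 ≤ _ := (hB.prodMk hV).comap_le
  have hm1 : m1 ≤ _ := hB.comap_le
  set h := μ[A | m1] with hhdef
  -- basic bounds
  have hAbd : ∀ ω, |A ω| ≤ 1 := by
    intro ω; rcases hA01 ω with h' | h' <;> simp [h']
  have hBbd : ∀ ω, |B ω| ≤ 1 := by
    intro ω; rcases hB01 ω with h' | h' <;> simp [h']
  obtain ⟨Cz, hCz⟩ := hαzb
  obtain ⟨Cu, hCu⟩ := hαub
  obtain ⟨Ct, hCt⟩ := hϑazb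
  -- integrability helper
  have intgr : ∀ (f : Ω → ℝ) (C : ℝ), AEStronglyMeasurable[mΩ] f μ →
      (∀ᵐ ω ∂μ, |f ω| ≤ C) → Integrable f μ := by
    intro f C hf hC
    exact (integrable_const C).mono' hf (hC.mono fun ω hω => by
      simpa [Real.norm_eq_abs] using hω)
  have intA : Integrable A μ := intgr A 1 hA.aestronglyMeasurable (ae_of_all _ hAbd)
  -- h is a.e. bounded by 1 in absolute value
  have hh0 : 0 ≤ᵐ[μ] h :=
    condExp_nonneg (ae_of_all _ fun ω => by rcases hA01 ω with h' | h' <;> simp [h'])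
  have hh1 : h ≤ᵐ[μ] fun _ => (1 : ℝ) := by
    have := condExp_mono (m := m1) (μ := μ) intA (integrable_const (1 : ℝ))
      (ae_of_all _ fun ω => by rcases hA01 ω with h' | h' <;> simp [h'])
    rwa [condExp_const hm1 (1 : ℝ)] at this
  have hhbd : ∀ᵐ ω ∂μ, |h ω| ≤ 1 := by
    filter_upwards [hh0, hh1] with ω h0 h1
    simp only [Pi.zero_apply] at h0
    rw [abs_le]; exact ⟨by linarith, h1⟩
  have hhm : Measurable[mΩ] h := (stronglyMeasurable_condExp.mono hm1).measurable
  -- measurability w.r.t. m2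
  have hBm2 : Measurable[m2] B :=
    measurable_fst.comp (comap_measurable _)
  have hVm2 : Measurable[m2] V :=
    measurable_snd.comp (comap_measurable _)
  have hm12 : m1 ≤ m2 := hBm2.comap_le
  have hBm1 : Measurable[m1] B := comap_measurable _
  have hhm1 : Measurable[m1] h := stronglyMeasurable_condExp.measurable
  have hhm2 : Measurable[m2] h := hhm1.mono hm12 le_rfl
  have hϑm2 : Measurable[m2] (fun ω => ϑaz (V ω)) := hϑazm.comp hVm2
  -- the treatment-model right hand side
  set R : Ω → ℝ := fun ω => αz (V ω) * B ω + αu (V ω) with hRdef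
  -- pull-out lemma
  have pull : ∀ (w : Ω → ℝ), Measurable[m2] w → Integrable (fun ω => w ω * A ω) μ →
      ∫ ω, w ω * A ω ∂μ = ∫ ω, w ω * R ω ∂μ := by
    intro w hw hint
    have hint' : Integrable (w * A) μ := hint
    have h1 : μ[w * A | m2] =ᵐ[μ] w * μ[A | m2] :=
      condExp_mul_of_stronglyMeasurable_left hw.stronglyMeasurable hint' intA
    have h2 : w * μ[A | m2] =ᵐ[μ] fun ω => w ω * R ω :=
      htreat.mono fun ω hω => by simp [Pi.mul_apply, hω]
    have h3 : ∫ ω, (μ[w * A | m2]) ω ∂μ = ∫ ω, (w * A) ω ∂μ := integral_condExp hm2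
    calc ∫ ω, w ω * A ω ∂μ = ∫ ω, (w * A) ω ∂μ := rfl
      _ = ∫ ω, (μ[w * A | m2]) ω ∂μ := h3.symm
      _ = ∫ ω, w ω * R ω ∂μ := integral_congr_ae (h1.trans h2)
  -- independence lemma
  have indep2 : ∀ (ξ : Ω → ℝ), Measurable[m1] ξ → Integrable ξ μ →
      ∀ (φ : 𝒱 → ℝ), Measurable φ → Integrable (fun ω => φ (V ω)) μ →
      ∫ ω, ξ ω * φ (V ω) ∂μ = (∫ ω, ξ ω ∂μ) * ∫ ω, φ (V ω) ∂μ := by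
    intro ξ hξ hiξ φ hφ hiφ
    have hI : IndepFun ξ (fun ω => φ (V ω)) μ := by
      rw [IndepFun_iff_Indep]
      refine indep_of_indep_of_le_right
        (indep_of_indep_of_le_left ((IndepFun_iff_Indep B V μ).mp hindep) ?_) ?_
      · exact hξ.comap_le
      · exact (hφ.comp (comap_measurable V)).comap_le
    have := hI.integral_mul_eq_mul_integral (hiξ.aestronglyMeasurable) (hiφ.aestronglyMeasurable)
    simpa [Pi.mul_apply] using this
  -- named integrals
  set b := ∫ x, B x ∂μ with hbdef
  set Eϑ := ∫ ω, ϑaz (V ω) ∂μ with hEϑdef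
  set Ez := ∫ ω, αz (V ω) ∂μ with hEzdef
  set Eu := ∫ ω, αu (V ω) ∂μ with hEudef
  -- orthogonality
  have orth1 : ∫ ω, ϑaz (V ω) * αz (V ω) ∂μ = Eϑ * Ez := by
    have := horth1; unfold covE at this; linarith [this]
  have orth2 : ∫ ω, ϑaz (V ω) * αu (V ω) ∂μ = Eϑ * Eu := by
    have := horth2; unfold covE at this; linarith [this]
  -- integrable building blocks
  have intB : Integrable B μ := intgr B 1 hB.aestronglyMeasurable (ae_of_all _ hBbd)
  have intϑ : Integrable (fun ω => ϑaz (V ω)) μ :=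
    intgr _ Ct ((hϑazm.comp hV).aestronglyMeasurable) (ae_of_all _ fun ω => hCt _)
  have intzu : Integrable (fun ω => (αz (V ω) + αu (V ω))) μ :=
    intgr _ (Cz + Cu) (((hαzm.add hαum).comp hV).aestronglyMeasurable)
      (ae_of_all _ fun ω => (abs_add_le _ _).trans (add_le_add (hCz _) (hCu _)))
  have intzuϑ : Integrable (fun ω => (αz (V ω) + αu (V ω)) * ϑaz (V ω)) μ :=
    intgr _ ((Cz + Cu) * Ct)
      ((((hαzm.add hαum).mul hϑazm).comp hV).aestronglyMeasurable)
      (ae_of_all _ fun ω => by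
        rw [abs_mul]
        have h1 : |αz (V ω) + αu (V ω)| ≤ Cz + Cu :=
          (abs_add_le _ _).trans (add_le_add (hCz _) (hCu _))
        exact mul_le_mul h1 (hCt _) (abs_nonneg _) ((abs_nonneg _).trans h1))
  have intBh : Integrable (fun ω => B ω * h ω) μ :=
    intgr _ 1 ((hB.mul hhm).aestronglyMeasurable)
      (hhbd.mono fun ω hω => by
        rw [abs_mul]
        calc |B ω| * |h ω| ≤ 1 * 1 := mul_le_mul (hBbd ω) hω (abs_nonneg _) zero_le_one
          _ = 1 := one_mul 1)
  -- integrability of the w * A products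
  have mulA_int : ∀ (w : Ω → ℝ), Measurable[mΩ] w → ∀ C, (∀ᵐ ω ∂μ, |w ω| ≤ C) →
      Integrable (fun ω => w ω * A ω) μ := by
    intro w hw C hC
    refine intgr _ C ((hw.mul hA).aestronglyMeasurable) (hC.mono fun ω hω => ?_)
    rw [abs_mul]
    calc |w ω| * |A ω| ≤ |w ω| * 1 := by gcongr; exact hAbd ω
      _ = |w ω| := mul_one _
      _ ≤ C := hω
  -- key identity 1 : ∫ A*B*ϑ  and ∫ A*B
  have key1 : ∫ ω, (B ω * ϑaz (V ω)) * A ω ∂μ = b * (Ez * Eϑ + Eu * Eϑ) := by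
    have e1 : ∫ ω, (B ω * ϑaz (V ω)) * A ω ∂μ = ∫ ω, (B ω * ϑaz (V ω)) * R ω ∂μ :=
      pull _ (hBm2.mul hϑm2)
        (mulA_int _ (hB.mul (hϑazm.comp hV)) Ct (ae_of_all _ fun ω => by
          rw [abs_mul]
          calc |B ω| * |ϑaz (V ω)| ≤ 1 * Ct :=
            mul_le_mul (hBbd ω) (hCt _) (abs_nonneg _) zero_le_one
            _ = Ct := one_mul Ct))
    have e2 : ∀ ω, (B ω * ϑaz (V ω)) * R ω
        = B ω * ((αz (V ω) + αu (V ω)) * ϑaz (V ω)) := by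
      intro ω; rcases hB01 ω with h' | h' <;> simp [hRdef, h'] <;> ring
    rw [e1, integral_congr_ae (ae_of_all _ e2),
      indep2 B hBm1 intB (fun x => (αz x + αu x) * ϑaz x) ((hαzm.add hαum).mul hϑazm) intzuϑ]
    have : ∫ ω, (αz (V ω) + αu (V ω)) * ϑaz (V ω) ∂μ = Ez * Eϑ + Eu * Eϑ := by
      have esplit : ∀ ω, (αz (V ω) + αu (V ω)) * ϑaz (V ω)
          = ϑaz (V ω) * αz (V ω) + ϑaz (V ω) * αu (V ω) := fun ω => by ring
      rw [integral_congr_ae (ae_of_all _ esplit), integral_add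
        (intgr (fun ω => ϑaz (V ω) * αz (V ω)) (Ct * Cz)
          (((hϑazm.comp hV).mul (hαzm.comp hV)).aestronglyMeasurable)
          (ae_of_all _ fun ω => by
            rw [abs_mul]
            exact mul_le_mul (hCt _) (hCz _) (abs_nonneg _)
              ((abs_nonneg (ϑaz (V ω))).trans (hCt (V ω)))))
        (intgr (fun ω => ϑaz (V ω) * αu (V ω)) (Ct * Cu)
          (((hϑazm.comp hV).mul (hαum.comp hV)).aestronglyMeasurable)
          (ae_of_all _ fun ω => by
            rw [abs_mul]
            exact mul_le_mul (hCt _) (hCu _) (abs_nonneg _)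
              ((abs_nonneg (ϑaz (V ω))).trans (hCt (V ω))))),
        orth1, orth2]
      ring
    rw [this]
  have key1' : ∫ ω, B ω * A ω ∂μ = b * (Ez + Eu) := by
    have e1 : ∫ ω, B ω * A ω ∂μ = ∫ ω, B ω * R ω ∂μ :=
      pull _ hBm2 (mulA_int _ hB 1 (ae_of_all _ hBbd))
    have e2 : ∀ ω, B ω * R ω = B ω * (αz (V ω) + αu (V ω)) := by
      intro ω; rcases hB01 ω with h' | h' <;> simp [hRdef, h'] <;> ring
    rw [e1, integral_congr_ae (ae_of_all _ e2),
      indep2 B hBm1 intB (fun x => αz x + αu x) (hαzm.add hαum) intzu]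
    have : ∫ ω, (αz (V ω) + αu (V ω)) ∂μ = Ez + Eu := by
      rw [integral_add (intgr (fun ω => αz (V ω)) Cz ((hαzm.comp hV).aestronglyMeasurable)
          (ae_of_all _ fun ω => hCz _))
        (intgr (fun ω => αu (V ω)) Cu ((hαum.comp hV).aestronglyMeasurable)
          (ae_of_all _ fun ω => hCu _))]
    rw [this]
  -- key identity 2 : ∫ A*B*h*ϑ and ∫ A*B*h
  have hBhbd : ∀ᵐ ω ∂μ, |B ω * h ω| ≤ 1 := hhbd.mono fun ω hω => by
    rw [abs_mul]
    calc |B ω| * |h ω| ≤ 1 * 1 := mul_le_mul (hBbd ω) hω (abs_nonneg _) zero_le_one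
      _ = 1 := one_mul 1
  have key2 : ∫ ω, (B ω * h ω * ϑaz (V ω)) * A ω ∂μ
      = (∫ ω, B ω * h ω ∂μ) * (Ez * Eϑ + Eu * Eϑ) := by
    have e1 : ∫ ω, (B ω * h ω * ϑaz (V ω)) * A ω ∂μ
        = ∫ ω, (B ω * h ω * ϑaz (V ω)) * R ω ∂μ :=
      pull _ ((hBm2.mul hhm2).mul hϑm2)
        (mulA_int _ ((hB.mul hhm).mul (hϑazm.comp hV)) Ct
          (hBhbd.mono fun ω hω => by
            rw [abs_mul]
            calc |B ω * h ω| * |ϑaz (V ω)| ≤ 1 * Ct :=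
              mul_le_mul hω (hCt _) (abs_nonneg _) zero_le_one
              _ = Ct := one_mul Ct))
    have e2 : ∀ ω, (B ω * h ω * ϑaz (V ω)) * R ω
        = (B ω * h ω) * ((αz (V ω) + αu (V ω)) * ϑaz (V ω)) := by
      intro ω; rcases hB01 ω with h' | h' <;> simp [hRdef, h'] <;> ring
    rw [e1, integral_congr_ae (ae_of_all _ e2),
      indep2 (fun ω => B ω * h ω) (hBm1.mul hhm1) intBh (fun x => (αz x + αu x) * ϑaz x) ((hαzm.add hαum).mul hϑazm) intzuϑ]
    have : ∫ ω, (αz (V ω) + αu (V ω)) * ϑaz (V ω) ∂μ = Ez * Eϑ + Eu * Eϑ := by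
      have esplit : ∀ ω, (αz (V ω) + αu (V ω)) * ϑaz (V ω)
          = ϑaz (V ω) * αz (V ω) + ϑaz (V ω) * αu (V ω) := fun ω => by ring
      rw [integral_congr_ae (ae_of_all _ esplit), integral_add
        (intgr (fun ω => ϑaz (V ω) * αz (V ω)) (Ct * Cz)
          (((hϑazm.comp hV).mul (hαzm.comp hV)).aestronglyMeasurable)
          (ae_of_all _ fun ω => by
            rw [abs_mul]
            exact mul_le_mul (hCt _) (hCz _) (abs_nonneg _)
              ((abs_nonneg (ϑaz (V ω))).trans (hCt (V ω)))))
        (intgr (fun ω => ϑaz (V ω) * αu (V ω)) (Ct * Cu)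
          (((hϑazm.comp hV).mul (hαum.comp hV)).aestronglyMeasurable)
          (ae_of_all _ fun ω => by
            rw [abs_mul]
            exact mul_le_mul (hCt _) (hCu _) (abs_nonneg _)
              ((abs_nonneg (ϑaz (V ω))).trans (hCt (V ω))))),
        orth1, orth2]
      ring
    rw [this]
  have key2' : ∫ ω, (B ω * h ω) * A ω ∂μ = (∫ ω, B ω * h ω ∂μ) * (Ez + Eu) := by
    have e1 : ∫ ω, (B ω * h ω) * A ω ∂μ = ∫ ω, (B ω * h ω) * R ω ∂μ :=
      pull _ (hBm2.mul hhm2) (mulA_int _ (hB.mul hhm) 1 hBhbd)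
    have e2 : ∀ ω, (B ω * h ω) * R ω = (B ω * h ω) * (αz (V ω) + αu (V ω)) := by
      intro ω; rcases hB01 ω with h' | h' <;> simp [hRdef, h'] <;> ring
    rw [e1, integral_congr_ae (ae_of_all _ e2),
      indep2 (fun ω => B ω * h ω) (hBm1.mul hhm1) intBh (fun x => αz x + αu x) (hαzm.add hαum) intzu]
    have : ∫ ω, (αz (V ω) + αu (V ω)) ∂μ = Ez + Eu := by
      rw [integral_add (intgr (fun ω => αz (V ω)) Cz ((hαzm.comp hV).aestronglyMeasurable)
          (ae_of_all _ fun ω => hCz _))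
        (intgr (fun ω => αu (V ω)) Cu ((hαum.comp hV).aestronglyMeasurable)
          (ae_of_all _ fun ω => hCu _))]
    rw [this]
  -- decompose both sides
  have decompL : (∫ ω, (B ω - b) * (A ω - h ω) * A ω * B ω * ϑaz (V ω) ∂μ)
      = (1 - b) * ((∫ ω, (B ω * ϑaz (V ω)) * A ω ∂μ)
          - ∫ ω, (B ω * h ω * ϑaz (V ω)) * A ω ∂μ) := by
    have epw : ∀ ω, (B ω - b) * (A ω - h ω) * A ω * B ω * ϑaz (V ω)
        = (1 - b) * ((B ω * ϑaz (V ω)) * A ω - (B ω * h ω * ϑaz (V ω)) * A ω) := by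
      intro ω
      rcases hA01 ω with hA' | hA' <;> rcases hB01 ω with hB' | hB' <;>
        simp [hA', hB'] <;> ring
    rw [integral_congr_ae (ae_of_all _ epw), integral_const_mul, integral_sub
      (mulA_int (fun ω => B ω * ϑaz (V ω)) (hB.mul (hϑazm.comp hV)) Ct (ae_of_all _ fun ω => by
        rw [abs_mul]
        calc |B ω| * |ϑaz (V ω)| ≤ 1 * Ct :=
          mul_le_mul (hBbd ω) (hCt _) (abs_nonneg _) zero_le_one
          _ = Ct := one_mul Ct))
      (mulA_int (fun ω => B ω * h ω * ϑaz (V ω)) ((hB.mul hhm).mul (hϑazm.comp hV)) Ct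
        (hBhbd.mono fun ω hω => by
          rw [abs_mul]
          calc |B ω * h ω| * |ϑaz (V ω)| ≤ 1 * Ct :=
            mul_le_mul hω (hCt _) (abs_nonneg _) zero_le_one
            _ = Ct := one_mul Ct))]
  have decompR : (∫ ω, (B ω - b) * (A ω - h ω) * A ω * B ω ∂μ)
      = (1 - b) * ((∫ ω, B ω * A ω ∂μ) - ∫ ω, (B ω * h ω) * A ω ∂μ) := by
    have epw : ∀ ω, (B ω - b) * (A ω - h ω) * A ω * B ω
        = (1 - b) * (B ω * A ω - (B ω * h ω) * A ω) := by
      intro ω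
      rcases hA01 ω with hA' | hA' <;> rcases hB01 ω with hB' | hB' <;>
        simp [hA', hB'] <;> ring
    rw [integral_congr_ae (ae_of_all _ epw), integral_const_mul, integral_sub
      (mulA_int (fun ω => B ω) hB 1 (ae_of_all _ hBbd))
      (mulA_int (fun ω => B ω * h ω) (hB.mul hhm) 1 hBhbd)]
  rw [decompL, decompR, key1, key1', key2, key2']
  ring
end

section
/- Combined residual-IV identity (used at the start of the proof of Lemma 4): under the treatment model, IV independence, and the orthogonality conditions Cov(ϑ_a(V), α_z(V)) = 0, Cov(ϑ_a(V), α_u(V)) = 0, Cov(ϑ_z(V), α_z(V)) = 0, Cov(ϑ_z(V), α_u(V)) = 0, and Cov(α_z(V), ϑ_u(V)) = 0, it holds that E[(B − E[B])·(A − E[A|B])·(A·ϑ_a(V) + ϑ_z(V)·B + ϑ_u(V))] = E[(B − E[B])·(A − E[A|B])·A]·E[ϑ_a(V)]. -/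
open MeasureTheory ProbabilityTheory

private lemma bddE_mul {α : Type*} {f g : α → ℝ} (hf : ∃ C, ∀ a, |f a| ≤ C)
    (hg : ∃ C, ∀ a, |g a| ≤ C) : ∃ C, ∀ a, |f a * g a| ≤ C := by
  obtain ⟨C, hC⟩ := hf; obtain ⟨D, hD⟩ := hg
  refine ⟨|C| * |D|, fun a => ?_⟩
  rw [abs_mul]
  exact mul_le_mul ((hC a).trans (le_abs_self C)) ((hD a).trans (le_abs_self D))
    (abs_nonneg _) (abs_nonneg _)

private lemma bddE_add {α : Type*} {f g : α → ℝ} (hf : ∃ C, ∀ a, |f a| ≤ C)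
    (hg : ∃ C, ∀ a, |g a| ≤ C) : ∃ C, ∀ a, |f a + g a| ≤ C := by
  obtain ⟨C, hC⟩ := hf; obtain ⟨D, hD⟩ := hg
  exact ⟨C + D, fun a => (abs_add_le _ _).trans (add_le_add (hC a) (hD a))⟩

private lemma bddE_sub {α : Type*} {f g : α → ℝ} (hf : ∃ C, ∀ a, |f a| ≤ C)
    (hg : ∃ C, ∀ a, |g a| ≤ C) : ∃ C, ∀ a, |f a - g a| ≤ C := by
  obtain ⟨C, hC⟩ := hf; obtain ⟨D, hD⟩ := hg
  exact ⟨C + D, fun a => (abs_sub _ _).trans (add_le_add (hC a) (hD a))⟩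

private lemma bddE_neg {α : Type*} {f : α → ℝ} (hf : ∃ C, ∀ a, |f a| ≤ C) :
    ∃ C, ∀ a, |-f a| ≤ C := by
  obtain ⟨C, hC⟩ := hf
  exact ⟨C, fun a => by rw [abs_neg]; exact hC a⟩

private lemma bddE_const {α : Type*} (c : ℝ) : ∃ C, ∀ _ : α, |c| ≤ C :=
  ⟨|c|, fun _ => le_rfl⟩

private lemma integrable_of_bddE {Ω : Type*} [MeasurableSpace Ω] {μ : Measure Ω}
    [IsFiniteMeasure μ] {f : Ω → ℝ} (hm : AEStronglyMeasurable f μ)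
    (hb : ∃ C, ∀ ω, |f ω| ≤ C) : Integrable f μ := by
  obtain ⟨C, hC⟩ := hb
  exact (integrable_const C).mono' hm (Filter.Eventually.of_forall fun ω => by
    simpa [Real.norm_eq_abs] using hC ω)

private lemma int_factor {Ω 𝒱 : Type*} [MeasurableSpace Ω] [MeasurableSpace 𝒱]
    {μ : Measure Ω} {B : Ω → ℝ} {V : Ω → 𝒱} (hB : Measurable B) (hV : Measurable V)
    (hindep : IndepFun B V μ) (f : 𝒱 → ℝ) (hf : Measurable f) :
    ∫ ω, B ω * f (V ω) ∂μ = (∫ ω, B ω ∂μ) * ∫ ω, f (V ω) ∂μ := by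
  have h : IndepFun B (fun ω => f (V ω)) μ := hindep.comp measurable_id hf
  have h2 := h.integral_mul_eq_mul_integral hB.aestronglyMeasurable (hf.comp hV).aestronglyMeasurable
  exact h2

private lemma int_comb {Ω : Type*} [MeasurableSpace Ω] {μ : Measure Ω} {f g : Ω → ℝ}
    (c : ℝ) (hf : Integrable f μ) (hg : Integrable g μ) :
    ∫ ω, (c * f ω + g ω) ∂μ = c * (∫ ω, f ω ∂μ) + ∫ ω, g ω ∂μ := by
  rw [integral_add (hf.const_mul c) hg, integral_const_mul]

/-- Combined residual-IV identity (used at the start of the proof of Lemma 4):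
`E[(B − E[B])·(A − E[A|B])·(A·ϑ_a(V) + ϑ_z(V)·B + ϑ_u(V))]
  = E[(B − E[B])·(A − E[A|B])·A]·E[ϑ_a(V)]`. -/
theorem combined_residual_iv_identity
    {Ω 𝒱 : Type*} [MeasurableSpace Ω] [MeasurableSpace 𝒱]
    (μ : Measure Ω) [IsProbabilityMeasure μ]
    (V : Ω → 𝒱) (A B : Ω → ℝ)
    (hV : Measurable V) (hA : Measurable A) (hB : Measurable B)
    (hA01 : ∀ ω, A ω = 0 ∨ A ω = 1) (hB01 : ∀ ω, B ω = 0 ∨ B ω = 1)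
    (αz αu : 𝒱 → ℝ) (hαzm : Measurable αz) (hαum : Measurable αu)
    (hαzb : ∃ C, ∀ x, |αz x| ≤ C) (hαub : ∃ C, ∀ x, |αu x| ≤ C)
    (htreat : μ[A | MeasurableSpace.comap (fun ω => (B ω, V ω)) inferInstance]
        =ᵐ[μ] fun ω => αz (V ω) * B ω + αu (V ω))
    (hindep : IndepFun B V μ)
    (ϑa ϑz ϑu : 𝒱 → ℝ)
    (hϑam : Measurable ϑa) (hϑzm : Measurable ϑz) (hϑum : Measurable ϑu)
    (hϑab : ∃ C, ∀ x, |ϑa x| ≤ C) (hϑzb : ∃ C, ∀ x, |ϑz x| ≤ C)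
    (hϑub : ∃ C, ∀ x, |ϑu x| ≤ C)
    (horth1 : covE μ (fun x => ϑa (V x)) (fun x => αz (V x)) = 0)
    (horth2 : covE μ (fun x => ϑa (V x)) (fun x => αu (V x)) = 0)
    (horth3 : covE μ (fun x => ϑz (V x)) (fun x => αz (V x)) = 0)
    (horth4 : covE μ (fun x => ϑz (V x)) (fun x => αu (V x)) = 0)
    (horth5 : covE μ (fun x => αz (V x)) (fun x => ϑu (V x)) = 0) :
    (∫ ω, (B ω - ∫ x, B x ∂μ)
        * (A ω - (μ[A | MeasurableSpace.comap B inferInstance]) ω)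
        * (A ω * ϑa (V ω) + ϑz (V ω) * B ω + ϑu (V ω)) ∂μ)
      = (∫ ω, (B ω - ∫ x, B x ∂μ)
          * (A ω - (μ[A | MeasurableSpace.comap B inferInstance]) ω) * A ω ∂μ)
        * (∫ ω, ϑa (V ω) ∂μ) := by
  classical
  have hBVm : Measurable fun ω => (B ω, V ω) := hB.prodMk hV
  have hmBV0 : MeasurableSpace.comap (fun ω => (B ω, V ω)) inferInstance
      ≤ (inferInstance : MeasurableSpace Ω) := hBVm.comap_le
  have hmB0 : MeasurableSpace.comap B inferInstance
      ≤ (inferInstance : MeasurableSpace Ω) := hB.comap_le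
  have hmBle : MeasurableSpace.comap B inferInstance
      ≤ MeasurableSpace.comap (fun ω => (B ω, V ω)) inferInstance := by
    have h1 : MeasurableSpace.comap B (inferInstance : MeasurableSpace ℝ)
        = (MeasurableSpace.comap (fun p : ℝ × 𝒱 => p.1) inferInstance).comap
            (fun ω => (B ω, V ω)) := by
      rw [MeasurableSpace.comap_comp]; rfl
    rw [h1]
    exact MeasurableSpace.comap_mono measurable_fst.comap_le
  set b : ℝ := ∫ x, B x ∂μ with hbdef
  set ta : ℝ := ∫ ω, ϑa (V ω) ∂μ with htadef
  set c1 : ℝ := ∫ ω, αz (V ω) ∂μ with hc1def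
  set c0 : ℝ := ∫ ω, αu (V ω) ∂μ with hc0def
  -- bounds
  have bA : ∃ C, ∀ ω, |A ω| ≤ C := ⟨1, fun ω => by rcases hA01 ω with h | h <;> simp [h]⟩
  have bB : ∃ C, ∀ ω, |B ω| ≤ C := ⟨1, fun ω => by rcases hB01 ω with h | h <;> simp [h]⟩
  have bva : ∃ C, ∀ ω, |ϑa (V ω)| ≤ C := hϑab.imp fun C hC ω => hC _
  have bvz : ∃ C, ∀ ω, |ϑz (V ω)| ≤ C := hϑzb.imp fun C hC ω => hC _
  have bvu : ∃ C, ∀ ω, |ϑu (V ω)| ≤ C := hϑub.imp fun C hC ω => hC _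
  have baz : ∃ C, ∀ ω, |αz (V ω)| ≤ C := hαzb.imp fun C hC ω => hC _
  have bau : ∃ C, ∀ ω, |αu (V ω)| ≤ C := hαub.imp fun C hC ω => hC _
  -- measurability
  have mva : Measurable fun ω => ϑa (V ω) := hϑam.comp hV
  have mvz : Measurable fun ω => ϑz (V ω) := hϑzm.comp hV
  have mvu : Measurable fun ω => ϑu (V ω) := hϑum.comp hV
  have maz : Measurable fun ω => αz (V ω) := hαzm.comp hV
  have mau : Measurable fun ω => αu (V ω) := hαum.comp hV
  have hInt : ∀ {f : Ω → ℝ}, Measurable f → (∃ C, ∀ ω, |f ω| ≤ C) → Integrable f μ :=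
    fun hm hb => integrable_of_bddE hm.aestronglyMeasurable hb
  have hintA : Integrable A μ := hInt hA bA
  -- the conditional expectation of A given B
  have hBmB : Measurable[(MeasurableSpace.comap B inferInstance)] B := measurable_iff_comap_le.mpr le_rfl
  have hVB : Indep (MeasurableSpace.comap V inferInstance) (MeasurableSpace.comap B inferInstance) μ := by
    exact (IndepFun_iff_Indep V B μ).mp hindep.symm
  have hconst : ∀ (f : 𝒱 → ℝ), Measurable f →
      μ[(fun ω => f (V ω))|(MeasurableSpace.comap B inferInstance)] =ᵐ[μ] fun _ => ∫ ω, f (V ω) ∂μ := by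
    intro f hf
    exact condExp_indep_eq hV.comap_le hmB0
      ((hf.comp (measurable_iff_comap_le.mpr le_rfl)).stronglyMeasurable) hVB
  have hM : μ[A|(MeasurableSpace.comap B inferInstance)] =ᵐ[μ] fun ω => c1 * B ω + c0 := by
    have hadd : (fun ω => αz (V ω) * B ω + αu (V ω))
        = (B * fun ω => αz (V ω)) + fun ω => αu (V ω) := by
      funext ω; simp [mul_comm]
    have h4 : μ[B * (fun ω => αz (V ω))|(MeasurableSpace.comap B inferInstance)] =ᵐ[μ] B * μ[(fun ω => αz (V ω))|(MeasurableSpace.comap B inferInstance)] :=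
      condExp_mul_of_stronglyMeasurable_left hBmB.stronglyMeasurable
        (hInt (hB.mul maz) (bddE_mul bB baz)) (hInt maz baz)
    have hz := hconst αz hαzm
    have hu := hconst αu hαum
    rw [← hc1def] at hz
    rw [← hc0def] at hu
    calc μ[A|(MeasurableSpace.comap B inferInstance)] =ᵐ[μ] μ[μ[A|(MeasurableSpace.comap (fun ω => (B ω, V ω)) inferInstance)]|(MeasurableSpace.comap B inferInstance)] := (condExp_condExp_of_le hmBle hmBV0).symm
      _ =ᵐ[μ] μ[(fun ω => αz (V ω) * B ω + αu (V ω))|(MeasurableSpace.comap B inferInstance)] := condExp_congr_ae htreat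
      _ =ᵐ[μ] μ[(B * fun ω => αz (V ω)) + (fun ω => αu (V ω))|(MeasurableSpace.comap B inferInstance)] := by rw [hadd]
      _ =ᵐ[μ] μ[B * fun ω => αz (V ω)|(MeasurableSpace.comap B inferInstance)] + μ[(fun ω => αu (V ω))|(MeasurableSpace.comap B inferInstance)] :=
          condExp_add (hInt (hB.mul maz) (bddE_mul bB baz)) (hInt mau bau) _
      _ =ᵐ[μ] fun ω => c1 * B ω + c0 := by
          filter_upwards [h4, hz, hu] with ω e4 ez eu
          simp only [Pi.add_apply, Pi.mul_apply] at *
          rw [e4, ez, eu]; ring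
  -- substitution of E[A | B, V]
  have hsub : ∀ (g : ℝ × 𝒱 → ℝ), Measurable g → (∃ C, ∀ ω, |g (B ω, V ω)| ≤ C) →
      (∫ ω, A ω * g (B ω, V ω) ∂μ)
        = ∫ ω, (αz (V ω) * B ω + αu (V ω)) * g (B ω, V ω) ∂μ := by
    intro g hg hgb
    have hgBV : Measurable fun ω => g (B ω, V ω) := hg.comp hBVm
    have hint1 : Integrable ((fun ω => g (B ω, V ω)) * A) μ :=
      hInt (hgBV.mul hA) (bddE_mul hgb bA)
    have hsm : StronglyMeasurable[(MeasurableSpace.comap (fun ω => (B ω, V ω)) inferInstance)] fun ω => g (B ω, V ω) :=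
      (hg.comp (measurable_iff_comap_le.mpr le_rfl)).stronglyMeasurable
    have hpull : μ[(fun ω => g (B ω, V ω)) * A|(MeasurableSpace.comap (fun ω => (B ω, V ω)) inferInstance)]
        =ᵐ[μ] (fun ω => g (B ω, V ω)) * μ[A|(MeasurableSpace.comap (fun ω => (B ω, V ω)) inferInstance)] :=
      condExp_mul_of_stronglyMeasurable_left hsm hint1 hintA
    calc (∫ ω, A ω * g (B ω, V ω) ∂μ)
        = ∫ ω, ((fun ω => g (B ω, V ω)) * A) ω ∂μ :=
          integral_congr_ae (Filter.Eventually.of_forall fun ω => mul_comm _ _)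
      _ = ∫ ω, (μ[(fun ω => g (B ω, V ω)) * A|(MeasurableSpace.comap (fun ω => (B ω, V ω)) inferInstance)]) ω ∂μ := (integral_condExp hmBV0).symm
      _ = ∫ ω, ((fun ω => g (B ω, V ω)) * μ[A|(MeasurableSpace.comap (fun ω => (B ω, V ω)) inferInstance)]) ω ∂μ := integral_congr_ae hpull
      _ = ∫ ω, (αz (V ω) * B ω + αu (V ω)) * g (B ω, V ω) ∂μ := by
          refine integral_congr_ae ?_
          filter_upwards [htreat] with ω h
          simp only [Pi.mul_apply]
          rw [h]
          exact mul_comm _ _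
  have hIphi1 : Integrable (fun ω => ϑa (V ω) * αz (V ω)) μ := hInt (mva.mul maz) (bddE_mul bva baz)
  have hIphi2 : Integrable (fun ω => ϑa (V ω) * αu (V ω)) μ := hInt (mva.mul mau) (bddE_mul bva bau)
  have hIphi3 : Integrable (fun ω => ϑz (V ω) * αz (V ω)) μ := hInt (mvz.mul maz) (bddE_mul bvz baz)
  have hIphi4 : Integrable (fun ω => ϑz (V ω) * αu (V ω)) μ := hInt (mvz.mul mau) (bddE_mul bvz bau)
  have hIphi5 : Integrable (fun ω => αz (V ω) * ϑu (V ω)) μ := hInt (maz.mul mvu) (bddE_mul baz bvu)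
  have hIphi6 : Integrable (fun ω => αu (V ω) * ϑu (V ω)) μ := hInt (mau.mul mvu) (bddE_mul bau bvu)
  have hIphi7 : Integrable (fun ω => ϑz (V ω)) μ := hInt (mvz) (bvz)
  have hIphi8 : Integrable (fun ω => ϑu (V ω)) μ := hInt (mvu) (bvu)
  have hIaz : Integrable (fun ω => αz (V ω)) μ := hInt maz baz
  have hIau : Integrable (fun ω => αu (V ω)) μ := hInt mau bau
  have bGc : ∃ C, ∀ ω, |(B ω - b) * (ϑa (V ω) * (1 - (c1 * B ω + c0)) + ϑz (V ω) * B ω + ϑu (V ω))| ≤ C := bddE_mul (bddE_sub bB (bddE_const b)) (bddE_add (bddE_add (bddE_mul bva (bddE_sub (bddE_const 1) (bddE_add (bddE_mul (bddE_const c1) bB) (bddE_const c0)))) (bddE_mul bvz bB)) bvu)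
  have bHc : ∃ C, ∀ ω, |-((B ω - b) * (c1 * B ω + c0) * (ϑz (V ω) * B ω + ϑu (V ω)))| ≤ C := bddE_neg (bddE_mul (bddE_mul (bddE_sub bB (bddE_const b)) (bddE_add (bddE_mul (bddE_const c1) bB) (bddE_const c0))) (bddE_add (bddE_mul bvz bB) bvu))
  have bI1c : ∃ C, ∀ ω, |(1 - b) * ((αz (V ω) + αu (V ω)) * (ϑa (V ω) * (1 - c0 - c1) + ϑz (V ω) + ϑu (V ω)) - (c1 + c0) * (ϑz (V ω) + ϑu (V ω)))| ≤ C := bddE_mul (bddE_const (1-b)) (bddE_sub (bddE_mul (bddE_add baz bau) (bddE_add (bddE_add (bddE_mul bva (bddE_const (1-c0-c1))) bvz) bvu)) (bddE_mul (bddE_const (c1+c0)) (bddE_add bvz bvu)))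
  have bI0c : ∃ C, ∀ ω, |b * (c0 * ϑu (V ω) - αu (V ω) * (ϑa (V ω) * (1 - c0) + ϑu (V ω)))| ≤ C := bddE_mul (bddE_const b) (bddE_sub (bddE_mul (bddE_const c0) bvu) (bddE_mul bau (bddE_add (bddE_mul bva (bddE_const (1-c0))) bvu)))
  have bGRc : ∃ C, ∀ ω, |(B ω - b) * (1 - (c1 * B ω + c0))| ≤ C := bddE_mul (bddE_sub bB (bddE_const b)) (bddE_sub (bddE_const 1) (bddE_add (bddE_mul (bddE_const c1) bB) (bddE_const c0)))
  have bI1Rc : ∃ C, ∀ ω, |(1 - b) * ((αz (V ω) + αu (V ω)) * (1 - c0 - c1))| ≤ C := bddE_mul (bddE_const (1-b)) (bddE_mul (bddE_add baz bau) (bddE_const (1-c0-c1)))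
  have bI0Rc : ∃ C, ∀ ω, |b * ((c0 - 1) * αu (V ω))| ≤ C := bddE_mul (bddE_const b) (bddE_mul (bddE_const (c0-1)) bau)
  have mGc : Measurable fun ω => (B ω - b) * (ϑa (V ω) * (1 - (c1 * B ω + c0)) + ϑz (V ω) * B ω + ϑu (V ω)) := by fun_prop
  have mHc : Measurable fun ω => -((B ω - b) * (c1 * B ω + c0) * (ϑz (V ω) * B ω + ϑu (V ω))) := by fun_prop
  have mI1c : Measurable fun ω => (1 - b) * ((αz (V ω) + αu (V ω)) * (ϑa (V ω) * (1 - c0 - c1) + ϑz (V ω) + ϑu (V ω)) - (c1 + c0) * (ϑz (V ω) + ϑu (V ω))) := by fun_prop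
  have mI0c : Measurable fun ω => b * (c0 * ϑu (V ω) - αu (V ω) * (ϑa (V ω) * (1 - c0) + ϑu (V ω))) := by fun_prop
  have mGRc : Measurable fun ω => (B ω - b) * (1 - (c1 * B ω + c0)) := by fun_prop
  have mI1Rc : Measurable fun ω => (1 - b) * ((αz (V ω) + αu (V ω)) * (1 - c0 - c1)) := by fun_prop
  have mI0Rc : Measurable fun ω => b * ((c0 - 1) * αu (V ω)) := by fun_prop
  have iAG : Integrable (fun ω => A ω * ((B ω - b) * (ϑa (V ω) * (1 - (c1 * B ω + c0)) + ϑz (V ω) * B ω + ϑu (V ω)))) μ := hInt (hA.mul mGc) (bddE_mul bA bGc)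
  have iH : Integrable (fun ω => -((B ω - b) * (c1 * B ω + c0) * (ϑz (V ω) * B ω + ϑu (V ω)))) μ := hInt mHc bHc
  have iKG : Integrable (fun ω => (αz (V ω) * B ω + αu (V ω)) * ((B ω - b) * (ϑa (V ω) * (1 - (c1 * B ω + c0)) + ϑz (V ω) * B ω + ϑu (V ω)))) μ :=
    hInt (((maz.mul hB).add mau).mul mGc) (bddE_mul (bddE_add (bddE_mul baz bB) bau) bGc)
  have iI1 : Integrable (fun ω => (1 - b) * ((αz (V ω) + αu (V ω)) * (ϑa (V ω) * (1 - c0 - c1) + ϑz (V ω) + ϑu (V ω)) - (c1 + c0) * (ϑz (V ω) + ϑu (V ω)))) μ := hInt mI1c bI1c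
  have iI0 : Integrable (fun ω => b * (c0 * ϑu (V ω) - αu (V ω) * (ϑa (V ω) * (1 - c0) + ϑu (V ω)))) μ := hInt mI0c bI0c
  have iBd : Integrable (fun ω => B ω * (((1 - b) * ((αz (V ω) + αu (V ω)) * (ϑa (V ω) * (1 - c0 - c1) + ϑz (V ω) + ϑu (V ω)) - (c1 + c0) * (ϑz (V ω) + ϑu (V ω)))) - (b * (c0 * ϑu (V ω) - αu (V ω) * (ϑa (V ω) * (1 - c0) + ϑu (V ω)))))) μ :=
    hInt (hB.mul (mI1c.sub mI0c)) (bddE_mul bB (bddE_sub bI1c bI0c))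
  have iAGR : Integrable (fun ω => A ω * ((B ω - b) * (1 - (c1 * B ω + c0)))) μ := hInt (hA.mul mGRc) (bddE_mul bA bGRc)
  have iKGR : Integrable (fun ω => (αz (V ω) * B ω + αu (V ω)) * ((B ω - b) * (1 - (c1 * B ω + c0)))) μ :=
    hInt (((maz.mul hB).add mau).mul mGRc) (bddE_mul (bddE_add (bddE_mul baz bB) bau) bGRc)
  have iI1R : Integrable (fun ω => (1 - b) * ((αz (V ω) + αu (V ω)) * (1 - c0 - c1))) μ := hInt mI1Rc bI1Rc
  have iI0R : Integrable (fun ω => b * ((c0 - 1) * αu (V ω))) μ := hInt mI0Rc bI0Rc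
  have iBdR : Integrable (fun ω => B ω * (((1 - b) * ((αz (V ω) + αu (V ω)) * (1 - c0 - c1))) - (b * ((c0 - 1) * αu (V ω))))) μ :=
    hInt (hB.mul (mI1Rc.sub mI0Rc)) (bddE_mul bB (bddE_sub bI1Rc bI0Rc))
  have hsubG : (∫ ω, A ω * ((B ω - b) * (ϑa (V ω) * (1 - (c1 * B ω + c0)) + ϑz (V ω) * B ω + ϑu (V ω))) ∂μ)
      = ∫ ω, (αz (V ω) * B ω + αu (V ω)) * ((B ω - b) * (ϑa (V ω) * (1 - (c1 * B ω + c0)) + ϑz (V ω) * B ω + ϑu (V ω))) ∂μ :=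
    hsub (fun p => (p.1 - b) * (ϑa p.2 * (1 - (c1 * p.1 + c0)) + ϑz p.2 * p.1 + ϑu p.2)) (by fun_prop) bGc
  have hsubGR : (∫ ω, A ω * ((B ω - b) * (1 - (c1 * B ω + c0))) ∂μ)
      = ∫ ω, (αz (V ω) * B ω + αu (V ω)) * ((B ω - b) * (1 - (c1 * B ω + c0))) ∂μ :=
    hsub (fun p => (p.1 - b) * (1 - (c1 * p.1 + c0))) (by fun_prop) bGRc
  have hfac : (∫ ω, B ω * (((1 - b) * ((αz (V ω) + αu (V ω)) * (ϑa (V ω) * (1 - c0 - c1) + ϑz (V ω) + ϑu (V ω)) - (c1 + c0) * (ϑz (V ω) + ϑu (V ω)))) - (b * (c0 * ϑu (V ω) - αu (V ω) * (ϑa (V ω) * (1 - c0) + ϑu (V ω))))) ∂μ)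
      = b * ∫ ω, (((1 - b) * ((αz (V ω) + αu (V ω)) * (ϑa (V ω) * (1 - c0 - c1) + ϑz (V ω) + ϑu (V ω)) - (c1 + c0) * (ϑz (V ω) + ϑu (V ω)))) - (b * (c0 * ϑu (V ω) - αu (V ω) * (ϑa (V ω) * (1 - c0) + ϑu (V ω))))) ∂μ :=
    int_factor hB hV hindep (fun v => ((1 - b) * ((αz v + αu v) * (ϑa v * (1 - c0 - c1) + ϑz v + ϑu v) - (c1 + c0) * (ϑz v + ϑu v))) - (b * (c0 * ϑu v - αu v * (ϑa v * (1 - c0) + ϑu v)))) (by fun_prop)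
  have hfacR : (∫ ω, B ω * (((1 - b) * ((αz (V ω) + αu (V ω)) * (1 - c0 - c1))) - (b * ((c0 - 1) * αu (V ω)))) ∂μ)
      = b * ∫ ω, (((1 - b) * ((αz (V ω) + αu (V ω)) * (1 - c0 - c1))) - (b * ((c0 - 1) * αu (V ω)))) ∂μ :=
    int_factor hB hV hindep (fun v => ((1 - b) * ((αz v + αu v) * (1 - c0 - c1))) - (b * ((c0 - 1) * αu v))) (by fun_prop)
  have hLHS : (∫ ω, (B ω - b) * (A ω - (μ[A|(MeasurableSpace.comap B inferInstance)]) ω)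
        * (A ω * ϑa (V ω) + ϑz (V ω) * B ω + ϑu (V ω)) ∂μ)
      = b * ((∫ ω, (1 - b) * ((αz (V ω) + αu (V ω)) * (ϑa (V ω) * (1 - c0 - c1) + ϑz (V ω) + ϑu (V ω)) - (c1 + c0) * (ϑz (V ω) + ϑu (V ω))) ∂μ) - ∫ ω, b * (c0 * ϑu (V ω) - αu (V ω) * (ϑa (V ω) * (1 - c0) + ϑu (V ω))) ∂μ) + ∫ ω, b * (c0 * ϑu (V ω) - αu (V ω) * (ϑa (V ω) * (1 - c0) + ϑu (V ω))) ∂μ := by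
    calc (∫ ω, (B ω - b) * (A ω - (μ[A|(MeasurableSpace.comap B inferInstance)]) ω)
        * (A ω * ϑa (V ω) + ϑz (V ω) * B ω + ϑu (V ω)) ∂μ)
        = ∫ ω, (B ω - b) * (A ω - (c1 * B ω + c0))
            * (A ω * ϑa (V ω) + ϑz (V ω) * B ω + ϑu (V ω)) ∂μ := by
          refine integral_congr_ae ?_
          filter_upwards [hM] with ω h
          rw [h]
      _ = ∫ ω, (A ω * ((B ω - b) * (ϑa (V ω) * (1 - (c1 * B ω + c0)) + ϑz (V ω) * B ω + ϑu (V ω))) + (-((B ω - b) * (c1 * B ω + c0) * (ϑz (V ω) * B ω + ϑu (V ω))))) ∂μ :=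
          by
          refine integral_congr_ae ?_
          filter_upwards with ω
          rcases hA01 ω with h | h <;> rw [h] <;> ring
      _ = (∫ ω, A ω * ((B ω - b) * (ϑa (V ω) * (1 - (c1 * B ω + c0)) + ϑz (V ω) * B ω + ϑu (V ω))) ∂μ) + ∫ ω, -((B ω - b) * (c1 * B ω + c0) * (ϑz (V ω) * B ω + ϑu (V ω))) ∂μ := integral_add iAG iH
      _ = (∫ ω, (αz (V ω) * B ω + αu (V ω)) * ((B ω - b) * (ϑa (V ω) * (1 - (c1 * B ω + c0)) + ϑz (V ω) * B ω + ϑu (V ω))) ∂μ) + ∫ ω, -((B ω - b) * (c1 * B ω + c0) * (ϑz (V ω) * B ω + ϑu (V ω))) ∂μ := by rw [hsubG]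
      _ = ∫ ω, ((αz (V ω) * B ω + αu (V ω)) * ((B ω - b) * (ϑa (V ω) * (1 - (c1 * B ω + c0)) + ϑz (V ω) * B ω + ϑu (V ω))) + (-((B ω - b) * (c1 * B ω + c0) * (ϑz (V ω) * B ω + ϑu (V ω))))) ∂μ := (integral_add iKG iH).symm
      _ = ∫ ω, (B ω * (((1 - b) * ((αz (V ω) + αu (V ω)) * (ϑa (V ω) * (1 - c0 - c1) + ϑz (V ω) + ϑu (V ω)) - (c1 + c0) * (ϑz (V ω) + ϑu (V ω)))) - (b * (c0 * ϑu (V ω) - αu (V ω) * (ϑa (V ω) * (1 - c0) + ϑu (V ω))))) + (b * (c0 * ϑu (V ω) - αu (V ω) * (ϑa (V ω) * (1 - c0) + ϑu (V ω))))) ∂μ :=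
          by
          refine integral_congr_ae ?_
          filter_upwards with ω
          rcases hB01 ω with h | h <;> rw [h] <;> ring
      _ = (∫ ω, B ω * (((1 - b) * ((αz (V ω) + αu (V ω)) * (ϑa (V ω) * (1 - c0 - c1) + ϑz (V ω) + ϑu (V ω)) - (c1 + c0) * (ϑz (V ω) + ϑu (V ω)))) - (b * (c0 * ϑu (V ω) - αu (V ω) * (ϑa (V ω) * (1 - c0) + ϑu (V ω))))) ∂μ) + ∫ ω, b * (c0 * ϑu (V ω) - αu (V ω) * (ϑa (V ω) * (1 - c0) + ϑu (V ω))) ∂μ := integral_add iBd iI0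
      _ = b * (∫ ω, (((1 - b) * ((αz (V ω) + αu (V ω)) * (ϑa (V ω) * (1 - c0 - c1) + ϑz (V ω) + ϑu (V ω)) - (c1 + c0) * (ϑz (V ω) + ϑu (V ω)))) - (b * (c0 * ϑu (V ω) - αu (V ω) * (ϑa (V ω) * (1 - c0) + ϑu (V ω))))) ∂μ) + ∫ ω, b * (c0 * ϑu (V ω) - αu (V ω) * (ϑa (V ω) * (1 - c0) + ϑu (V ω))) ∂μ := by rw [hfac]
      _ = b * ((∫ ω, (1 - b) * ((αz (V ω) + αu (V ω)) * (ϑa (V ω) * (1 - c0 - c1) + ϑz (V ω) + ϑu (V ω)) - (c1 + c0) * (ϑz (V ω) + ϑu (V ω))) ∂μ) - ∫ ω, b * (c0 * ϑu (V ω) - αu (V ω) * (ϑa (V ω) * (1 - c0) + ϑu (V ω))) ∂μ) + ∫ ω, b * (c0 * ϑu (V ω) - αu (V ω) * (ϑa (V ω) * (1 - c0) + ϑu (V ω))) ∂μ := by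
          rw [integral_sub iI1 iI0]
  have hRHS : (∫ ω, (B ω - b) * (A ω - (μ[A|(MeasurableSpace.comap B inferInstance)]) ω) * A ω ∂μ)
      = b * ((∫ ω, (1 - b) * ((αz (V ω) + αu (V ω)) * (1 - c0 - c1)) ∂μ) - ∫ ω, b * ((c0 - 1) * αu (V ω)) ∂μ) + ∫ ω, b * ((c0 - 1) * αu (V ω)) ∂μ := by
    calc (∫ ω, (B ω - b) * (A ω - (μ[A|(MeasurableSpace.comap B inferInstance)]) ω) * A ω ∂μ)
        = ∫ ω, (B ω - b) * (A ω - (c1 * B ω + c0)) * A ω ∂μ := by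
          refine integral_congr_ae ?_
          filter_upwards [hM] with ω h
          rw [h]
      _ = ∫ ω, A ω * ((B ω - b) * (1 - (c1 * B ω + c0))) ∂μ :=
          by
          refine integral_congr_ae ?_
          filter_upwards with ω
          rcases hA01 ω with h | h <;> rw [h] <;> ring
      _ = ∫ ω, (αz (V ω) * B ω + αu (V ω)) * ((B ω - b) * (1 - (c1 * B ω + c0))) ∂μ := hsubGR
      _ = ∫ ω, (B ω * (((1 - b) * ((αz (V ω) + αu (V ω)) * (1 - c0 - c1))) - (b * ((c0 - 1) * αu (V ω)))) + (b * ((c0 - 1) * αu (V ω)))) ∂μ :=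
          by
          refine integral_congr_ae ?_
          filter_upwards with ω
          rcases hB01 ω with h | h <;> rw [h] <;> ring
      _ = (∫ ω, B ω * (((1 - b) * ((αz (V ω) + αu (V ω)) * (1 - c0 - c1))) - (b * ((c0 - 1) * αu (V ω)))) ∂μ) + ∫ ω, b * ((c0 - 1) * αu (V ω)) ∂μ :=
          integral_add iBdR iI0R
      _ = b * (∫ ω, (((1 - b) * ((αz (V ω) + αu (V ω)) * (1 - c0 - c1))) - (b * ((c0 - 1) * αu (V ω)))) ∂μ) + ∫ ω, b * ((c0 - 1) * αu (V ω)) ∂μ := by rw [hfacR]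
      _ = b * ((∫ ω, (1 - b) * ((αz (V ω) + αu (V ω)) * (1 - c0 - c1)) ∂μ) - ∫ ω, b * ((c0 - 1) * αu (V ω)) ∂μ) + ∫ ω, b * ((c0 - 1) * αu (V ω)) ∂μ := by
          rw [integral_sub iI1R iI0R]
  have T8 : Integrable (fun ω => (-((1 - b) * (c1 + c0))) * (ϑu (V ω))) μ := hIphi8.const_mul _
  have T7 : Integrable (fun ω => (-((1 - b) * (c1 + c0))) * (ϑz (V ω)) + ((-((1 - b) * (c1 + c0))) * (ϑu (V ω)))) μ := (hIphi7.const_mul _).add T8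
  have T6 : Integrable (fun ω => (1 - b) * (αu (V ω) * ϑu (V ω)) + ((-((1 - b) * (c1 + c0))) * (ϑz (V ω)) + ((-((1 - b) * (c1 + c0))) * (ϑu (V ω))))) μ := (hIphi6.const_mul _).add T7
  have T5 : Integrable (fun ω => (1 - b) * (αz (V ω) * ϑu (V ω)) + ((1 - b) * (αu (V ω) * ϑu (V ω)) + ((-((1 - b) * (c1 + c0))) * (ϑz (V ω)) + ((-((1 - b) * (c1 + c0))) * (ϑu (V ω)))))) μ := (hIphi5.const_mul _).add T6
  have T4 : Integrable (fun ω => (1 - b) * (ϑz (V ω) * αu (V ω)) + ((1 - b) * (αz (V ω) * ϑu (V ω)) + ((1 - b) * (αu (V ω) * ϑu (V ω)) + ((-((1 - b) * (c1 + c0))) * (ϑz (V ω)) + ((-((1 - b) * (c1 + c0))) * (ϑu (V ω))))))) μ := (hIphi4.const_mul _).add T5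
  have T3 : Integrable (fun ω => (1 - b) * (ϑz (V ω) * αz (V ω)) + ((1 - b) * (ϑz (V ω) * αu (V ω)) + ((1 - b) * (αz (V ω) * ϑu (V ω)) + ((1 - b) * (αu (V ω) * ϑu (V ω)) + ((-((1 - b) * (c1 + c0))) * (ϑz (V ω)) + ((-((1 - b) * (c1 + c0))) * (ϑu (V ω)))))))) μ := (hIphi3.const_mul _).add T4
  have T2 : Integrable (fun ω => ((1 - b) * (1 - c0 - c1)) * (ϑa (V ω) * αu (V ω)) + ((1 - b) * (ϑz (V ω) * αz (V ω)) + ((1 - b) * (ϑz (V ω) * αu (V ω)) + ((1 - b) * (αz (V ω) * ϑu (V ω)) + ((1 - b) * (αu (V ω) * ϑu (V ω)) + ((-((1 - b) * (c1 + c0))) * (ϑz (V ω)) + ((-((1 - b) * (c1 + c0))) * (ϑu (V ω))))))))) μ := (hIphi2.const_mul _).add T3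
  have hJ1 : (∫ ω, (1 - b) * ((αz (V ω) + αu (V ω)) * (ϑa (V ω) * (1 - c0 - c1) + ϑz (V ω) + ϑu (V ω)) - (c1 + c0) * (ϑz (V ω) + ϑu (V ω))) ∂μ) = ((1 - b) * (1 - c0 - c1)) * (∫ ω, ϑa (V ω) * αz (V ω) ∂μ) + (((1 - b) * (1 - c0 - c1)) * (∫ ω, ϑa (V ω) * αu (V ω) ∂μ) + ((1 - b) * (∫ ω, ϑz (V ω) * αz (V ω) ∂μ) + ((1 - b) * (∫ ω, ϑz (V ω) * αu (V ω) ∂μ) + ((1 - b) * (∫ ω, αz (V ω) * ϑu (V ω) ∂μ) + ((1 - b) * (∫ ω, αu (V ω) * ϑu (V ω) ∂μ) + ((-((1 - b) * (c1 + c0))) * (∫ ω, ϑz (V ω) ∂μ) + ((-((1 - b) * (c1 + c0))) * (∫ ω, ϑu (V ω) ∂μ)))))))) := by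
    calc (∫ ω, (1 - b) * ((αz (V ω) + αu (V ω)) * (ϑa (V ω) * (1 - c0 - c1) + ϑz (V ω) + ϑu (V ω)) - (c1 + c0) * (ϑz (V ω) + ϑu (V ω))) ∂μ)
        = ∫ ω, (((1 - b) * (1 - c0 - c1)) * (ϑa (V ω) * αz (V ω)) + (((1 - b) * (1 - c0 - c1)) * (ϑa (V ω) * αu (V ω)) + ((1 - b) * (ϑz (V ω) * αz (V ω)) + ((1 - b) * (ϑz (V ω) * αu (V ω)) + ((1 - b) * (αz (V ω) * ϑu (V ω)) + ((1 - b) * (αu (V ω) * ϑu (V ω)) + ((-((1 - b) * (c1 + c0))) * (ϑz (V ω)) + ((-((1 - b) * (c1 + c0))) * (ϑu (V ω)))))))))) ∂μ :=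
          by
          refine integral_congr_ae ?_
          filter_upwards with ω
          ring
      _ = ((1 - b) * (1 - c0 - c1)) * (∫ ω, ϑa (V ω) * αz (V ω) ∂μ) + (((1 - b) * (1 - c0 - c1)) * (∫ ω, ϑa (V ω) * αu (V ω) ∂μ) + ((1 - b) * (∫ ω, ϑz (V ω) * αz (V ω) ∂μ) + ((1 - b) * (∫ ω, ϑz (V ω) * αu (V ω) ∂μ) + ((1 - b) * (∫ ω, αz (V ω) * ϑu (V ω) ∂μ) + ((1 - b) * (∫ ω, αu (V ω) * ϑu (V ω) ∂μ) + ((-((1 - b) * (c1 + c0))) * (∫ ω, ϑz (V ω) ∂μ) + ((-((1 - b) * (c1 + c0))) * (∫ ω, ϑu (V ω) ∂μ)))))))) := by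
          rw [int_comb _ hIphi1 T2, int_comb _ hIphi2 T3, int_comb _ hIphi3 T4,
            int_comb _ hIphi4 T5, int_comb _ hIphi5 T6, int_comb _ hIphi6 T7,
            int_comb _ hIphi7 T8, integral_const_mul]
  have S3 : Integrable (fun ω => (b * c0) * (ϑu (V ω))) μ := hIphi8.const_mul _
  have S2 : Integrable (fun ω => (-b) * (αu (V ω) * ϑu (V ω)) + ((b * c0) * (ϑu (V ω)))) μ := (hIphi6.const_mul _).add S3
  have hJ0 : (∫ ω, b * (c0 * ϑu (V ω) - αu (V ω) * (ϑa (V ω) * (1 - c0) + ϑu (V ω))) ∂μ) = (-(b * (1 - c0))) * (∫ ω, ϑa (V ω) * αu (V ω) ∂μ) + ((-b) * (∫ ω, αu (V ω) * ϑu (V ω) ∂μ) + ((b * c0) * (∫ ω, ϑu (V ω) ∂μ))) := by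
    calc (∫ ω, b * (c0 * ϑu (V ω) - αu (V ω) * (ϑa (V ω) * (1 - c0) + ϑu (V ω))) ∂μ)
        = ∫ ω, ((-(b * (1 - c0))) * (ϑa (V ω) * αu (V ω)) + ((-b) * (αu (V ω) * ϑu (V ω)) + ((b * c0) * (ϑu (V ω))))) ∂μ :=
          by
          refine integral_congr_ae ?_
          filter_upwards with ω
          ring
      _ = (-(b * (1 - c0))) * (∫ ω, ϑa (V ω) * αu (V ω) ∂μ) + ((-b) * (∫ ω, αu (V ω) * ϑu (V ω) ∂μ) + ((b * c0) * (∫ ω, ϑu (V ω) ∂μ))) := by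
          rw [int_comb _ hIphi2 S2, int_comb _ hIphi6 S3, integral_const_mul]
  have SR : Integrable (fun ω => ((1 - b) * (1 - c0 - c1)) * (αu (V ω))) μ := hIau.const_mul _
  have hJ1R : (∫ ω, (1 - b) * ((αz (V ω) + αu (V ω)) * (1 - c0 - c1)) ∂μ) = ((1 - b) * (1 - c0 - c1)) * c1 + ((1 - b) * (1 - c0 - c1)) * c0 := by
    calc (∫ ω, (1 - b) * ((αz (V ω) + αu (V ω)) * (1 - c0 - c1)) ∂μ)
        = ∫ ω, (((1 - b) * (1 - c0 - c1)) * (αz (V ω)) + (((1 - b) * (1 - c0 - c1)) * (αu (V ω)))) ∂μ :=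
          by
          refine integral_congr_ae ?_
          filter_upwards with ω
          ring
      _ = ((1 - b) * (1 - c0 - c1)) * c1 + ((1 - b) * (1 - c0 - c1)) * c0 := by
          rw [int_comb _ hIaz SR, integral_const_mul, ← hc1def, ← hc0def]
  have hJ0R : (∫ ω, b * ((c0 - 1) * αu (V ω)) ∂μ) = (b * (c0 - 1)) * c0 := by
    calc (∫ ω, b * ((c0 - 1) * αu (V ω)) ∂μ)
        = ∫ ω, (b * (c0 - 1)) * αu (V ω) ∂μ :=
          by
          refine integral_congr_ae ?_
          filter_upwards with ω
          ring
      _ = (b * (c0 - 1)) * c0 := by rw [integral_const_mul, ← hc0def]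
  have hE1 : (∫ ω, ϑa (V ω) * αz (V ω) ∂μ) = ta * c1 := by
    have h := horth1
    simp only [covE] at h
    rw [← htadef, ← hc1def] at h
    linarith
  have hE2 : (∫ ω, ϑa (V ω) * αu (V ω) ∂μ) = ta * c0 := by
    have h := horth2
    simp only [covE] at h
    rw [← htadef, ← hc0def] at h
    linarith
  have hE3 : (∫ ω, ϑz (V ω) * αz (V ω) ∂μ) = (∫ ω, ϑz (V ω) ∂μ) * c1 := by
    have h := horth3
    simp only [covE] at h
    rw [← hc1def] at h
    linarith
  have hE4 : (∫ ω, ϑz (V ω) * αu (V ω) ∂μ) = (∫ ω, ϑz (V ω) ∂μ) * c0 := by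
    have h := horth4
    simp only [covE] at h
    rw [← hc0def] at h
    linarith
  have hE5 : (∫ ω, αz (V ω) * ϑu (V ω) ∂μ) = c1 * (∫ ω, ϑu (V ω) ∂μ) := by
    have h := horth5
    simp only [covE] at h
    rw [← hc1def] at h
    linarith
  rw [hLHS, hRHS, hJ1, hJ0, hJ1R, hJ0R, hE1, hE2, hE3, hE4, hE5]
  ring
end

section
/- Lemma 4 (first identification equation): under the outcome model, the treatment model, IV independence, and the orthogonality conditions (Assumption 2(c), unconditional form), it holds that E[(B − E[B])·(A − E[A|B])·Y] = E[(B − E[B])·(A − E[A|B])·A]·E[ϑ_a(V)] + E[B·(B − E[B])·(A − E[A|B])·A]·E[ϑ_az(V)]. -/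
open MeasureTheory ProbabilityTheory

lemma my_absmul {a b Ca Cb : ℝ} (ha : |a| ≤ Ca) (hb : |b| ≤ Cb) : |a * b| ≤ Ca * Cb := by
  rw [abs_mul]
  exact mul_le_mul ha hb (abs_nonneg _) ((abs_nonneg _).trans ha)

lemma my_bdd01 {Ω : Type*} {B : Ω → ℝ} (hB01 : ∀ ω, B ω = 0 ∨ B ω = 1) (p : ℝ → ℝ) :
    ∀ ω, |p (B ω)| ≤ |p 0| + |p 1| := fun ω => by
  rcases hB01 ω with h | h <;> rw [h]
  · exact le_add_of_nonneg_right (abs_nonneg _)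
  · exact le_add_of_nonneg_left (abs_nonneg _)

lemma my_bdd01₂ {Ω : Type*} {A B : Ω → ℝ} (hA01 : ∀ ω, A ω = 0 ∨ A ω = 1)
    (hB01 : ∀ ω, B ω = 0 ∨ B ω = 1) (p : ℝ → ℝ → ℝ) :
    ∀ ω, |p (A ω) (B ω)| ≤ |p 0 0| + |p 0 1| + |p 1 0| + |p 1 1| := fun ω => by
  rcases hA01 ω with h | h <;> rcases hB01 ω with h' | h' <;> rw [h, h'] <;>
    nlinarith [abs_nonneg (p 0 0), abs_nonneg (p 0 1), abs_nonneg (p 1 0), abs_nonneg (p 1 1)]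

lemma my_int {Ω : Type*} {m0 : MeasurableSpace Ω} {μ : Measure Ω} [IsProbabilityMeasure μ]
    {f : Ω → ℝ} {C : ℝ} (hf : AEStronglyMeasurable f μ)
    (hb : ∀ ω, |f ω| ≤ C) : Integrable f μ :=
  Integrable.mono' (integrable_const C) hf (ae_of_all _ fun ω => by
    simpa [Real.norm_eq_abs] using hb ω)

lemma my_pull {Ω : Type*} {m0 : MeasurableSpace Ω} {μ : Measure Ω} [IsProbabilityMeasure μ]
    {m : MeasurableSpace Ω} (hm : m ≤ m0)
    {W Y h : Ω → ℝ} (hW : StronglyMeasurable[m] W) {C : ℝ}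
    (hWb : ∀ ω, |W ω| ≤ C) (hY : Integrable Y μ)
    (hh : μ[Y|m] =ᵐ[μ] h) :
    ∫ ω, W ω * Y ω ∂μ = ∫ ω, W ω * h ω ∂μ := by
  have hWm : AEStronglyMeasurable[m0] W μ := (hW.mono hm).aestronglyMeasurable
  have hint : Integrable (W * Y) μ :=
    hY.bdd_mul (c := C) hWm (ae_of_all _ fun ω => by simpa [Real.norm_eq_abs] using hWb ω)
  calc ∫ ω, W ω * Y ω ∂μ = ∫ ω, (μ[W * Y|m]) ω ∂μ := (integral_condExp hm).symm
    _ = ∫ ω, W ω * h ω ∂μ := by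
        refine integral_congr_ae ?_
        filter_upwards [condExp_mul_of_stronglyMeasurable_left hW hint hY, hh] with ω h1 h2
        rw [h1, Pi.mul_apply, h2]

lemma my_split {Ω 𝒱 : Type*} {m0 : MeasurableSpace Ω} [MeasurableSpace 𝒱]
    {μ : Measure Ω} [IsProbabilityMeasure μ]
    {V : Ω → 𝒱} {B : Ω → ℝ} (hindep : IndepFun B V μ)
    (hV : Measurable V) (hB : Measurable B)
    {q : 𝒱 → ℝ} {r : ℝ → ℝ} (hq : Measurable q) (hr : Measurable r)
    {Cq Cr : ℝ} (hqb : ∀ ω, |q (V ω)| ≤ Cq) (hrb : ∀ ω, |r (B ω)| ≤ Cr) :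
    ∫ ω, q (V ω) * r (B ω) ∂μ = (∫ ω, q (V ω) ∂μ) * ∫ ω, r (B ω) ∂μ := by
  have h := (hindep.symm.comp hq hr).integral_mul_eq_mul_integral
    (my_int ((hq.comp hV).aestronglyMeasurable) hqb).aestronglyMeasurable
    (my_int ((hr.comp hB).aestronglyMeasurable) hrb).aestronglyMeasurable
  simpa [Function.comp] using h

lemma my_L1 {Ω 𝒱 : Type*} {m0 : MeasurableSpace Ω} [MeasurableSpace 𝒱]
    {μ : Measure Ω} [IsProbabilityMeasure μ]
    {V : Ω → 𝒱} {A B : Ω → ℝ}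
    (hV : Measurable V) (hA : Measurable A) (hB : Measurable B)
    (hA01 : ∀ ω, A ω = 0 ∨ A ω = 1)
    {αz αu : 𝒱 → ℝ} (hαzm : Measurable αz) (hαum : Measurable αu)
    {Cz Cu : ℝ} (hαzb : ∀ x, |αz x| ≤ Cz) (hαub : ∀ x, |αu x| ≤ Cu)
    (htreat : μ[A | MeasurableSpace.comap (fun ω => (B ω, V ω)) inferInstance]
        =ᵐ[μ] fun ω => αz (V ω) * B ω + αu (V ω))
    (hindep : IndepFun B V μ)
    {f : 𝒱 → ℝ} {p : ℝ → ℝ} (hf : Measurable f) (hp : Measurable p)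
    {Cf Cp CB : ℝ} (hfb : ∀ x, |f x| ≤ Cf) (hpb : ∀ ω, |p (B ω)| ≤ Cp)
    (hBb : ∀ ω, |B ω| ≤ CB) :
    ∫ ω, f (V ω) * p (B ω) * A ω ∂μ
      = (∫ ω, f (V ω) * αz (V ω) ∂μ) * (∫ ω, p (B ω) * B ω ∂μ)
        + (∫ ω, f (V ω) * αu (V ω) ∂μ) * (∫ ω, p (B ω) ∂μ) := by
  have hAb : ∀ ω, |A ω| ≤ 1 := fun ω => by rcases hA01 ω with h | h <;> simp [h]
  have hm2 : MeasurableSpace.comap (fun ω => (B ω, V ω)) inferInstance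
      ≤ m0 := (hB.prodMk hV).comap_le
  have hBV : Measurable[MeasurableSpace.comap (fun ω => (B ω, V ω)) inferInstance]
      (fun ω => (B ω, V ω)) := Measurable.of_comap_le le_rfl
  have hW : StronglyMeasurable[MeasurableSpace.comap (fun ω => (B ω, V ω)) inferInstance]
      (fun ω => f (V ω) * p (B ω)) :=
    (((hf.comp measurable_snd).mul (hp.comp measurable_fst)).comp hBV).stronglyMeasurable
  have hstep : ∫ ω, (f (V ω) * p (B ω)) * A ω ∂μ
      = ∫ ω, (f (V ω) * p (B ω)) * (αz (V ω) * B ω + αu (V ω)) ∂μ :=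
    my_pull hm2 hW (C := Cf * Cp)
      (fun ω => my_absmul (hfb _) (hpb ω))
      (my_int hA.aestronglyMeasurable hAb) htreat
  have int1 : Integrable (fun ω => (f (V ω) * αz (V ω)) * (p (B ω) * B ω)) μ :=
    my_int ((((hf.comp hV).mul (hαzm.comp hV)).mul ((hp.comp hB).mul hB)).aestronglyMeasurable)
      (C := (Cf * Cz) * (Cp * CB))
      (fun ω => my_absmul (my_absmul (hfb _) (hαzb _)) (my_absmul (hpb ω) (hBb ω)))
  have int2 : Integrable (fun ω => (f (V ω) * αu (V ω)) * p (B ω)) μ :=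
    my_int ((((hf.comp hV).mul (hαum.comp hV)).mul (hp.comp hB)).aestronglyMeasurable)
      (C := (Cf * Cu) * Cp)
      (fun ω => my_absmul (my_absmul (hfb _) (hαub _)) (hpb ω))
  have h2 : ∫ ω, (f (V ω) * p (B ω)) * (αz (V ω) * B ω + αu (V ω)) ∂μ
      = (∫ ω, (f (V ω) * αz (V ω)) * (p (B ω) * B ω) ∂μ)
        + ∫ ω, (f (V ω) * αu (V ω)) * p (B ω) ∂μ := by
    rw [← integral_add int1 int2]
    exact integral_congr_ae (ae_of_all _ fun ω => by ring)
  rw [hstep, h2,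
    my_split hindep hV hB (q := fun v => f v * αz v) (r := fun x => p x * x)
      (hf.mul hαzm) (hp.mul measurable_id)
      (Cq := Cf * Cz) (Cr := Cp * CB)
      (fun ω => my_absmul (hfb _) (hαzb _)) (fun ω => my_absmul (hpb ω) (hBb ω)),
    my_split hindep hV hB (q := fun v => f v * αu v) (r := p)
      (hf.mul hαum) hp
      (Cq := Cf * Cu) (Cr := Cp)
      (fun ω => my_absmul (hfb _) (hαub _)) hpb]

lemma my_condexpB {Ω 𝒱 : Type*} {m0 : MeasurableSpace Ω} [MeasurableSpace 𝒱]
    {μ : Measure Ω} [IsProbabilityMeasure μ]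
    {V : Ω → 𝒱} {A B : Ω → ℝ}
    (hV : Measurable V) (hB : Measurable B)
    (hB01 : ∀ ω, B ω = 0 ∨ B ω = 1)
    {αz αu : 𝒱 → ℝ} (hαzm : Measurable αz) (hαum : Measurable αu)
    {Cz Cu : ℝ} (hαzb : ∀ x, |αz x| ≤ Cz) (hαub : ∀ x, |αu x| ≤ Cu)
    (htreat : μ[A | MeasurableSpace.comap (fun ω => (B ω, V ω)) inferInstance]
        =ᵐ[μ] fun ω => αz (V ω) * B ω + αu (V ω))
    (hindep : IndepFun B V μ) :
    μ[A | MeasurableSpace.comap B inferInstance]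
      =ᵐ[μ] fun ω => (∫ x, αz (V x) ∂μ) * B ω + ∫ x, αu (V x) ∂μ := by
  have hBb : ∀ ω, |B ω| ≤ 1 := fun ω => by rcases hB01 ω with h | h <;> simp [h]
  set m2 := MeasurableSpace.comap (fun ω => (B ω, V ω)) inferInstance with hm2def
  set mB := MeasurableSpace.comap B inferInstance with hmBdef
  have hm2 : m2 ≤ m0 := (hB.prodMk hV).comap_le
  have hmB : mB ≤ m0 := hB.comap_le
  have hle : mB ≤ m2 := by
    have h1 : B = (fun p : ℝ × 𝒱 => p.1) ∘ (fun ω => (B ω, V ω)) := rfl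
    calc mB = MeasurableSpace.comap (fun ω => (B ω, V ω))
          (MeasurableSpace.comap (fun p : ℝ × 𝒱 => p.1) inferInstance) := by
            rw [hmBdef, MeasurableSpace.comap_comp, ← h1]
      _ ≤ m2 := MeasurableSpace.comap_mono measurable_fst.comap_le
  have intzB : Integrable (fun ω => αz (V ω) * B ω) μ :=
    my_int (((hαzm.comp hV).mul hB).aestronglyMeasurable)
      (C := Cz * 1) (fun ω => my_absmul (hαzb _) (hBb ω))
  have intu : Integrable (fun ω => αu (V ω)) μ :=
    my_int ((hαum.comp hV).aestronglyMeasurable) (fun ω => hαub _)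
  have intz : Integrable (fun ω => αz (V ω)) μ :=
    my_int ((hαzm.comp hV).aestronglyMeasurable) (fun ω => hαzb _)
  have hBmB : StronglyMeasurable[mB] B :=
    (Measurable.of_comap_le le_rfl).stronglyMeasurable
  have hindp : Indep (MeasurableSpace.comap V inferInstance) mB μ :=
    (ProbabilityTheory.IndepFun_iff_Indep V B μ).mp hindep.symm
  have hz : μ[(fun ω => αz (V ω)) | mB] =ᵐ[μ] fun _ => ∫ x, αz (V x) ∂μ :=
    condExp_indep_eq hV.comap_le hmB
      ((hαzm.comp (Measurable.of_comap_le le_rfl)).stronglyMeasurable) hindp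
  have hu : μ[(fun ω => αu (V ω)) | mB] =ᵐ[μ] fun _ => ∫ x, αu (V x) ∂μ :=
    condExp_indep_eq hV.comap_le hmB
      ((hαum.comp (Measurable.of_comap_le le_rfl)).stronglyMeasurable) hindp
  have hmulz : μ[B * (fun ω => αz (V ω)) | mB] =ᵐ[μ] B * μ[(fun ω => αz (V ω)) | mB] :=
    condExp_mul_of_stronglyMeasurable_left hBmB
      (by
        have : (B * fun ω => αz (V ω)) = fun ω => αz (V ω) * B ω := by
          funext ω; exact mul_comm _ _
        rw [this]; exact intzB)
      intz
  have step1 : μ[A | mB] =ᵐ[μ]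
      μ[(fun ω => αz (V ω) * B ω) + (fun ω => αu (V ω)) | mB] :=
    (condExp_condExp_of_le hle hm2).symm.trans (condExp_congr_ae htreat)
  have step2 : μ[(fun ω => αz (V ω) * B ω) + (fun ω => αu (V ω)) | mB]
      =ᵐ[μ] μ[(fun ω => αz (V ω) * B ω) | mB] + μ[(fun ω => αu (V ω)) | mB] :=
    condExp_add intzB intu mB
  have step3 : μ[(fun ω => αz (V ω) * B ω) | mB] =ᵐ[μ] μ[B * (fun ω => αz (V ω)) | mB] :=
    condExp_congr_ae (ae_of_all _ fun ω => mul_comm _ _)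
  filter_upwards [step1, step2, step3, hmulz, hz, hu] with ω h1 h2 h3 h4 h5 h6
  rw [h1, h2, Pi.add_apply, h3, h4, Pi.mul_apply, h5, h6, mul_comm]

/-- Lemma 4 (first identification equation):
`E[(B − E[B])·(A − E[A|B])·Y]
  = E[(B − E[B])·(A − E[A|B])·A]·E[ϑ_a(V)] + E[B·(B − E[B])·(A − E[A|B])·A]·E[ϑ_az(V)]`. -/
theorem lemma4_first_identification_equation
    {Ω 𝒱 : Type*} [MeasurableSpace Ω] [MeasurableSpace 𝒱]
    (μ : Measure Ω) [IsProbabilityMeasure μ]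
    (V : Ω → 𝒱) (A B : Ω → ℝ)
    (hV : Measurable V) (hA : Measurable A) (hB : Measurable B)
    (hA01 : ∀ ω, A ω = 0 ∨ A ω = 1) (hB01 : ∀ ω, B ω = 0 ∨ B ω = 1)
    (αz αu : 𝒱 → ℝ) (hαzm : Measurable αz) (hαum : Measurable αu)
    (hαzb : ∃ C, ∀ x, |αz x| ≤ C) (hαub : ∃ C, ∀ x, |αu x| ≤ C)
    (htreat : μ[A | MeasurableSpace.comap (fun ω => (B ω, V ω)) inferInstance]
        =ᵐ[μ] fun ω => αz (V ω) * B ω + αu (V ω))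
    (hindep : IndepFun B V μ)
    (Y : Ω → ℝ) (hY : Integrable Y μ)
    (ϑa ϑz ϑaz ϑu : 𝒱 → ℝ)
    (hϑam : Measurable ϑa) (hϑzm : Measurable ϑz)
    (hϑazm : Measurable ϑaz) (hϑum : Measurable ϑu)
    (hϑab : ∃ C, ∀ x, |ϑa x| ≤ C) (hϑzb : ∃ C, ∀ x, |ϑz x| ≤ C)
    (hϑazb : ∃ C, ∀ x, |ϑaz x| ≤ C) (hϑub : ∃ C, ∀ x, |ϑu x| ≤ C)
    (houtcome : μ[Y | MeasurableSpace.comap (fun ω => (V ω, A ω, B ω)) inferInstance]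
        =ᵐ[μ] fun ω => ϑa (V ω) * A ω + ϑz (V ω) * B ω + ϑaz (V ω) * A ω * B ω + ϑu (V ω))
    (horth1 : covE μ (fun x => ϑa (V x)) (fun x => αz (V x)) = 0)
    (horth2 : covE μ (fun x => ϑa (V x)) (fun x => αu (V x)) = 0)
    (horth3 : covE μ (fun x => ϑz (V x)) (fun x => αz (V x)) = 0)
    (horth4 : covE μ (fun x => ϑz (V x)) (fun x => αu (V x)) = 0)
    (horth5 : covE μ (fun x => ϑaz (V x)) (fun x => αz (V x)) = 0)
    (horth6 : covE μ (fun x => ϑaz (V x)) (fun x => αu (V x)) = 0)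
    (horth7 : covE μ (fun x => αz (V x)) (fun x => ϑu (V x)) = 0)
    :
    (∫ ω, (B ω - ∫ x, B x ∂μ)
        * (A ω - (μ[A | MeasurableSpace.comap B inferInstance]) ω) * Y ω ∂μ)
      = (∫ ω, (B ω - ∫ x, B x ∂μ)
          * (A ω - (μ[A | MeasurableSpace.comap B inferInstance]) ω) * A ω ∂μ)
          * (∫ ω, ϑa (V ω) ∂μ)
        + (∫ ω, B ω * (B ω - ∫ x, B x ∂μ)
            * (A ω - (μ[A | MeasurableSpace.comap B inferInstance]) ω) * A ω ∂μ)
          * (∫ ω, ϑaz (V ω) ∂μ) := by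
  obtain ⟨Cz, hCz⟩ := hαzb
  obtain ⟨Cu, hCu⟩ := hαub
  obtain ⟨Ca, hCa⟩ := hϑab
  obtain ⟨Ctz, hCtz⟩ := hϑzb
  obtain ⟨Caz, hCaz⟩ := hϑazb
  obtain ⟨Ctu, hCtu⟩ := hϑub
  have hAb : ∀ ω, |A ω| ≤ 1 := fun ω => by rcases hA01 ω with h | h <;> simp [h]
  have hBb : ∀ ω, |B ω| ≤ 1 := fun ω => by rcases hB01 ω with h | h <;> simp [h]
  set b := ∫ x, B x ∂μ with hbdef
  set νz := ∫ x, αz (V x) ∂μ with hνzdef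
  set νu := ∫ x, αu (V x) ∂μ with hνudef
  have hg : μ[A | MeasurableSpace.comap B inferInstance]
      =ᵐ[μ] fun ω => νz * B ω + νu :=
    my_condexpB hV hB hB01 hαzm hαum hCz hCu htreat hindep
  -- polynomial measurability
  have mp1 : Measurable fun x : ℝ => (x - b) * (1 - (νz * x + νu)) := by fun_prop
  have mp2 : Measurable fun x : ℝ => (x - b) * x := by fun_prop
  have mp3 : Measurable fun x : ℝ => (x - b) * (1 - (νz * x + νu)) * x := by fun_prop
  have mp4 : Measurable fun x : ℝ => x - b := by fun_prop
  have mr2 : Measurable fun x : ℝ => (x - b) * x * (νz * x + νu) := by fun_prop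
  have mr4 : Measurable fun x : ℝ => (x - b) * (νz * x + νu) := by fun_prop
  -- replace conditional expectation by explicit form
  have hL : ∫ ω, (B ω - b) * (A ω - (μ[A | MeasurableSpace.comap B inferInstance]) ω) * Y ω ∂μ
      = ∫ ω, (B ω - b) * (A ω - (νz * B ω + νu)) * Y ω ∂μ :=
    integral_congr_ae (by filter_upwards [hg] with ω h; rw [h])
  have hRA : ∫ ω, (B ω - b) * (A ω - (μ[A | MeasurableSpace.comap B inferInstance]) ω) * A ω ∂μ
      = ∫ ω, (B ω - b) * (1 - (νz * B ω + νu)) * A ω ∂μ :=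
    integral_congr_ae (by
      filter_upwards [hg] with ω h
      rw [h]; rcases hA01 ω with h' | h' <;> rw [h'] <;> ring)
  have hRB : ∫ ω, B ω * (B ω - b) * (A ω - (μ[A | MeasurableSpace.comap B inferInstance]) ω) * A ω ∂μ
      = ∫ ω, (B ω - b) * (1 - (νz * B ω + νu)) * B ω * A ω ∂μ :=
    integral_congr_ae (by
      filter_upwards [hg] with ω h
      rw [h]; rcases hA01 ω with h' | h' <;> rw [h'] <;> ring)
  -- pull out the outcome model
  have hm1 : MeasurableSpace.comap (fun ω => (V ω, A ω, B ω)) inferInstance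
      ≤ ‹MeasurableSpace Ω› := (hV.prodMk (hA.prodMk hB)).comap_le
  have hWm : StronglyMeasurable[MeasurableSpace.comap (fun ω => (V ω, A ω, B ω)) inferInstance]
      (fun ω => (B ω - b) * (A ω - (νz * B ω + νu))) := by
    have hVAB : Measurable[MeasurableSpace.comap (fun ω => (V ω, A ω, B ω)) inferInstance]
        (fun ω => (V ω, A ω, B ω)) := Measurable.of_comap_le le_rfl
    have hφ : Measurable fun x : 𝒱 × ℝ × ℝ => (x.2.2 - b) * (x.2.1 - (νz * x.2.2 + νu)) := by
      fun_prop
    exact (hφ.comp hVAB).stronglyMeasurable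
  have hPull : ∫ ω, (B ω - b) * (A ω - (νz * B ω + νu)) * Y ω ∂μ
      = ∫ ω, (B ω - b) * (A ω - (νz * B ω + νu))
          * (ϑa (V ω) * A ω + ϑz (V ω) * B ω + ϑaz (V ω) * A ω * B ω + ϑu (V ω)) ∂μ :=
    my_pull hm1 hWm
      (my_bdd01₂ hA01 hB01 (fun a x => (x - b) * (a - (νz * x + νu)))) hY houtcome
  -- integrability of the six terms
  have i1 : Integrable (fun ω => ϑa (V ω) * ((B ω - b) * (1 - (νz * B ω + νu))) * A ω) μ :=
    my_int (((hϑam.comp hV).mul (mp1.comp hB)).mul hA).aestronglyMeasurable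
      (fun ω => my_absmul
        (my_absmul (hCa _) (my_bdd01 hB01 (fun x => (x - b) * (1 - (νz * x + νu))) ω)) (hAb ω))
  have i2 : Integrable (fun ω => ϑz (V ω) * ((B ω - b) * B ω) * A ω) μ :=
    my_int (((hϑzm.comp hV).mul (mp2.comp hB)).mul hA).aestronglyMeasurable
      (fun ω => my_absmul
        (my_absmul (hCtz _) (my_bdd01 hB01 (fun x => (x - b) * x) ω)) (hAb ω))
  have i3 : Integrable (fun ω => ϑz (V ω) * ((B ω - b) * B ω * (νz * B ω + νu))) μ :=
    my_int ((hϑzm.comp hV).mul (mr2.comp hB)).aestronglyMeasurable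
      (fun ω => my_absmul (hCtz _) (my_bdd01 hB01 (fun x => (x - b) * x * (νz * x + νu)) ω))
  have i4 : Integrable (fun ω => ϑaz (V ω) * ((B ω - b) * (1 - (νz * B ω + νu)) * B ω) * A ω) μ :=
    my_int (((hϑazm.comp hV).mul (mp3.comp hB)).mul hA).aestronglyMeasurable
      (fun ω => my_absmul
        (my_absmul (hCaz _) (my_bdd01 hB01 (fun x => (x - b) * (1 - (νz * x + νu)) * x) ω))
        (hAb ω))
  have i5 : Integrable (fun ω => ϑu (V ω) * (B ω - b) * A ω) μ :=
    my_int (((hϑum.comp hV).mul (mp4.comp hB)).mul hA).aestronglyMeasurable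
      (fun ω => my_absmul
        (my_absmul (hCtu _) (my_bdd01 hB01 (fun x => x - b) ω)) (hAb ω))
  have i6 : Integrable (fun ω => ϑu (V ω) * ((B ω - b) * (νz * B ω + νu))) μ :=
    my_int ((hϑum.comp hV).mul (mr4.comp hB)).aestronglyMeasurable
      (fun ω => my_absmul (hCtu _) (my_bdd01 hB01 (fun x => (x - b) * (νz * x + νu)) ω))
  -- decompose into the six terms
  have hsum : ∫ ω, (B ω - b) * (A ω - (νz * B ω + νu))
          * (ϑa (V ω) * A ω + ϑz (V ω) * B ω + ϑaz (V ω) * A ω * B ω + ϑu (V ω)) ∂μ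
      = (((∫ ω, ϑa (V ω) * ((B ω - b) * (1 - (νz * B ω + νu))) * A ω ∂μ)
            + ∫ ω, ϑz (V ω) * ((B ω - b) * B ω) * A ω ∂μ)
          + ((∫ ω, ϑaz (V ω) * ((B ω - b) * (1 - (νz * B ω + νu)) * B ω) * A ω ∂μ)
            + ∫ ω, ϑu (V ω) * (B ω - b) * A ω ∂μ))
        - ((∫ ω, ϑz (V ω) * ((B ω - b) * B ω * (νz * B ω + νu)) ∂μ)
            + ∫ ω, ϑu (V ω) * ((B ω - b) * (νz * B ω + νu)) ∂μ) := by
    have is12 : Integrable (fun ω => ϑa (V ω) * ((B ω - b) * (1 - (νz * B ω + νu))) * A ω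
        + ϑz (V ω) * ((B ω - b) * B ω) * A ω) μ := i1.add i2
    have is45 : Integrable (fun ω => ϑaz (V ω) * ((B ω - b) * (1 - (νz * B ω + νu)) * B ω) * A ω
        + ϑu (V ω) * (B ω - b) * A ω) μ := i4.add i5
    have is1245 : Integrable (fun ω => (ϑa (V ω) * ((B ω - b) * (1 - (νz * B ω + νu))) * A ω
        + ϑz (V ω) * ((B ω - b) * B ω) * A ω)
        + (ϑaz (V ω) * ((B ω - b) * (1 - (νz * B ω + νu)) * B ω) * A ω
        + ϑu (V ω) * (B ω - b) * A ω)) μ := is12.add is45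
    have is36 : Integrable (fun ω => ϑz (V ω) * ((B ω - b) * B ω * (νz * B ω + νu))
        + ϑu (V ω) * ((B ω - b) * (νz * B ω + νu))) μ := i3.add i6
    calc ∫ ω, (B ω - b) * (A ω - (νz * B ω + νu))
          * (ϑa (V ω) * A ω + ϑz (V ω) * B ω + ϑaz (V ω) * A ω * B ω + ϑu (V ω)) ∂μ
        = ∫ ω, ((ϑa (V ω) * ((B ω - b) * (1 - (νz * B ω + νu))) * A ω
            + ϑz (V ω) * ((B ω - b) * B ω) * A ω)
            + (ϑaz (V ω) * ((B ω - b) * (1 - (νz * B ω + νu)) * B ω) * A ω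
            + ϑu (V ω) * (B ω - b) * A ω))
            - (ϑz (V ω) * ((B ω - b) * B ω * (νz * B ω + νu))
            + ϑu (V ω) * ((B ω - b) * (νz * B ω + νu))) ∂μ :=
          integral_congr_ae (ae_of_all _ fun ω => by
            rcases hA01 ω with h | h <;> simp only [h] <;> ring)
      _ = _ := by
          rw [integral_sub is1245 is36, integral_add is12 is45, integral_add i1 i2,
            integral_add i4 i5, integral_add i3 i6]
  -- identities for the six terms
  have E1 : ∫ ω, ϑa (V ω) * ((B ω - b) * (1 - (νz * B ω + νu))) * A ω ∂μ
      = (∫ ω, ϑa (V ω) * αz (V ω) ∂μ)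
          * (∫ ω, (B ω - b) * (1 - (νz * B ω + νu)) * B ω ∂μ)
        + (∫ ω, ϑa (V ω) * αu (V ω) ∂μ)
          * (∫ ω, (B ω - b) * (1 - (νz * B ω + νu)) ∂μ) :=
    my_L1 hV hA hB hA01 hαzm hαum hCz hCu htreat hindep hϑam mp1 hCa
      (my_bdd01 hB01 (fun x => (x - b) * (1 - (νz * x + νu)))) hBb
  have E2 : ∫ ω, ϑz (V ω) * ((B ω - b) * B ω) * A ω ∂μ
      = (∫ ω, ϑz (V ω) * αz (V ω) ∂μ) * (∫ ω, (B ω - b) * B ω * B ω ∂μ)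
        + (∫ ω, ϑz (V ω) * αu (V ω) ∂μ) * (∫ ω, (B ω - b) * B ω ∂μ) :=
    my_L1 hV hA hB hA01 hαzm hαum hCz hCu htreat hindep hϑzm mp2 hCtz
      (my_bdd01 hB01 (fun x => (x - b) * x)) hBb
  have E4 : ∫ ω, ϑaz (V ω) * ((B ω - b) * (1 - (νz * B ω + νu)) * B ω) * A ω ∂μ
      = (∫ ω, ϑaz (V ω) * αz (V ω) ∂μ)
          * (∫ ω, (B ω - b) * (1 - (νz * B ω + νu)) * B ω * B ω ∂μ)
        + (∫ ω, ϑaz (V ω) * αu (V ω) ∂μ)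
          * (∫ ω, (B ω - b) * (1 - (νz * B ω + νu)) * B ω ∂μ) :=
    my_L1 hV hA hB hA01 hαzm hαum hCz hCu htreat hindep hϑazm mp3 hCaz
      (my_bdd01 hB01 (fun x => (x - b) * (1 - (νz * x + νu)) * x)) hBb
  have E5 : ∫ ω, ϑu (V ω) * (B ω - b) * A ω ∂μ
      = (∫ ω, ϑu (V ω) * αz (V ω) ∂μ) * (∫ ω, (B ω - b) * B ω ∂μ)
        + (∫ ω, ϑu (V ω) * αu (V ω) ∂μ) * (∫ ω, B ω - b ∂μ) :=
    my_L1 hV hA hB hA01 hαzm hαum hCz hCu htreat hindep hϑum mp4 hCtu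
      (my_bdd01 hB01 (fun x => x - b)) hBb
  have E3 : ∫ ω, ϑz (V ω) * ((B ω - b) * B ω * (νz * B ω + νu)) ∂μ
      = (∫ ω, ϑz (V ω) ∂μ) * ∫ ω, (B ω - b) * B ω * (νz * B ω + νu) ∂μ :=
    my_split hindep hV hB hϑzm mr2 (fun ω => hCtz _)
      (my_bdd01 hB01 (fun x => (x - b) * x * (νz * x + νu)))
  have E6 : ∫ ω, ϑu (V ω) * ((B ω - b) * (νz * B ω + νu)) ∂μ
      = (∫ ω, ϑu (V ω) ∂μ) * ∫ ω, (B ω - b) * (νz * B ω + νu) ∂μ :=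
    my_split hindep hV hB hϑum mr4 (fun ω => hCtu _)
      (my_bdd01 hB01 (fun x => (x - b) * (νz * x + νu)))
  have ERHS1 : ∫ ω, (B ω - b) * (1 - (νz * B ω + νu)) * A ω ∂μ
      = νz * (∫ ω, (B ω - b) * (1 - (νz * B ω + νu)) * B ω ∂μ)
        + νu * (∫ ω, (B ω - b) * (1 - (νz * B ω + νu)) ∂μ) := by
    have h := my_L1 hV hA hB hA01 hαzm hαum hCz hCu htreat hindep
      (f := fun _ => (1 : ℝ)) measurable_const mp1 (Cf := 1)
      (fun x => by norm_num) (my_bdd01 hB01 (fun x => (x - b) * (1 - (νz * x + νu)))) hBb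
    simpa only [one_mul] using h
  have ERHS2 : ∫ ω, (B ω - b) * (1 - (νz * B ω + νu)) * B ω * A ω ∂μ
      = νz * (∫ ω, (B ω - b) * (1 - (νz * B ω + νu)) * B ω * B ω ∂μ)
        + νu * (∫ ω, (B ω - b) * (1 - (νz * B ω + νu)) * B ω ∂μ) := by
    have h := my_L1 hV hA hB hA01 hαzm hαum hCz hCu htreat hindep
      (f := fun _ => (1 : ℝ)) measurable_const mp3 (Cf := 1)
      (fun x => by norm_num) (my_bdd01 hB01 (fun x => (x - b) * (1 - (νz * x + νu)) * x)) hBb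
    simpa only [one_mul] using h
  -- linearity identities
  have ib1 : Integrable (fun ω => (B ω - b) * B ω * B ω) μ :=
    my_int (((by fun_prop : Measurable fun x : ℝ => (x - b) * x * x).comp hB).aestronglyMeasurable)
      (my_bdd01 hB01 (fun x => (x - b) * x * x))
  have ib2 : Integrable (fun ω => (B ω - b) * B ω) μ :=
    my_int ((mp2.comp hB).aestronglyMeasurable) (my_bdd01 hB01 (fun x => (x - b) * x))
  have ib3 : Integrable (fun ω => B ω - b) μ :=
    my_int ((mp4.comp hB).aestronglyMeasurable) (my_bdd01 hB01 (fun x => x - b))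
  have L2 : ∫ ω, (B ω - b) * B ω * (νz * B ω + νu) ∂μ
      = νz * (∫ ω, (B ω - b) * B ω * B ω ∂μ) + νu * ∫ ω, (B ω - b) * B ω ∂μ := by
    calc ∫ ω, (B ω - b) * B ω * (νz * B ω + νu) ∂μ
        = ∫ ω, νz * ((B ω - b) * B ω * B ω) + νu * ((B ω - b) * B ω) ∂μ :=
          integral_congr_ae (ae_of_all _ fun ω => by simp only []; ring)
      _ = νz * (∫ ω, (B ω - b) * B ω * B ω ∂μ) + νu * ∫ ω, (B ω - b) * B ω ∂μ := by
          rw [integral_add (ib1.const_mul νz) (ib2.const_mul νu),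
            integral_const_mul, integral_const_mul]
  have L4 : ∫ ω, (B ω - b) * (νz * B ω + νu) ∂μ
      = νz * (∫ ω, (B ω - b) * B ω ∂μ) + νu * ∫ ω, B ω - b ∂μ := by
    calc ∫ ω, (B ω - b) * (νz * B ω + νu) ∂μ
        = ∫ ω, νz * ((B ω - b) * B ω) + νu * (B ω - b) ∂μ :=
          integral_congr_ae (ae_of_all _ fun ω => by simp only []; ring)
      _ = νz * (∫ ω, (B ω - b) * B ω ∂μ) + νu * ∫ ω, B ω - b ∂μ := by
          rw [integral_add (ib2.const_mul νz) (ib3.const_mul νu),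
            integral_const_mul, integral_const_mul]
  have J0 : ∫ ω, B ω - b ∂μ = 0 := by
    rw [integral_sub (my_int hB.aestronglyMeasurable hBb) (integrable_const b),
      integral_const, probReal_univ, one_smul, ← hbdef, sub_self]
  -- orthogonality
  have o1 : ∫ ω, ϑa (V ω) * αz (V ω) ∂μ = (∫ ω, ϑa (V ω) ∂μ) * νz := by
    have h := horth1; simp only [covE] at h; rw [hνzdef]; linarith
  have o2 : ∫ ω, ϑa (V ω) * αu (V ω) ∂μ = (∫ ω, ϑa (V ω) ∂μ) * νu := by
    have h := horth2; simp only [covE] at h; rw [hνudef]; linarith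
  have o3 : ∫ ω, ϑz (V ω) * αz (V ω) ∂μ = (∫ ω, ϑz (V ω) ∂μ) * νz := by
    have h := horth3; simp only [covE] at h; rw [hνzdef]; linarith
  have o4 : ∫ ω, ϑz (V ω) * αu (V ω) ∂μ = (∫ ω, ϑz (V ω) ∂μ) * νu := by
    have h := horth4; simp only [covE] at h; rw [hνudef]; linarith
  have o5 : ∫ ω, ϑaz (V ω) * αz (V ω) ∂μ = (∫ ω, ϑaz (V ω) ∂μ) * νz := by
    have h := horth5; simp only [covE] at h; rw [hνzdef]; linarith
  have o6 : ∫ ω, ϑaz (V ω) * αu (V ω) ∂μ = (∫ ω, ϑaz (V ω) ∂μ) * νu := by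
    have h := horth6; simp only [covE] at h; rw [hνudef]; linarith
  have o7 : ∫ ω, ϑu (V ω) * αz (V ω) ∂μ = (∫ ω, ϑu (V ω) ∂μ) * νz := by
    have h := horth7; simp only [covE] at h
    have hc : ∫ ω, ϑu (V ω) * αz (V ω) ∂μ = ∫ ω, αz (V ω) * ϑu (V ω) ∂μ :=
      integral_congr_ae (ae_of_all _ fun ω => mul_comm _ _)
    rw [hνzdef, hc]; linarith
  rw [hL, hRA, hRB, hPull, hsum, E1, E2, E3, E4, E5, E6, ERHS1, ERHS2, L2, L4, J0,
    o1, o2, o3, o4, o5, o6, o7]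
  ring
end

section
/- Lemma 5 (second identification equation): under the outcome model, the treatment model, IV independence, and the orthogonality conditions (Assumption 2(c), unconditional form), it holds that E[(B − E[B])·Y] = E[A·(B − E[B])]·E[ϑ_a(V)] + E[B·(B − E[B])]·E[ϑ_z(V)] + E[A·B·(B − E[B])]·E[ϑ_az(V)]. -/
open MeasureTheory ProbabilityTheory

section Aux

variable {Ω : Type*} [mΩ : MeasurableSpace Ω] {μ : Measure Ω}

lemma bnd_mul {f g : Ω → ℝ} (hf : ∃ C, ∀ x, |f x| ≤ C) (hg : ∃ C, ∀ x, |g x| ≤ C) :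
    ∃ C, ∀ x, |f x * g x| ≤ C := by
  obtain ⟨C1, h1⟩ := hf; obtain ⟨C2, h2⟩ := hg
  exact ⟨C1 * C2, fun x => by
    rw [abs_mul]
    exact mul_le_mul (h1 x) (h2 x) (abs_nonneg _) ((abs_nonneg _).trans (h1 x))⟩

lemma bnd_sub {f g : Ω → ℝ} (hf : ∃ C, ∀ x, |f x| ≤ C) (hg : ∃ C, ∀ x, |g x| ≤ C) :
    ∃ C, ∀ x, |f x - g x| ≤ C := by
  obtain ⟨C1, h1⟩ := hf; obtain ⟨C2, h2⟩ := hg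
  exact ⟨C1 + C2, fun x => (abs_sub _ _).trans (add_le_add (h1 x) (h2 x))⟩

lemma bddInt [IsFiniteMeasure μ] {f : Ω → ℝ} (hf : Measurable f)
    (hb : ∃ C, ∀ x, |f x| ≤ C) : Integrable f μ := by
  obtain ⟨C, hC⟩ := hb
  exact (integrable_const C).mono' hf.aestronglyMeasurable
    (Filter.Eventually.of_forall fun x => by simpa using hC x)

/-- Pull-out / tower: `E[f·g] = E[f·h]` when `f` is `m`-measurable and bounded and
`E[g|m] = h`. -/
lemma tower [IsProbabilityMeasure μ] {m : MeasurableSpace Ω} (hm : m ≤ mΩ)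
    {f g h : Ω → ℝ} (hf : StronglyMeasurable[m] f) (hfb : ∃ C, ∀ x, |f x| ≤ C)
    (hg : Integrable g μ) (hcond : μ[g|m] =ᵐ[μ] h) :
    ∫ ω, f ω * g ω ∂μ = ∫ ω, f ω * h ω ∂μ := by
  have hfm : @AEStronglyMeasurable Ω ℝ _ mΩ mΩ f μ := (hf.mono hm).aestronglyMeasurable
  have hfg : Integrable (f * g) μ := by
    obtain ⟨C, hC⟩ := hfb
    exact hg.bdd_mul (c := C) hfm (Filter.Eventually.of_forall fun x => by simpa using hC x)
  have h1 : μ[f * g|m] =ᵐ[μ] f * μ[g|m] := condExp_mul_of_stronglyMeasurable_left hf hfg hg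
  have h2 : μ[f * g|m] =ᵐ[μ] fun ω => f ω * h ω :=
    h1.trans ((Filter.EventuallyEq.refl _ f).mul hcond)
  calc ∫ ω, f ω * g ω ∂μ = ∫ ω, (μ[f * g|m]) ω ∂μ := (integral_condExp hm).symm
    _ = ∫ ω, f ω * h ω ∂μ := integral_congr_ae h2

end Aux

/-- Factorization `E[f(V)·g(B)] = E[f(V)]·E[g(B)]` from independence of `B` and `V`. -/
lemma indep_factor {Ω 𝒱 : Type*} [MeasurableSpace Ω] [MeasurableSpace 𝒱]
    {μ : Measure Ω} [IsProbabilityMeasure μ] {V : Ω → 𝒱} {B : Ω → ℝ}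
    (hindep : IndepFun B V μ) {f : 𝒱 → ℝ} {g : ℝ → ℝ}
    (hf : Measurable f) (hg : Measurable g)
    (hint1 : Integrable (fun ω => g (B ω)) μ) (hint2 : Integrable (fun ω => f (V ω)) μ) :
    ∫ ω, f (V ω) * g (B ω) ∂μ = (∫ ω, f (V ω) ∂μ) * (∫ ω, g (B ω) ∂μ) := by
  have h := (hindep.comp hg hf).integral_mul_eq_mul_integral hint1.aestronglyMeasurable hint2.aestronglyMeasurable
  have e1 : ∫ ω, f (V ω) * g (B ω) ∂μ = ∫ ω, (g ∘ B * f ∘ V) ω ∂μ := by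
    apply integral_congr_ae; filter_upwards with ω; simp [Function.comp]; ring
  rw [e1]
  rw [show ∫ ω, (g ∘ B * f ∘ V) ω ∂μ = (∫ ω, (g ∘ B) ω ∂μ) * ∫ ω, (f ∘ V) ω ∂μ from h]
  exact mul_comm _ _

/-- Lemma 5 (second identification equation):
`E[(B − E[B])·Y] = E[A·(B − E[B])]·E[ϑ_a(V)] + E[B·(B − E[B])]·E[ϑ_z(V)]
  + E[A·B·(B − E[B])]·E[ϑ_az(V)]`. -/
theorem lemma5_second_identification_equation
    {Ω 𝒱 : Type*} [MeasurableSpace Ω] [MeasurableSpace 𝒱]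
    (μ : Measure Ω) [IsProbabilityMeasure μ]
    (V : Ω → 𝒱) (A B : Ω → ℝ)
    (hV : Measurable V) (hA : Measurable A) (hB : Measurable B)
    (hA01 : ∀ ω, A ω = 0 ∨ A ω = 1) (hB01 : ∀ ω, B ω = 0 ∨ B ω = 1)
    (αz αu : 𝒱 → ℝ) (hαzm : Measurable αz) (hαum : Measurable αu)
    (hαzb : ∃ C, ∀ x, |αz x| ≤ C) (hαub : ∃ C, ∀ x, |αu x| ≤ C)
    (htreat : μ[A | MeasurableSpace.comap (fun ω => (B ω, V ω)) inferInstance]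
        =ᵐ[μ] fun ω => αz (V ω) * B ω + αu (V ω))
    (hindep : IndepFun B V μ)
    (Y : Ω → ℝ) (hY : Integrable Y μ)
    (ϑa ϑz ϑaz ϑu : 𝒱 → ℝ)
    (hϑam : Measurable ϑa) (hϑzm : Measurable ϑz)
    (hϑazm : Measurable ϑaz) (hϑum : Measurable ϑu)
    (hϑab : ∃ C, ∀ x, |ϑa x| ≤ C) (hϑzb : ∃ C, ∀ x, |ϑz x| ≤ C)
    (hϑazb : ∃ C, ∀ x, |ϑaz x| ≤ C) (hϑub : ∃ C, ∀ x, |ϑu x| ≤ C)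
    (houtcome : μ[Y | MeasurableSpace.comap (fun ω => (V ω, A ω, B ω)) inferInstance]
        =ᵐ[μ] fun ω => ϑa (V ω) * A ω + ϑz (V ω) * B ω + ϑaz (V ω) * A ω * B ω + ϑu (V ω))
    (horth1 : covE μ (fun x => ϑa (V x)) (fun x => αz (V x)) = 0)
    (horth2 : covE μ (fun x => ϑa (V x)) (fun x => αu (V x)) = 0)
    (horth3 : covE μ (fun x => ϑz (V x)) (fun x => αz (V x)) = 0)
    (horth4 : covE μ (fun x => ϑz (V x)) (fun x => αu (V x)) = 0)
    (horth5 : covE μ (fun x => ϑaz (V x)) (fun x => αz (V x)) = 0)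
    (horth6 : covE μ (fun x => ϑaz (V x)) (fun x => αu (V x)) = 0)
    (horth7 : covE μ (fun x => αz (V x)) (fun x => ϑu (V x)) = 0)
    :
    (∫ ω, (B ω - ∫ x, B x ∂μ) * Y ω ∂μ)
      = (∫ ω, A ω * (B ω - ∫ x, B x ∂μ) ∂μ) * (∫ ω, ϑa (V ω) ∂μ)
        + (∫ ω, B ω * (B ω - ∫ x, B x ∂μ) ∂μ) * (∫ ω, ϑz (V ω) ∂μ)
        + (∫ ω, A ω * B ω * (B ω - ∫ x, B x ∂μ) ∂μ) * (∫ ω, ϑaz (V ω) ∂μ) := by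
  set b : ℝ := ∫ x, B x ∂μ with hb
  -- boundedness facts
  have hAb : ∃ C, ∀ ω, |A ω| ≤ C := ⟨1, fun ω => by rcases hA01 ω with h | h <;> simp [h]⟩
  have hBb : ∃ C, ∀ ω, |B ω| ≤ C := ⟨1, fun ω => by rcases hB01 ω with h | h <;> simp [h]⟩
  have hDb : ∃ C, ∀ ω, |B ω - b| ≤ C := bnd_sub hBb ⟨|b|, fun _ => le_refl _⟩
  have bndB : ∀ g : ℝ → ℝ, ∃ C, ∀ ω, |g (B ω)| ≤ C := by
    intro g
    refine ⟨|g 0| + |g 1|, fun ω => ?_⟩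
    rcases hB01 ω with h | h <;> rw [h]
    · exact le_add_of_nonneg_right (abs_nonneg _)
    · exact le_add_of_nonneg_left (abs_nonneg _)
  have cmpB : ∀ {f : 𝒱 → ℝ}, (∃ C, ∀ x, |f x| ≤ C) → ∃ C, ∀ ω, |f (V ω)| ≤ C :=
    fun h => ⟨h.choose, fun ω => h.choose_spec _⟩
  -- comap σ-algebras
  have hm1 : MeasurableSpace.comap (fun ω => (V ω, A ω, B ω)) inferInstance
      ≤ (inferInstance : MeasurableSpace Ω) :=
    Measurable.comap_le (hV.prodMk (hA.prodMk hB))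
  have hm2 : MeasurableSpace.comap (fun ω => (B ω, V ω)) inferInstance
      ≤ (inferInstance : MeasurableSpace Ω) :=
    Measurable.comap_le (hB.prodMk hV)
  have hT1 : Measurable[MeasurableSpace.comap (fun ω => (V ω, A ω, B ω)) inferInstance]
      (fun ω => (V ω, A ω, B ω)) := Measurable.of_comap_le le_rfl
  have hT2 : Measurable[MeasurableSpace.comap (fun ω => (B ω, V ω)) inferInstance]
      (fun ω => (B ω, V ω)) := Measurable.of_comap_le le_rfl
  have hDm1 : StronglyMeasurable[MeasurableSpace.comap (fun ω => (V ω, A ω, B ω)) inferInstance]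
      (fun ω => B ω - b) :=
    (((measurable_snd.comp measurable_snd).sub measurable_const).comp hT1).stronglyMeasurable
  have intOf : ∀ (f : Ω → ℝ), Measurable f → (∃ C, ∀ x, |f x| ≤ C) → Integrable f μ :=
    fun f hf hfb => bddInt hf hfb
  have intA : Integrable A μ := intOf A hA hAb
  have intB : Integrable B μ := intOf B hB hBb
  have intD0 : ∫ ω, (B ω - b) ∂μ = 0 := by
    rw [integral_sub intB (integrable_const b), integral_const]
    simp [hb]
  -- step 1: tower at m1
  have step1 : ∫ ω, (B ω - b) * Y ω ∂μ
      = ∫ ω, (B ω - b) * (ϑa (V ω) * A ω + ϑz (V ω) * B ω + ϑaz (V ω) * A ω * B ω + ϑu (V ω)) ∂μ :=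
    tower hm1 hDm1 hDb hY houtcome
  -- covariance rewriting
  have cov : ∀ (f g : 𝒱 → ℝ),
      covE μ (fun x => f (V x)) (fun x => g (V x)) = 0 →
      ∫ ω, f (V ω) * g (V ω) ∂μ = (∫ ω, f (V ω) ∂μ) * (∫ ω, g (V ω) ∂μ) := by
    intro f g h
    simp only [covE] at h
    linarith
  -- independence factorization
  have ind : ∀ (f : 𝒱 → ℝ), Measurable f → (∃ C, ∀ x, |f x| ≤ C) →
      ∀ (g : ℝ → ℝ), Measurable g →
      ∫ ω, f (V ω) * g (B ω) ∂μ = (∫ ω, f (V ω) ∂μ) * (∫ ω, g (B ω) ∂μ) := by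
    intro f hf hfb g hg
    exact indep_factor hindep hf hg (intOf _ (hg.comp hB) (bndB g)) (intOf _ (hf.comp hV) (cmpB hfb))
  -- treatment tower at m2
  have towerA : ∀ (φ : ℝ × 𝒱 → ℝ), Measurable φ → (∃ C, ∀ ω, |φ (B ω, V ω)| ≤ C) →
      ∫ ω, φ (B ω, V ω) * A ω ∂μ
        = ∫ ω, φ (B ω, V ω) * (αz (V ω) * B ω + αu (V ω)) ∂μ := by
    intro φ hφ hφb
    exact tower hm2 ((hφ.comp hT2).stronglyMeasurable) hφb intA htreat
  -- key identity: E[f(V)·g(B)·A] = E[f·αz(V)]·E[B·g(B)] + E[f·αu(V)]·E[g(B)]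
  have key : ∀ (f : 𝒱 → ℝ), Measurable f → (∃ C, ∀ x, |f x| ≤ C) →
      ∀ (g : ℝ → ℝ), Measurable g →
      ∫ ω, f (V ω) * g (B ω) * A ω ∂μ
        = (∫ ω, f (V ω) * αz (V ω) ∂μ) * (∫ ω, B ω * g (B ω) ∂μ)
          + (∫ ω, f (V ω) * αu (V ω) ∂μ) * (∫ ω, g (B ω) ∂μ) := by
    intro f hf hfb g hg
    have h1 : ∫ ω, f (V ω) * g (B ω) * A ω ∂μ
        = ∫ ω, f (V ω) * g (B ω) * (αz (V ω) * B ω + αu (V ω)) ∂μ :=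
      towerA (fun p => f p.2 * g p.1) ((hf.comp measurable_snd).mul (hg.comp measurable_fst))
        (bnd_mul (cmpB hfb) (bndB g))
    have h2 : ∫ ω, f (V ω) * g (B ω) * (αz (V ω) * B ω + αu (V ω)) ∂μ
        = ∫ ω, (f (V ω) * αz (V ω) * (B ω * g (B ω)) + f (V ω) * αu (V ω) * g (B ω)) ∂μ := by
      apply integral_congr_ae; filter_upwards with ω; ring
    have i1 : Integrable (fun ω => f (V ω) * αz (V ω) * (B ω * g (B ω))) μ :=
      intOf _ (((hf.comp hV).mul (hαzm.comp hV)).mul (hB.mul (hg.comp hB)))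
        (bnd_mul (bnd_mul (cmpB hfb) (cmpB hαzb)) (bnd_mul hBb (bndB g)))
    have i2 : Integrable (fun ω => f (V ω) * αu (V ω) * g (B ω)) μ :=
      intOf _ (((hf.comp hV).mul (hαum.comp hV)).mul (hg.comp hB))
        (bnd_mul (bnd_mul (cmpB hfb) (cmpB hαub)) (bndB g))
    have h3 : ∫ ω, f (V ω) * αz (V ω) * (B ω * g (B ω)) ∂μ
        = (∫ ω, f (V ω) * αz (V ω) ∂μ) * (∫ ω, B ω * g (B ω) ∂μ) :=
      ind (fun v => f v * αz v) (hf.mul hαzm) (bnd_mul hfb hαzb)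
        (fun t => t * g t) (measurable_id.mul hg)
    have h4 : ∫ ω, f (V ω) * αu (V ω) * g (B ω) ∂μ
        = (∫ ω, f (V ω) * αu (V ω) ∂μ) * (∫ ω, g (B ω) ∂μ) :=
      ind (fun v => f v * αu v) (hf.mul hαum) (bnd_mul hfb hαub) g hg
    rw [h1, h2, integral_add i1 i2, h3, h4]
  -- notation for key scalars
  set c : ℝ := ∫ ω, B ω * (B ω - b) ∂μ with hc
  have hBg1 : ∫ ω, B ω * (B ω * (B ω - b)) ∂μ = c := by
    rw [hc]; apply integral_congr_ae; filter_upwards with ω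
    rcases hB01 ω with h | h <;> rw [h] <;> ring
  have hg1c : ∫ ω, B ω * (B ω - b) ∂μ = c := rfl
  -- the four terms of step1's RHS
  have T1 : ∫ ω, ϑa (V ω) * (B ω - b) * A ω ∂μ
      = (∫ ω, ϑa (V ω) ∂μ) * (∫ ω, αz (V ω) ∂μ) * c := by
    have := key ϑa hϑam hϑab (fun t => t - b) (measurable_id.sub measurable_const)
    rw [this, cov _ _ horth1, cov _ _ horth2, intD0, hg1c]
    ring
  have T2 : ∫ ω, ϑz (V ω) * (B ω * (B ω - b)) ∂μ = (∫ ω, ϑz (V ω) ∂μ) * c :=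
    ind ϑz hϑzm hϑzb (fun t => t * (t - b)) (measurable_id.mul (measurable_id.sub measurable_const))
  have T3 : ∫ ω, ϑaz (V ω) * (B ω * (B ω - b)) * A ω ∂μ
      = (∫ ω, ϑaz (V ω) ∂μ) * ((∫ ω, αz (V ω) ∂μ) + (∫ ω, αu (V ω) ∂μ)) * c := by
    have := key ϑaz hϑazm hϑazb (fun t => t * (t - b))
      (measurable_id.mul (measurable_id.sub measurable_const))
    rw [this, cov _ _ horth5, cov _ _ horth6, hBg1, hg1c]
    ring
  have T4 : ∫ ω, ϑu (V ω) * (B ω - b) ∂μ = 0 := by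
    have := ind ϑu hϑum hϑub (fun t => t - b) (measurable_id.sub measurable_const)
    rw [this, intD0, mul_zero]
  -- expansion of step1 RHS
  have i1 : Integrable (fun ω => ϑa (V ω) * (B ω - b) * A ω) μ :=
    intOf _ (((hϑam.comp hV).mul (hB.sub measurable_const)).mul hA)
      (bnd_mul (bnd_mul (cmpB hϑab) hDb) hAb)
  have i2 : Integrable (fun ω => ϑz (V ω) * (B ω * (B ω - b))) μ :=
    intOf _ ((hϑzm.comp hV).mul (hB.mul (hB.sub measurable_const)))
      (bnd_mul (cmpB hϑzb) (bnd_mul hBb hDb))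
  have i3 : Integrable (fun ω => ϑaz (V ω) * (B ω * (B ω - b)) * A ω) μ :=
    intOf _ (((hϑazm.comp hV).mul (hB.mul (hB.sub measurable_const))).mul hA)
      (bnd_mul (bnd_mul (cmpB hϑazb) (bnd_mul hBb hDb)) hAb)
  have i4 : Integrable (fun ω => ϑu (V ω) * (B ω - b)) μ :=
    intOf _ ((hϑum.comp hV).mul (hB.sub measurable_const)) (bnd_mul (cmpB hϑub) hDb)
  have e2 : ∫ ω, (B ω - b) * (ϑa (V ω) * A ω + ϑz (V ω) * B ω + ϑaz (V ω) * A ω * B ω + ϑu (V ω)) ∂μ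
      = (∫ ω, ϑa (V ω) * (B ω - b) * A ω ∂μ)
        + (∫ ω, ϑz (V ω) * (B ω * (B ω - b)) ∂μ)
        + (∫ ω, ϑaz (V ω) * (B ω * (B ω - b)) * A ω ∂μ)
        + (∫ ω, ϑu (V ω) * (B ω - b) ∂μ) := by
    have hpt : (fun ω => (B ω - b) * (ϑa (V ω) * A ω + ϑz (V ω) * B ω + ϑaz (V ω) * A ω * B ω + ϑu (V ω)))
        =ᵐ[μ] fun ω => ϑa (V ω) * (B ω - b) * A ω + ϑz (V ω) * (B ω * (B ω - b))
          + ϑaz (V ω) * (B ω * (B ω - b)) * A ω + ϑu (V ω) * (B ω - b) := by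
      filter_upwards with ω; ring
    have s4 : ∫ ω, (ϑa (V ω) * (B ω - b) * A ω + ϑz (V ω) * (B ω * (B ω - b))
          + ϑaz (V ω) * (B ω * (B ω - b)) * A ω + ϑu (V ω) * (B ω - b)) ∂μ
        = (∫ ω, (ϑa (V ω) * (B ω - b) * A ω + ϑz (V ω) * (B ω * (B ω - b))
            + ϑaz (V ω) * (B ω * (B ω - b)) * A ω) ∂μ) + ∫ ω, ϑu (V ω) * (B ω - b) ∂μ :=
      integral_add ((i1.add i2).add i3) i4
    have s3 : ∫ ω, (ϑa (V ω) * (B ω - b) * A ω + ϑz (V ω) * (B ω * (B ω - b))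
          + ϑaz (V ω) * (B ω * (B ω - b)) * A ω) ∂μ
        = (∫ ω, (ϑa (V ω) * (B ω - b) * A ω + ϑz (V ω) * (B ω * (B ω - b))) ∂μ)
          + ∫ ω, ϑaz (V ω) * (B ω * (B ω - b)) * A ω ∂μ :=
      integral_add (i1.add i2) i3
    have s2 : ∫ ω, (ϑa (V ω) * (B ω - b) * A ω + ϑz (V ω) * (B ω * (B ω - b))) ∂μ
        = (∫ ω, ϑa (V ω) * (B ω - b) * A ω ∂μ) + ∫ ω, ϑz (V ω) * (B ω * (B ω - b)) ∂μ :=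
      integral_add i1 i2
    rw [integral_congr_ae hpt, s4, s3, s2]
  -- the three coefficients on the RHS of the goal
  have R1 : ∫ ω, A ω * (B ω - b) ∂μ = (∫ ω, αz (V ω) ∂μ) * c := by
    have h0 : ∫ ω, A ω * (B ω - b) ∂μ = ∫ ω, (fun _ : 𝒱 => (1:ℝ)) (V ω) * (B ω - b) * A ω ∂μ := by
      apply integral_congr_ae; filter_upwards with ω; simp; ring
    have := key (fun _ => 1) measurable_const ⟨1, fun _ => by norm_num⟩
      (fun t => t - b) (measurable_id.sub measurable_const)
    rw [h0, this, intD0, hg1c]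
    have hone : ∀ (u : 𝒱 → ℝ), ∫ ω, (fun _ : 𝒱 => (1:ℝ)) (V ω) * u (V ω) ∂μ = ∫ ω, u (V ω) ∂μ := by
      intro u; apply integral_congr_ae; filter_upwards with ω; simp
    rw [hone αz]
    ring
  have R3 : ∫ ω, A ω * B ω * (B ω - b) ∂μ
      = ((∫ ω, αz (V ω) ∂μ) + (∫ ω, αu (V ω) ∂μ)) * c := by
    have h0 : ∫ ω, A ω * B ω * (B ω - b) ∂μ
        = ∫ ω, (fun _ : 𝒱 => (1:ℝ)) (V ω) * (B ω * (B ω - b)) * A ω ∂μ := by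
      apply integral_congr_ae; filter_upwards with ω; simp; ring
    have := key (fun _ => 1) measurable_const ⟨1, fun _ => by norm_num⟩
      (fun t => t * (t - b)) (measurable_id.mul (measurable_id.sub measurable_const))
    rw [h0, this, hBg1, hg1c]
    have hone : ∀ (u : 𝒱 → ℝ), ∫ ω, (fun _ : 𝒱 => (1:ℝ)) (V ω) * u (V ω) ∂μ = ∫ ω, u (V ω) ∂μ := by
      intro u; apply integral_congr_ae; filter_upwards with ω; simp
    rw [hone αz, hone αu]
    ring
  rw [step1, e2, T1, T2, T3, T4, R1, R3]
  ring
end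

section
/- Marginal main-effect step (used in the proof of Lemma 5): under the treatment model, IV independence, and the orthogonality conditions Cov(ϑ_a(V), α_z(V)) = 0 and Cov(ϑ_a(V), α_u(V)) = 0, it holds that E[(B − E[B])·A·ϑ_a(V)] = E[(B − E[B])·A]·E[ϑ_a(V)]. -/
open MeasureTheory ProbabilityTheory

private lemma intbd {Ω : Type*} [MeasurableSpace Ω] (μ : Measure Ω) [IsProbabilityMeasure μ]
    {f : Ω → ℝ} (hf : Measurable f) (C : ℝ) (h : ∀ ω, |f ω| ≤ C) : Integrable f μ :=
  (integrable_const C).mono' hf.aestronglyMeasurable (ae_of_all _ fun ω => by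
    simpa [Real.norm_eq_abs] using h ω)

private lemma absmul {a b a' b' : ℝ} (ha : |a| ≤ a') (hb : |b| ≤ b') : |a * b| ≤ a' * b' := by
  rw [abs_mul]
  exact mul_le_mul ha hb (abs_nonneg _) ((abs_nonneg a).trans ha)

/-- Marginal main-effect step (used in the proof of Lemma 5):
`E[(B − E[B])·A·ϑ_a(V)] = E[(B − E[B])·A]·E[ϑ_a(V)]`. -/
theorem marginal_main_effect_step
    {Ω 𝒱 : Type*} [MeasurableSpace Ω] [MeasurableSpace 𝒱]
    (μ : Measure Ω) [IsProbabilityMeasure μ]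
    (V : Ω → 𝒱) (A B : Ω → ℝ)
    (hV : Measurable V) (hA : Measurable A) (hB : Measurable B)
    (hA01 : ∀ ω, A ω = 0 ∨ A ω = 1) (hB01 : ∀ ω, B ω = 0 ∨ B ω = 1)
    (αz αu : 𝒱 → ℝ) (hαzm : Measurable αz) (hαum : Measurable αu)
    (hαzb : ∃ C, ∀ x, |αz x| ≤ C) (hαub : ∃ C, ∀ x, |αu x| ≤ C)
    (htreat : μ[A | MeasurableSpace.comap (fun ω => (B ω, V ω)) inferInstance]
        =ᵐ[μ] fun ω => αz (V ω) * B ω + αu (V ω))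
    (hindep : IndepFun B V μ)
    (ϑa : 𝒱 → ℝ) (hϑam : Measurable ϑa) (hϑab : ∃ C, ∀ x, |ϑa x| ≤ C)
    (horth1 : covE μ (fun x => ϑa (V x)) (fun x => αz (V x)) = 0)
    (horth2 : covE μ (fun x => ϑa (V x)) (fun x => αu (V x)) = 0) :
    (∫ ω, (B ω - ∫ x, B x ∂μ) * A ω * ϑa (V ω) ∂μ)
      = (∫ ω, (B ω - ∫ x, B x ∂μ) * A ω ∂μ) * (∫ ω, ϑa (V ω) ∂μ) := by
  obtain ⟨Cz, hCz⟩ := hαzb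
  obtain ⟨Cu, hCu⟩ := hαub
  obtain ⟨Ct, hCt⟩ := hϑab
  set b : ℝ := ∫ x, B x ∂μ with hb
  have hm : MeasurableSpace.comap (fun ω => (B ω, V ω)) inferInstance
      ≤ ‹MeasurableSpace Ω› := (hB.prodMk hV).comap_le
  have hBbd : ∀ ω, |B ω| ≤ 1 := fun ω => by rcases hB01 ω with h | h <;> simp [h]
  have hAbd : ∀ ω, |A ω| ≤ 1 := fun ω => by rcases hA01 ω with h | h <;> simp [h]
  have hBB : ∀ ω, B ω * B ω = B ω := fun ω => by rcases hB01 ω with h | h <;> simp [h]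
  have hBsub : ∀ ω, |B ω - b| ≤ 1 + |b| := fun ω => by
    have h1 := abs_le.mp (hBbd ω)
    have h2 := le_abs_self b
    have h3 := neg_abs_le b
    exact abs_le.mpr ⟨by linarith, by linarith⟩
  have hAint : Integrable A μ := intbd μ hA 1 hAbd
  have hmul : ∀ (h : 𝒱 → ℝ), Measurable h →
      (∫ ω, B ω * h (V ω) ∂μ) = b * ∫ ω, h (V ω) ∂μ := fun h hh =>
    (hindep.comp measurable_id hh).integral_fun_mul_eq_mul_integral hB.aestronglyMeasurable
      ((hh.comp hV)).aestronglyMeasurable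
  -- key computation for any bounded measurable k
  have key : ∀ (k : 𝒱 → ℝ), Measurable k → ∀ C : ℝ, (∀ x, |k x| ≤ C) →
      (∫ ω, (B ω - b) * A ω * k (V ω) ∂μ)
        = b * (1 - b) * ∫ ω, αz (V ω) * k (V ω) ∂μ := by
    intro k hk C hC
    have hC' : ∀ x, |k x| ≤ |C| := fun x => (hC x).trans (le_abs_self C)
    set g : Ω → ℝ := fun ω => (B ω - b) * k (V ω) with hg
    have hgmeas : Measurable g := (hB.sub_const b).mul (hk.comp hV)
    have hgbd : ∀ ω, |g ω| ≤ (1 + |b|) * |C| := fun ω => absmul (hBsub ω) (hC' _)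
    have hTm : Measurable[MeasurableSpace.comap (fun ω => (B ω, V ω)) inferInstance]
        (fun ω => (B ω, V ω)) := Measurable.of_comap_le le_rfl
    have hgm : StronglyMeasurable[MeasurableSpace.comap (fun ω => (B ω, V ω)) inferInstance] g :=
      (((measurable_fst.sub_const b).mul (hk.comp measurable_snd)).comp hTm).stronglyMeasurable
    have hgA : Integrable (g * A) μ :=
      intbd μ (hgmeas.mul hA) ((1 + |b|) * |C| * 1) (fun ω => by
        simpa using absmul (hgbd ω) (hAbd ω))
    have i1 : Integrable (fun ω => B ω * (αz (V ω) * k (V ω))) μ :=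
      intbd μ (hB.mul (((hαzm.comp hV)).mul (hk.comp hV))) (1 * (|Cz| * |C|))
        (fun ω => absmul (hBbd ω) (absmul ((hCz _).trans (le_abs_self _)) (hC' _)))
    have i2 : Integrable (fun ω => B ω * (αu (V ω) * k (V ω))) μ :=
      intbd μ (hB.mul (((hαum.comp hV)).mul (hk.comp hV))) (1 * (|Cu| * |C|))
        (fun ω => absmul (hBbd ω) (absmul ((hCu _).trans (le_abs_self _)) (hC' _)))
    have i3 : Integrable (fun ω => αu (V ω) * k (V ω)) μ :=
      intbd μ (((hαum.comp hV)).mul (hk.comp hV)) (|Cu| * |C|)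
        (fun ω => absmul ((hCu _).trans (le_abs_self _)) (hC' _))
    have e1 : (∫ ω, (B ω - b) * A ω * k (V ω) ∂μ) = ∫ ω, (g * A) ω ∂μ :=
      integral_congr_ae (ae_of_all _ fun ω => by simp only [Pi.mul_apply, hg]; ring)
    have e2 : (∫ ω, (g * A) ω ∂μ) = ∫ ω, g ω * (αz (V ω) * B ω + αu (V ω)) ∂μ := by
      have e2' := integral_condExp (μ := μ) (f := g * A) hm
      rw [← e2']
      refine integral_congr_ae ?_
      filter_upwards [condExp_mul_of_stronglyMeasurable_left hgm hgA hAint, htreat] with ω h1 h2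
      rw [h1, Pi.mul_apply, h2]
    have e3 : (∫ ω, g ω * (αz (V ω) * B ω + αu (V ω)) ∂μ)
        = ∫ ω, ((1 - b) * (B ω * (αz (V ω) * k (V ω)))
            + (B ω * (αu (V ω) * k (V ω)) - b * (αu (V ω) * k (V ω)))) ∂μ :=
      integral_congr_ae (ae_of_all _ fun ω => by
        simp only [hg]
        linear_combination (αz (V ω) * k (V ω)) * hBB ω)
    have hz : (∫ ω, B ω * (αz (V ω) * k (V ω)) ∂μ)
        = b * ∫ ω, αz (V ω) * k (V ω) ∂μ := hmul (fun x => αz x * k x) (hαzm.mul hk)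
    have hu : (∫ ω, B ω * (αu (V ω) * k (V ω)) ∂μ)
        = b * ∫ ω, αu (V ω) * k (V ω) ∂μ := hmul (fun x => αu x * k x) (hαum.mul hk)
    have iL : Integrable (fun ω => (1 - b) * (B ω * (αz (V ω) * k (V ω)))) μ :=
      i1.const_mul _
    have iR : Integrable
        (fun ω => B ω * (αu (V ω) * k (V ω)) - b * (αu (V ω) * k (V ω))) μ :=
      i2.sub (i3.const_mul b)
    rw [e1, e2, e3, integral_add iL iR, integral_const_mul _ _,
      integral_sub i2 (i3.const_mul b), integral_const_mul _ _, hz, hu]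
    ring
  have h1 := key ϑa hϑam Ct hCt
  have h2 : (∫ ω, (B ω - b) * A ω ∂μ) = b * (1 - b) * ∫ ω, αz (V ω) ∂μ := by
    have := key (fun _ => 1) measurable_const 1 (by simp)
    simpa using this
  have hcomm : (∫ ω, αz (V ω) * ϑa (V ω) ∂μ) = ∫ ω, ϑa (V ω) * αz (V ω) ∂μ :=
    integral_congr_ae (ae_of_all _ fun ω => mul_comm _ _)
  have horth : (∫ ω, ϑa (V ω) * αz (V ω) ∂μ)
      = (∫ ω, ϑa (V ω) ∂μ) * ∫ ω, αz (V ω) ∂μ := by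
    have h := horth1
    unfold covE at h
    linarith
  rw [h1, h2, hcomm, horth]
  ring
end
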